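/- arXiv:1109.6453 — 6 statements merged into one kernel-verified Lean document; each statement's English description precedes it below -/
import Mathlib

section
/- Let (X_t)_{t∈ℤ⁺} be adapted to (F_t) with increments Δ_t = X_{t+1} − X_t. Suppose there exist α > 0, c > 0 and x₀ < ∞ such that P[Δ_t⁺ > x | F_t] ≥ c x^{−α} almost surely for all x ≥ x₀ and all t. Then for any ε > 0, almost surely, max_{0 ≤ s ≤ t} Δ_s⁺ ≥ t^{1/α} (log t)^{−(1/α)−ε} for all but finitely many t. -/
open MeasureTheory Filter

/-- Product tail bound: if the conditional probability of a jump exceeding `x`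
is at least `δ` at every time, then the probability that no jump in `[0, n)`
exceeds `x` is at most `(1 - δ)^n`. -/
lemma prod_bound
    {Ω : Type*} {m0 : MeasurableSpace Ω} {μ : Measure Ω} [IsProbabilityMeasure μ]
    (F : Filtration ℕ m0) (X : ℕ → Ω → ℝ) (hadapted : Adapted F X)
    (δ x : ℝ) (hδ0 : 0 ≤ δ) (hδ1 : δ ≤ 1)
    (htail : ∀ t, ∀ᵐ ω ∂μ,
      δ ≤ (μ[Set.indicator {ω' | x < max (X (t + 1) ω' - X t ω') 0}
        (fun _ => (1:ℝ))|F t]) ω) :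
    ∀ n : ℕ, (μ {ω | ∀ s < n, max (X (s + 1) ω - X s ω) 0 ≤ x}).toReal ≤ (1 - δ) ^ n := by
  set D : ℕ → Ω → ℝ := fun s ω => max (X (s + 1) ω - X s ω) 0 with hDdef
  have hDmeas : ∀ s, Measurable[F (s+1)] (D s) := fun s =>
    (((hadapted (s+1)).sub
      ((hadapted s).mono (F.mono (Nat.le_succ s)) le_rfl))).max measurable_const
  have hB : ∀ s, MeasurableSet[F (s+1)] {ω' | x < D s ω'} := fun s =>
    measurableSet_lt measurable_const (hDmeas s)
  have hB0 : ∀ s, MeasurableSet {ω' | x < D s ω'} := fun s => F.le _ _ (hB s)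
  have hA : ∀ n, MeasurableSet[F n] {ω | ∀ s < n, D s ω ≤ x} := by
    intro n
    have heq : {ω | ∀ s < n, D s ω ≤ x} = ⋂ (s : ℕ) (_ : s < n), {ω | D s ω ≤ x} := by
      ext ω; simp
    rw [heq]
    refine MeasurableSet.iInter fun s => MeasurableSet.iInter fun hs => ?_
    have h1 : MeasurableSet[F (s+1)] {ω | D s ω ≤ x} :=
      measurableSet_le (hDmeas s) measurable_const
    exact F.mono hs _ h1
  intro n
  induction n with
  | zero => simp
  | succ n ih =>
    set A := {ω | ∀ s < n, D s ω ≤ x} with hAdef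
    have hsplit : {ω | ∀ s < n + 1, D s ω ≤ x} = A \ {ω' | x < D n ω'} := by
      ext ω
      simp only [Set.mem_setOf_eq, Set.mem_diff, hAdef, not_lt]
      constructor
      · intro h
        exact ⟨fun s hs => h s (hs.trans (Nat.lt_succ_self n)), h n (Nat.lt_succ_self n)⟩
      · rintro ⟨h1, h2⟩ s hs
        rcases Nat.lt_succ_iff_lt_or_eq.1 hs with h | rfl
        · exact h1 s h
        · exact h2
    have hint : Integrable (Set.indicator {ω' | x < D n ω'} fun _ => (1:ℝ)) μ :=
      (integrable_const (1:ℝ)).indicator (hB0 n)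
    have hkey : δ * (μ A).toReal ≤ (μ (A ∩ {ω' | x < D n ω'})).toReal := by
      have h1 : ∫ _ω in A, (δ : ℝ) ∂μ = δ * (μ A).toReal := by
        rw [setIntegral_const, smul_eq_mul, measureReal_def]; ring
      have h2 : ∫ ω in A, (μ[Set.indicator {ω' | x < D n ω'} fun _ => (1:ℝ)|F n]) ω ∂μ
          = (μ (A ∩ {ω' | x < D n ω'})).toReal := by
        rw [setIntegral_condExp (F.le n) hint (hA n),
          setIntegral_indicator (hB0 n), setIntegral_const, smul_eq_mul, mul_one]
        rfl
      calc δ * (μ A).toReal = ∫ _ω in A, (δ:ℝ) ∂μ := h1.symm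
        _ ≤ ∫ ω in A, (μ[Set.indicator {ω' | x < D n ω'} fun _ => (1:ℝ)|F n]) ω ∂μ :=
          setIntegral_mono_ae (integrable_const δ).integrableOn
            integrable_condExp.integrableOn (htail n)
        _ = _ := h2
    have hmeq : (μ (A ∩ {ω' | x < D n ω'})).toReal + (μ (A \ {ω' | x < D n ω'})).toReal
        = (μ A).toReal := by
      rw [← ENNReal.toReal_add (measure_ne_top μ _) (measure_ne_top μ _),
        measure_inter_add_diff A (hB0 n)]
    calc (μ {ω | ∀ s < n + 1, D s ω ≤ x}).toReal
        = (μ (A \ {ω' | x < D n ω'})).toReal := by rw [hsplit]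
      _ = (μ A).toReal - (μ (A ∩ {ω' | x < D n ω'})).toReal := by linarith
      _ ≤ (μ A).toReal - δ * (μ A).toReal := by linarith
      _ = (1 - δ) * (μ A).toReal := by ring
      _ ≤ (1 - δ) * (1 - δ) ^ n := mul_le_mul_of_nonneg_left ih (by linarith)
      _ = (1 - δ) ^ (n + 1) := by ring

/-- Almost-sure eventual lower bound on the running maximum of the positive parts
of the increments: for any `ε > 0`, a.s. for all but finitely many `t`,
`max_{0 ≤ s ≤ t} Δ_s⁺ ≥ t^{1/α} (log t)^{-(1/α)-ε}`. -/
theorem stmt4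
    {Ω : Type*} {m0 : MeasurableSpace Ω} {μ : Measure Ω} [IsProbabilityMeasure μ]
    (F : Filtration ℕ m0) (X : ℕ → Ω → ℝ) (hadapted : Adapted F X)
    (α c x₀ : ℝ) (hα : 0 < α) (hc : 0 < c)
    (htail : ∀ t, ∀ x, x₀ ≤ x → ∀ᵐ ω ∂μ,
      c * x ^ (-α) ≤ (μ[Set.indicator {ω' | x < max (X (t + 1) ω' - X t ω') 0}
        (fun _ => (1:ℝ))|F t]) ω)
    (ε : ℝ) (hε : 0 < ε) :
    ∀ᵐ ω ∂μ, ∀ᶠ t : ℕ in atTop,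
      ∃ s ≤ t, (t:ℝ) ^ (1/α) * (Real.log t) ^ (-(1/α) - ε)
        ≤ max (X (s + 1) ω - X s ω) 0 := by
  have hα' : α ≠ 0 := ne_of_gt hα
  set b : ℕ → ℝ := fun t => (t:ℝ) ^ (1/α) * (Real.log t) ^ (-(1/α) - ε) with hbdef
  -- eventually `log t ≥ 1` and `t ≥ 3`
  have hlog : ∀ᶠ t : ℕ in atTop, 1 ≤ Real.log t ∧ 3 ≤ (t:ℝ) := by
    filter_upwards [eventually_ge_atTop 3] with t ht
    have h3 : (3:ℝ) ≤ (t:ℝ) := by exact_mod_cast ht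
    refine ⟨?_, h3⟩
    rw [Real.le_log_iff_exp_le (by linarith)]
    have := Real.exp_one_lt_d9
    linarith
  -- `b` tends to infinity
  have hbtop : Tendsto b atTop atTop := by
    have hlo := isLittleO_log_rpow_rpow_atTop (1/α + ε)
      (show (0:ℝ) < 1/(2*α) by positivity)
    have hge : ∀ᶠ t : ℕ in atTop, (t:ℝ) ^ (1/(2*α)) ≤ b t := by
      filter_upwards [tendsto_natCast_atTop_atTop.eventually (hlo.def one_pos), hlog]
        with t hbd hl
      obtain ⟨hl1, h3⟩ := hl
      have ht0 : (0:ℝ) < t := by linarith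
      have hl0 : (0:ℝ) < Real.log t := by linarith
      have hbd' : Real.log t ^ (1/α + ε) ≤ (t:ℝ) ^ (1/(2*α)) := by
        rwa [Real.norm_of_nonneg (Real.rpow_nonneg hl0.le _),
          Real.norm_of_nonneg (Real.rpow_nonneg ht0.le _), one_mul] at hbd
      have key : b t = (t:ℝ)^(1/α) / Real.log t ^ (1/α + ε) := by
        show (t:ℝ) ^ (1/α) * Real.log t ^ (-(1/α) - ε) = _
        rw [show -(1/α) - ε = -(1/α + ε) by ring, Real.rpow_neg hl0.le]
        ring
      have h2 : (t:ℝ)^(1/α) / (t:ℝ)^(1/(2*α)) = (t:ℝ)^(1/(2*α)) := by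
        rw [← Real.rpow_sub ht0]
        congr 1
        field_simp
        ring
      rw [key]
      calc (t:ℝ)^(1/(2*α)) = (t:ℝ)^(1/α) / (t:ℝ)^(1/(2*α)) := h2.symm
        _ ≤ (t:ℝ)^(1/α) / Real.log t ^ (1/α+ε) :=
            div_le_div_of_nonneg_left (Real.rpow_nonneg ht0.le _)
              (Real.rpow_pos_of_pos hl0 _) hbd'
    exact tendsto_atTop_mono' atTop hge
      ((tendsto_rpow_atTop (by positivity)).comp tendsto_natCast_atTop_atTop)
  -- the conditional-probability lower bound, rewritten
  have hδeq : ∀ᶠ t : ℕ in atTop,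
      c * (b t) ^ (-α) = c * ((t:ℝ))⁻¹ * Real.log t ^ (1 + α*ε) := by
    filter_upwards [hlog] with t hl
    obtain ⟨hl1, h3⟩ := hl
    have ht0 : (0:ℝ) < t := by linarith
    have hl0 : (0:ℝ) < Real.log t := by linarith
    have : (b t) ^ (-α) = ((t:ℝ))⁻¹ * Real.log t ^ (1 + α*ε) := by
      show ((t:ℝ) ^ (1/α) * Real.log t ^ (-(1/α) - ε)) ^ (-α) = _
      rw [Real.mul_rpow (Real.rpow_nonneg ht0.le _) (Real.rpow_nonneg hl0.le _),
        ← Real.rpow_mul ht0.le, ← Real.rpow_mul hl0.le,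
        show 1/α * (-α) = (-1 : ℝ) by field_simp,
        show (-(1/α) - ε) * (-α) = 1 + α*ε by field_simp; ring,
        Real.rpow_neg_one]
    rw [this]; ring
  -- eventually `δ t ≤ 1`
  have hδ1 : ∀ᶠ t : ℕ in atTop, c * (b t) ^ (-α) ≤ 1 := by
    have hlo := isLittleO_log_rpow_rpow_atTop (1 + α*ε) (one_pos : (0:ℝ) < 1)
    filter_upwards [hδeq, hlog,
      tendsto_natCast_atTop_atTop.eventually (hlo.def (show (0:ℝ) < 1/c by positivity))]
      with t heq hl hbd
    obtain ⟨hl1, h3⟩ := hl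
    have ht0 : (0:ℝ) < t := by linarith
    have hl0 : (0:ℝ) < Real.log t := by linarith
    have hbd' : Real.log t ^ (1 + α*ε) ≤ (1/c) * (t:ℝ) := by
      rwa [Real.norm_of_nonneg (Real.rpow_nonneg hl0.le _), Real.rpow_one,
        Real.norm_of_nonneg ht0.le] at hbd
    rw [heq]
    calc c * (↑t)⁻¹ * Real.log t ^ (1+α*ε) ≤ c * (↑t)⁻¹ * ((1/c) * ↑t) :=
        mul_le_mul_of_nonneg_left hbd' (by positivity)
      _ = 1 := by field_simp
  -- eventually `c (log t)^(αε) ≥ 2`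
  have h2c : ∀ᶠ t : ℕ in atTop, 2 ≤ c * Real.log t ^ (α*ε) := by
    have h := ((tendsto_rpow_atTop (show (0:ℝ) < α*ε by positivity)).comp
      (Real.tendsto_log_atTop.comp tendsto_natCast_atTop_atTop)).eventually_ge_atTop (2/c)
    filter_upwards [h] with t ht
    have h2 : 2/c ≤ Real.log t ^ (α*ε) := ht
    calc (2:ℝ) = c * (2/c) := by field_simp
      _ ≤ c * Real.log t ^ (α*ε) := mul_le_mul_of_nonneg_left h2 hc.le
  obtain ⟨N, hN⟩ := eventually_atTop.1
    (hlog.and ((hbtop.eventually_ge_atTop x₀).and (hδ1.and (h2c.and hδeq))))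
  set S : ℕ → Set Ω := fun t => {ω | ∀ s ≤ t, max (X (s+1) ω - X s ω) 0 < b t} with hSdef
  have hSbound : ∀ t, N ≤ t → μ (S t) ≤ ENNReal.ofReal ((t:ℝ) ^ (-2 : ℝ)) := by
    intro t ht
    obtain ⟨⟨hl1, h3⟩, hx₀, hd1, h2c', heq⟩ := hN t ht
    have ht0 : (0:ℝ) < t := by linarith
    have hl0 : (0:ℝ) < Real.log t := by linarith
    have hb0 : 0 < b t :=
      mul_pos (Real.rpow_pos_of_pos ht0 _) (Real.rpow_pos_of_pos hl0 _)
    have hδ0 : 0 ≤ c * (b t) ^ (-α) := by positivity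
    have hsub : S t ⊆ {ω | ∀ s < t + 1, max (X (s+1) ω - X s ω) 0 ≤ b t} := by
      intro ω hω s hs
      exact (hω s (Nat.lt_succ_iff.1 hs)).le
    have hprod := prod_bound F X hadapted (c * (b t) ^ (-α)) (b t) hδ0 hd1
      (fun n => htail n (b t) hx₀) (t+1)
    have hexp : (1 - c * (b t) ^ (-α)) ^ (t+1) ≤ (t:ℝ) ^ (-2:ℝ) := by
      set δ := c * (b t) ^ (-α) with hδdef
      have h1 : (1 - δ) ^ (t+1) ≤ Real.exp (-δ) ^ (t+1) :=
        pow_le_pow_left₀ (by linarith) (by linarith [Real.add_one_le_exp (-δ)]) _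
      have h2 : Real.exp (-δ) ^ (t+1) = Real.exp (((t:ℝ)+1) * (-δ)) := by
        rw [← Real.exp_nat_mul]
        push_cast
        ring_nf
      have h3 : 2 * Real.log t ≤ (t:ℝ) * δ := by
        have e1 : (t:ℝ) * δ = c * Real.log t ^ (1 + α*ε) := by
          rw [heq]
          field_simp
        rw [e1, Real.rpow_add hl0, Real.rpow_one]
        have e2 : 2 * Real.log t ≤ (c * Real.log t ^ (α*ε)) * Real.log t :=
          mul_le_mul_of_nonneg_right h2c' hl0.le
        calc 2 * Real.log t ≤ (c * Real.log t ^ (α*ε)) * Real.log t := e2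
          _ = c * (Real.log t * Real.log t ^ (α*ε)) := by ring
      have h4 : Real.exp (((t:ℝ)+1) * (-δ)) ≤ Real.exp (-(2*Real.log t)) := by
        apply Real.exp_le_exp.2
        nlinarith
      have h5 : Real.exp (-(2*Real.log t)) = (t:ℝ) ^ (-2:ℝ) := by
        rw [Real.rpow_def_of_pos ht0]
        ring_nf
      calc (1 - δ) ^ (t+1) ≤ Real.exp (-δ) ^ (t+1) := h1
        _ = Real.exp (((t:ℝ)+1) * (-δ)) := h2
        _ ≤ Real.exp (-(2*Real.log t)) := h4
        _ = (t:ℝ) ^ (-2:ℝ) := h5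
    calc μ (S t) ≤ μ {ω | ∀ s < t+1, max (X (s+1) ω - X s ω) 0 ≤ b t} :=
        measure_mono hsub
      _ = ENNReal.ofReal ((μ {ω | ∀ s < t+1, max (X (s+1) ω - X s ω) 0 ≤ b t}).toReal) :=
        (ENNReal.ofReal_toReal (measure_ne_top μ _)).symm
      _ ≤ ENNReal.ofReal ((t:ℝ) ^ (-2:ℝ)) :=
        ENNReal.ofReal_le_ofReal (hprod.trans hexp)
  have hsummable : Summable (fun t : ℕ => ((t + N : ℕ):ℝ) ^ (-2:ℝ)) :=
    (summable_nat_add_iff N).2 (Real.summable_nat_rpow.2 (by norm_num))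
  have hsum : (∑' t, μ (S (t + N))) ≠ ⊤ := by
    have hle : (∑' t, μ (S (t + N)))
        ≤ ENNReal.ofReal (∑' t : ℕ, ((t + N : ℕ):ℝ) ^ (-2:ℝ)) := by
      rw [ENNReal.ofReal_tsum_of_nonneg (fun t => Real.rpow_nonneg (by positivity) _)
        hsummable]
      exact ENNReal.tsum_le_tsum fun t => hSbound (t + N) (Nat.le_add_left N t)
    exact ne_top_of_le_ne_top ENNReal.ofReal_ne_top hle
  filter_upwards [ae_eventually_notMem hsum] with ω hω
  obtain ⟨M, hM⟩ := eventually_atTop.1 hω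
  rw [eventually_atTop]
  refine ⟨M + N, fun t ht => ?_⟩
  have h1 : ω ∉ S t := by
    have h2 := hM (t - N) (by omega)
    rwa [Nat.sub_add_cancel (by omega)] at h2
  simp only [hSdef, Set.mem_setOf_eq, not_forall, not_lt] at h1
  obtain ⟨s, hs, hle⟩ := h1
  exact ⟨s, hs, hle⟩
end

section
/- Let (X_t)_{t∈ℤ⁺} be adapted to (F_t), X_0 = 0, with increments Δ_t = X_{t+1} − X_t. Let h : [0,∞) → [0,∞) be increasing and concave, and suppose there exists C < ∞ with E[h(Δ_t⁺) | F_t] ≤ C a.s. for all t. Then for any ε > 0, almost surely, for all but finitely many t, X_t ≤ Σ_{s=0}^{t−1} Δ_s⁺ ≤ h^{−1}(t (log t)^{1+ε}). -/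
open MeasureTheory Filter
open scoped ENNReal

private lemma aux_concave_subadd {h : ℝ → ℝ} (hconc : ConcaveOn ℝ (Set.Ici 0) h)
    (h0 : 0 ≤ h 0) {a b : ℝ} (ha : 0 ≤ a) (hb : 0 ≤ b) :
    h (a + b) ≤ h a + h b := by
  rcases eq_or_lt_of_le (add_nonneg ha hb) with hab | hab
  · have ha0 : a = 0 := le_antisymm (by linarith) ha
    have hb0 : b = 0 := le_antisymm (by linarith) hb
    subst ha0; subst hb0
    simpa using h0
  · have hne : a + b ≠ 0 := ne_of_gt hab
    have h1 := hconc.2 (Set.self_mem_Ici) (Set.mem_Ici.2 hab.le)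
      (div_nonneg hb (add_nonneg ha hb)) (div_nonneg ha (add_nonneg ha hb))
      (by field_simp <;> ring)
    have h2 := hconc.2 (Set.self_mem_Ici) (Set.mem_Ici.2 hab.le)
      (div_nonneg ha (add_nonneg ha hb)) (div_nonneg hb (add_nonneg ha hb))
      (by field_simp)
    simp only [smul_eq_mul, mul_zero, zero_add] at h1 h2
    rw [div_mul_cancel₀ _ hne] at h1 h2
    have he : a / (a + b) + b / (a + b) = 1 := by field_simp
    have key : h 0 + h (a + b) ≤ h a + h b := by
      calc h 0 + h (a + b)
          = (b / (a + b) * h 0 + a / (a + b) * h (a + b))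
            + (a / (a + b) * h 0 + b / (a + b) * h (a + b)) := by
            have : a / (a + b) = 1 - b / (a + b) := by linarith
            rw [this]; ring
        _ ≤ h a + h b := add_le_add h1 h2
    linarith

private lemma aux_h_sum {h : ℝ → ℝ} (hconc : ConcaveOn ℝ (Set.Ici 0) h)
    (h0 : 0 ≤ h 0) (f : ℕ → ℝ) (hf : ∀ s, 0 ≤ f s) :
    ∀ t : ℕ, 1 ≤ t →
      h (∑ s ∈ Finset.range t, f s) ≤ ∑ s ∈ Finset.range t, h (f s) := by
  intro t ht
  induction t with
  | zero => omega
  | succ n ih =>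
    rcases Nat.eq_or_lt_of_le ht with h1 | h1
    · simp [← h1]
    · have hn : 1 ≤ n := by omega
      rw [Finset.sum_range_succ, Finset.sum_range_succ]
      calc h ((∑ s ∈ Finset.range n, f s) + f n)
          ≤ h (∑ s ∈ Finset.range n, f s) + h (f n) :=
            aux_concave_subadd hconc h0 (Finset.sum_nonneg fun s _ => hf s) (hf n)
        _ ≤ (∑ s ∈ Finset.range n, h (f s)) + h (f n) := by linarith [ih hn]

/-- Almost-sure upper bound via a concave increasing function `h`: if
`E[h(Δ_t⁺)|F_t] ≤ C` a.s., then for any `ε > 0`, a.s. for all but finitely many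
`t`, `X_t ≤ Σ_{s<t} Δ_s⁺` and `h(Σ_{s<t} Δ_s⁺) ≤ t (log t)^{1+ε}` (i.e. the sum
is at most `h⁻¹(t (log t)^{1+ε})`). -/
theorem stmt5
    {Ω : Type*} {m0 : MeasurableSpace Ω} {μ : Measure Ω} [IsProbabilityMeasure μ]
    (F : Filtration ℕ m0) (X : ℕ → Ω → ℝ) (hadapted : Adapted F X)
    (hX0 : ∀ ω, X 0 ω = 0)
    (h : ℝ → ℝ) (hmono : MonotoneOn h (Set.Ici 0))
    (hconc : ConcaveOn ℝ (Set.Ici 0) h) (hhnn : ∀ y, 0 ≤ y → 0 ≤ h y)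
    (C : ℝ)
    (hintegrable : ∀ t, Integrable (fun ω => h (max (X (t + 1) ω - X t ω) 0)) μ)
    (hbound : ∀ t, ∀ᵐ ω ∂μ,
      (μ[fun ω' => h (max (X (t + 1) ω' - X t ω') 0)|F t]) ω ≤ C)
    (ε : ℝ) (hε : 0 < ε) :
    ∀ᵐ ω ∂μ, ∀ᶠ t : ℕ in atTop,
      X t ω ≤ (∑ s ∈ Finset.range t, max (X (s + 1) ω - X s ω) 0) ∧
      h (∑ s ∈ Finset.range t, max (X (s + 1) ω - X s ω) 0)
        ≤ (t:ℝ) * (Real.log t) ^ (1 + ε) := by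
  set Z : ℕ → Ω → ℝ := fun s ω => h (max (X (s + 1) ω - X s ω) 0) with hZ
  have hZnn : ∀ s ω, 0 ≤ Z s ω := fun s ω => hhnn _ (le_max_right _ _)
  have h0 : 0 ≤ h 0 := hhnn 0 le_rfl
  -- expected value bound
  have hZle : ∀ s, ∫ ω, Z s ω ∂μ ≤ C := by
    intro s
    have h1 : ∫ ω, Z s ω ∂μ = ∫ ω, (μ[Z s|F s]) ω ∂μ := (integral_condExp (F.le s)).symm
    have h2 : ∫ ω, (μ[Z s|F s]) ω ∂μ ≤ ∫ _, C ∂μ :=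
      integral_mono_ae integrable_condExp (integrable_const C) (hbound s)
    simpa [h1] using h2
  have hC : 0 ≤ C := le_trans (integral_nonneg (hZnn 0)) (hZle 0)
  -- the dyadic events
  set A : ℕ → Set Ω := fun k =>
    {ω | (2:ℝ)^(k+1) * ((k:ℝ)+1)^(1+ε/2) ≤ ∑ s ∈ Finset.range (2^(k+1)), Z s ω} with hA
  have hAmeas : ∀ k, (μ (A k)).toReal ≤ C / ((k:ℝ)+1)^(1+ε/2) := by
    intro k
    have hP : (0:ℝ) < ((k:ℝ)+1)^(1+ε/2) := Real.rpow_pos_of_pos (by positivity) _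
    have hint : Integrable (fun ω => ∑ s ∈ Finset.range (2^(k+1)), Z s ω) μ :=
      integrable_finset_sum _ (fun s _ => hintegrable s)
    have hmar := mul_meas_ge_le_integral_of_nonneg
      (Eventually.of_forall fun ω => Finset.sum_nonneg fun s _ => hZnn s ω) hint
      ((2:ℝ)^(k+1) * ((k:ℝ)+1)^(1+ε/2))
    have hEint : ∫ ω, ∑ s ∈ Finset.range (2^(k+1)), Z s ω ∂μ ≤ C * 2^(k+1) := by
      rw [integral_finset_sum _ (fun s _ => hintegrable s)]
      calc ∑ s ∈ Finset.range (2^(k+1)), ∫ ω, Z s ω ∂μ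
          ≤ ∑ _s ∈ Finset.range (2^(k+1)), C := Finset.sum_le_sum fun s _ => hZle s
        _ = C * 2^(k+1) := by
            rw [Finset.sum_const, Finset.card_range, nsmul_eq_mul]
            push_cast; ring
    rw [le_div_iff₀ hP]
    have h2p : (0:ℝ) < 2^(k+1) := by positivity
    have hmar' : (2:ℝ)^(k+1) * ((k:ℝ)+1)^(1+ε/2) * (μ (A k)).toReal
        ≤ ∫ ω, ∑ s ∈ Finset.range (2^(k+1)), Z s ω ∂μ := hmar
    nlinarith [hmar', hEint]
  have hAle : ∀ k, μ (A k) ≤ ENNReal.ofReal (C / ((k:ℝ)+1)^(1+ε/2)) := by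
    intro k
    rw [← ENNReal.ofReal_toReal (measure_ne_top μ (A k))]
    exact ENNReal.ofReal_le_ofReal (hAmeas k)
  have hsummable : Summable (fun k : ℕ => C / ((k:ℝ)+1)^(1+ε/2)) := by
    have h1 : Summable (fun n : ℕ => 1 / (n:ℝ)^(1+ε/2)) :=
      Real.summable_one_div_nat_rpow.2 (by linarith)
    have h2 : Summable (fun n : ℕ => 1 / ((n:ℝ)+1)^(1+ε/2)) := by
      have h3 := (summable_nat_add_iff 1).2 h1
      refine h3.congr fun n => ?_
      push_cast
      ring_nf
    have := h2.mul_left C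
    refine this.congr fun n => ?_
    rw [mul_one_div, div_eq_div_iff] <;> positivity
  have htsum : ∑' k, μ (A k) ≠ ∞ := by
    have h1 := ENNReal.tsum_le_tsum hAle
    rw [← ENNReal.ofReal_tsum_of_nonneg
      (fun k => div_nonneg hC (Real.rpow_nonneg (by positivity) _)) hsummable] at h1
    exact ne_top_of_le_ne_top ENNReal.ofReal_ne_top h1
  -- the analytic eventual bound
  have hlog : (0:ℝ) < Real.log 2 := Real.log_pos one_lt_two
  have hev : ∀ᶠ k : ℕ in atTop,
      2 * ((k:ℝ)+1)^(1+ε/2) ≤ ((k:ℝ) * Real.log 2)^(1+ε) := by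
    have htend : Tendsto (fun k : ℕ => ((k:ℝ))^(ε/2)) atTop atTop :=
      (tendsto_rpow_atTop (by linarith : (0:ℝ) < ε/2)).comp tendsto_natCast_atTop_atTop
    filter_upwards [htend.eventually_ge_atTop
        ((2 * 2^(1+ε/2)) / (Real.log 2)^(1+ε)), eventually_ge_atTop 1] with k hk hk1
    have hk0 : (1:ℝ) ≤ (k:ℝ) := by exact_mod_cast hk1
    have h1 : ((k:ℝ)+1)^(1+ε/2) ≤ (2*(k:ℝ))^(1+ε/2) :=
      Real.rpow_le_rpow (by linarith) (by linarith) (by linarith)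
    have h2 : ((2:ℝ)*(k:ℝ))^(1+ε/2) = 2^(1+ε/2) * (k:ℝ)^(1+ε/2) :=
      Real.mul_rpow (by norm_num) (by linarith)
    have h3 : ((k:ℝ) * Real.log 2)^(1+ε) = (k:ℝ)^(1+ε) * (Real.log 2)^(1+ε) :=
      Real.mul_rpow (by linarith) hlog.le
    have h4 : (k:ℝ)^(1+ε) = (k:ℝ)^(1+ε/2) * (k:ℝ)^(ε/2) := by
      rw [← Real.rpow_add (by linarith)]
      ring_nf
    have h5 : (0:ℝ) ≤ (k:ℝ)^(1+ε/2) := Real.rpow_nonneg (by linarith) _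
    have h6 : (0:ℝ) < (Real.log 2)^(1+ε) := Real.rpow_pos_of_pos hlog _
    have hB := mul_le_mul_of_nonneg_right
      (mul_le_mul_of_nonneg_left hk h5) h6.le
    rw [mul_assoc, div_mul_cancel₀ _ h6.ne'] at hB
    have h1' : ((k:ℝ)+1)^(1+ε/2) ≤ 2^(1+ε/2) * (k:ℝ)^(1+ε/2) := h2 ▸ h1
    rw [h3, h4]
    linarith [h1', hB]
  obtain ⟨K', hK'⟩ := eventually_atTop.1 hev
  -- Borel–Cantelli and conclusion
  filter_upwards [ae_finite_setOf_mem htsum] with ω hfin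
  have hnotA : ∀ᶠ k : ℕ in atTop, ω ∉ A k := by
    have := hfin.eventually_cofinite_notMem
    rwa [Nat.cofinite_eq_atTop] at this
  obtain ⟨K, hK⟩ := eventually_atTop.1 hnotA
  rw [eventually_atTop]
  refine ⟨2 ^ (max K K' + 1), fun t ht => ?_⟩
  have ht0 : t ≠ 0 := by
    have : 1 ≤ 2 ^ (max K K' + 1) := Nat.one_le_two_pow
    omega
  set k := Nat.log 2 t with hk
  have hkM : max K K' + 1 ≤ k :=
    (Nat.le_log_iff_pow_le one_lt_two ht0).2 ht
  have hk1 : 1 ≤ k := by omega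
  have hkK : K ≤ k := by omega
  have hkK' : K' ≤ k := by omega
  have h2kt : (2:ℕ)^k ≤ t := Nat.pow_log_le_self 2 ht0
  have ht2k : t < 2^(k+1) := Nat.lt_pow_succ_log_self one_lt_two t
  -- first conjunct
  constructor
  · have h1 : X t ω = ∑ s ∈ Finset.range t, (X (s+1) ω - X s ω) := by
      rw [Finset.sum_range_sub (fun s => X s ω), hX0 ω, sub_zero]
    rw [h1]
    exact Finset.sum_le_sum fun s _ => le_max_left _ _
  · -- second conjunct
    have ht1 : 1 ≤ t := Nat.one_le_iff_ne_zero.2 ht0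
    have hsub : h (∑ s ∈ Finset.range t, max (X (s + 1) ω - X s ω) 0)
        ≤ ∑ s ∈ Finset.range t, Z s ω :=
      aux_h_sum hconc h0 _ (fun s => le_max_right _ _) t ht1
    have hmonoS : ∑ s ∈ Finset.range t, Z s ω ≤ ∑ s ∈ Finset.range (2^(k+1)), Z s ω :=
      Finset.sum_le_sum_of_subset_of_nonneg
        (Finset.range_subset_range.2 ht2k.le) (fun s _ _ => hZnn s ω)
    have hAk := hK k hkK
    rw [hA, Set.mem_setOf_eq, not_le] at hAk
    have hstep : ∑ s ∈ Finset.range t, Z s ω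
        ≤ (2:ℝ)^(k+1) * ((k:ℝ)+1)^(1+ε/2) := le_of_lt (lt_of_le_of_lt hmonoS hAk)
    -- compare with t (log t)^(1+ε)
    have htR : ((2:ℝ)^k) ≤ (t:ℝ) := by exact_mod_cast h2kt
    have hlogt : (k:ℝ) * Real.log 2 ≤ Real.log t := by
      have := Real.log_le_log (by positivity : (0:ℝ) < (2:ℝ)^k) htR
      rwa [Real.log_pow] at this
    have hrp : ((k:ℝ) * Real.log 2)^(1+ε) ≤ (Real.log t)^(1+ε) :=
      Real.rpow_le_rpow (by positivity) hlogt (by linarith)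
    have hfinal : (2:ℝ)^(k+1) * ((k:ℝ)+1)^(1+ε/2) ≤ (t:ℝ) * (Real.log t)^(1+ε) := by
      have hK'k := hK' k hkK'
      have h2p : ((2:ℝ)^(k+1) : ℝ) = (2:ℝ)^k * 2 := by ring
      calc (2:ℝ)^(k+1) * ((k:ℝ)+1)^(1+ε/2)
          = (2:ℝ)^k * (2 * ((k:ℝ)+1)^(1+ε/2)) := by ring
        _ ≤ (t:ℝ) * ((k:ℝ) * Real.log 2)^(1+ε) := by
            apply mul_le_mul htR hK'k (by positivity) (by positivity)
        _ ≤ (t:ℝ) * (Real.log t)^(1+ε) := by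
            apply mul_le_mul_of_nonneg_left hrp (by positivity)
    calc h (∑ s ∈ Finset.range t, max (X (s + 1) ω - X s ω) 0)
        ≤ ∑ s ∈ Finset.range t, Z s ω := hsub
      _ ≤ (2:ℝ)^(k+1) * ((k:ℝ)+1)^(1+ε/2) := hstep
      _ ≤ (t:ℝ) * (Real.log t)^(1+ε) := hfinal
end

section
/- Let (X_t)_{t∈ℤ⁺} be adapted to (F_t) with increments Δ_t = X_{t+1} − X_t. Fix α ∈ (0,1) and β > α, and suppose there exist c > 0, C < ∞, x₀ < ∞ with E[(Δ_t⁻)^β | F_t] ≤ C a.s. for all t, and E[Δ_t⁺ 1{Δ_t⁺ ≤ x} | F_t] ≥ c x^{1−α} a.s. for all x ≥ x₀ and all t. For z ∈ ℝ, δ > 0 define f_{z,δ}(y) = 1 if y ≤ z and f_{z,δ}(y) = (1 + y − z)^{−δ} if y > z. Then for any δ ∈ (0, β − α) there exists A > 0 (independent of z) such that for every z ∈ ℝ and every t, E[f_{z,δ}(X_{t+1}) − f_{z,δ}(X_t) | F_t] ≤ 0 almost surely on the event {X_t > z + A}. -/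
open MeasureTheory Filter

lemma aux_kappa_pos {δ : ℝ} (hδ : 0 < δ) :
    0 < 1 - (2:ℝ) ^ (-(min δ 2⁻¹)) ∧ 1 - (2:ℝ) ^ (-(min δ 2⁻¹)) < 1 := by
  have h0 : 0 < min δ 2⁻¹ := lt_min hδ (by norm_num)
  have h1 : (2:ℝ) ^ (-(min δ 2⁻¹)) < 1 :=
    Real.rpow_lt_one_of_one_lt_of_neg (by norm_num) (by linarith)
  have h2 : (0:ℝ) < (2:ℝ) ^ (-(min δ 2⁻¹)) := Real.rpow_pos_of_pos (by norm_num) _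
  constructor <;> linarith

lemma aux1 {δ g d : ℝ} (hδ : 0 < δ) (hg : 2 ≤ g) (hd0 : 0 ≤ d) (hdg : d ≤ g) :
    (g + d) ^ (-δ) ≤ g ^ (-δ) - (1 - (2:ℝ) ^ (-(min δ 2⁻¹))) * g ^ (-δ - 1) * d := by
  set δ₀ := min δ 2⁻¹ with hδ₀def
  have hδ₀pos : 0 < δ₀ := lt_min hδ (by norm_num)
  have hδ₀lt1 : δ₀ < 1 := lt_of_le_of_lt (min_le_right _ _) (by norm_num)
  have hgpos : (0:ℝ) < g := by linarith
  set r := d / g with hr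
  have hr0 : 0 ≤ r := div_nonneg hd0 hgpos.le
  have hr1 : r ≤ 1 := (div_le_one hgpos).2 hdg
  set s := (2:ℝ) ^ δ₀ - 1 with hs
  have h2pos : (0:ℝ) < 2 ^ δ₀ := Real.rpow_pos_of_pos (by norm_num) _
  have hs0 : 0 ≤ s := by
    have : (1:ℝ) ≤ 2 ^ δ₀ := Real.one_le_rpow (by norm_num) hδ₀pos.le
    simp only [hs]; linarith
  set κ := 1 - (2:ℝ) ^ (-δ₀) with hκ
  have hκ2 : (0:ℝ) < 2 ^ (-δ₀) := Real.rpow_pos_of_pos (by norm_num) _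
  have hκ0 : 0 < κ := (aux_kappa_pos hδ).1
  have hκ1 : κ < 1 := (aux_kappa_pos hδ).2
  have hks : κ * (1 + s) = s := by
    have h1s : 1 + s = (2:ℝ) ^ δ₀ := by rw [hs]; ring
    rw [h1s, hκ, Real.rpow_neg (by norm_num : (0:ℝ) ≤ 2)]
    rw [hs]; field_simp
  have key : (1 + r) ^ (-δ) ≤ 1 - κ * r := by
    have h1r : (1:ℝ) ≤ 1 + r := by linarith
    have hstep1 : (1 + r) ^ (-δ) ≤ (1 + r) ^ (-δ₀) :=
      Real.rpow_le_rpow_of_exponent_le h1r (neg_le_neg (min_le_left _ _))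
    have hconc : 1 + s * r ≤ (1 + r) ^ δ₀ := by
      have cc := (Real.strictConcaveOn_rpow hδ₀pos hδ₀lt1).concaveOn
      have h := cc.2 (Set.mem_Ici.mpr zero_le_one)
        (Set.mem_Ici.mpr (by norm_num : (0:ℝ) ≤ 2))
        (by linarith : 0 ≤ 1 - r) hr0 (by ring)
      simp only [smul_eq_mul, Real.one_rpow, mul_one] at h
      rw [show (1:ℝ) - r + r * 2 = 1 + r from by ring] at h
      calc 1 + s * r = (1 - r) + r * 2 ^ δ₀ := by simp only [hs]; ring
        _ ≤ (1 + r) ^ δ₀ := h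
    have hpos2 : 0 < 1 + s * r := by nlinarith
    have hinv : (1 + r) ^ (-δ₀) ≤ (1 + s * r)⁻¹ := by
      rw [Real.rpow_neg (by linarith : (0:ℝ) ≤ 1 + r)]
      exact inv_anti₀ hpos2 hconc
    have hfin : (1 + s * r)⁻¹ ≤ 1 - κ * r := by
      have h2 : 1 ≤ (1 - κ * r) * (1 + s * r) := by
        nlinarith [mul_nonneg (mul_nonneg hκ0.le hs0) (mul_nonneg hr0 (sub_nonneg.2 hr1))]
      rw [← one_div, div_le_iff₀ hpos2]
      linarith
    exact hstep1.trans (hinv.trans hfin)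
  have hgd : g + d = g * (1 + r) := by rw [hr]; field_simp
  have hmul : (g + d) ^ (-δ) = g ^ (-δ) * (1 + r) ^ (-δ) := by
    rw [hgd, Real.mul_rpow hgpos.le (by linarith : (0:ℝ) ≤ 1 + r)]
  rw [hmul]
  have hgnn : 0 ≤ g ^ (-δ) := Real.rpow_nonneg hgpos.le _
  have h2 : g ^ (-δ) * (1 + r) ^ (-δ) ≤ g ^ (-δ) * (1 - κ * r) :=
    mul_le_mul_of_nonneg_left key hgnn
  refine h2.trans (le_of_eq ?_)
  have hsplit : g ^ (-δ - 1) = g ^ (-δ) * g⁻¹ := by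
    rw [show -δ - 1 = -δ + (-1) from by ring, Real.rpow_add hgpos]
    congr 1
    rw [Real.rpow_neg hgpos.le, Real.rpow_one]
  rw [hsplit, hr]
  field_simp

lemma aux2 {δ g d : ℝ} (hδ : 0 < δ) (hg : 2 ≤ g) (hd0 : 0 ≤ d) (hdg : d ≤ g / 2) :
    (g - d) ^ (-δ) ≤ g ^ (-δ) + (2 * ((2:ℝ) ^ (max δ 1) - 1)) * g ^ (-δ - 1) * d := by
  set p := max δ 1 with hp
  have hp1 : (1:ℝ) ≤ p := le_max_right _ _
  set L := 2 * ((2:ℝ) ^ p - 1) with hL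
  have h2p : (1:ℝ) ≤ 2 ^ p := Real.one_le_rpow (by norm_num) (by linarith)
  have hL0 : 0 ≤ L := by simp only [hL]; linarith
  have hgpos : (0:ℝ) < g := by linarith
  set r := d / g with hr
  have hr0 : 0 ≤ r := div_nonneg hd0 hgpos.le
  have hr1 : r ≤ 1/2 := by
    rw [hr, div_le_iff₀ hgpos]; linarith
  have h1mr : 0 < 1 - r := by linarith
  have key : (1 - r) ^ (-δ) ≤ 1 + L * r := by
    have e1 : (1 - r) ^ (-δ) = ((1 - r)⁻¹) ^ δ := by
      rw [Real.rpow_neg h1mr.le, ← Real.inv_rpow h1mr.le]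
    have e2 : (1 - r)⁻¹ ≤ 1 + 2 * r := by
      rw [← one_div, div_le_iff₀ h1mr]
      nlinarith [mul_nonneg hr0 (by linarith : (0:ℝ) ≤ 1 - 2 * r)]
    have e3 : ((1 - r)⁻¹) ^ δ ≤ (1 + 2 * r) ^ δ :=
      Real.rpow_le_rpow (inv_nonneg.2 h1mr.le) e2 hδ.le
    have e4 : (1 + 2 * r) ^ δ ≤ (1 + 2 * r) ^ p :=
      Real.rpow_le_rpow_of_exponent_le (by linarith) (le_max_left _ _)
    have e5 : (1 + 2 * r) ^ p ≤ 1 + L * r := by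
      have cvx := convexOn_rpow hp1
      have h := cvx.2 (Set.mem_Ici.mpr zero_le_one)
        (Set.mem_Ici.mpr (by norm_num : (0:ℝ) ≤ 2))
        (by linarith : 0 ≤ 1 - 2 * r) (by linarith : 0 ≤ 2 * r) (by ring)
      simp only [smul_eq_mul, Real.one_rpow, mul_one] at h
      rw [show (1:ℝ) - 2 * r + 2 * r * 2 = 1 + 2 * r from by ring] at h
      calc (1 + 2 * r) ^ p ≤ (1 - 2 * r) + 2 * r * 2 ^ p := h
        _ = 1 + L * r := by simp only [hL]; ring
    rw [e1]; exact e3.trans (e4.trans e5)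
  have hgd : g - d = g * (1 - r) := by rw [hr]; field_simp
  have hmul : (g - d) ^ (-δ) = g ^ (-δ) * (1 - r) ^ (-δ) := by
    rw [hgd, Real.mul_rpow hgpos.le h1mr.le]
  rw [hmul]
  have hgnn : 0 ≤ g ^ (-δ) := Real.rpow_nonneg hgpos.le _
  have h2 : g ^ (-δ) * (1 - r) ^ (-δ) ≤ g ^ (-δ) * (1 + L * r) :=
    mul_le_mul_of_nonneg_left key hgnn
  refine h2.trans (le_of_eq ?_)
  have hsplit : g ^ (-δ - 1) = g ^ (-δ) * g⁻¹ := by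
    rw [show -δ - 1 = -δ + (-1) from by ring, Real.rpow_add hgpos]
    congr 1
    rw [Real.rpow_neg hgpos.le, Real.rpow_one]
  rw [hsplit, hr]
  field_simp
section
variable {δ β z w u n : ℝ}

lemma master (hδ : 0 < δ) (hβ : 0 < β)
    (hn3 : 3 ≤ n) (hng : n ≤ 1 + w - z) (hgn : 1 + w - z < n + 1) :
    (if u ≤ z then (1:ℝ) else (1 + u - z) ^ (-δ))
      - (if w ≤ z then (1:ℝ) else (1 + w - z) ^ (-δ))
    ≤ -((1 - (2:ℝ) ^ (-(min δ 2⁻¹))) * (n + 1) ^ (-δ - 1))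
        * (if max (u - w) 0 ≤ n then max (u - w) 0 else 0)
      + (2 * ((2:ℝ) ^ (max δ 1) - 1)) * n ^ (-δ - 1) * ((n + 1) / 2) ^ (1 - min β 1)
        * (max (-(u - w)) 0) ^ (min β 1)
      + (2 / n) ^ β * (max (-(u - w)) 0) ^ β := by
  have hκ0 : 0 < 1 - (2:ℝ) ^ (-(min δ 2⁻¹)) := (aux_kappa_pos hδ).1
  set κ := 1 - (2:ℝ) ^ (-(min δ 2⁻¹)) with hκdef
  set L := 2 * ((2:ℝ) ^ (max δ 1) - 1) with hLdef
  have hL0 : 0 ≤ L := by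
    have : (1:ℝ) ≤ 2 ^ (max δ 1) :=
      Real.one_le_rpow (by norm_num) (by positivity)
    simp only [hLdef]; linarith
  set β' := min β 1 with hβ'def
  have hβ'pos : 0 < β' := lt_min hβ one_pos
  have hβ'le1 : β' ≤ 1 := min_le_right _ _
  set g := 1 + w - z with hgdef
  have hg3 : 3 ≤ g := le_trans hn3 hng
  have hgpos : (0:ℝ) < g := by linarith
  have hnpos : (0:ℝ) < n := by linarith
  have hzw : z < w := by simp only [hgdef] at hg3 ⊢; linarith
  have hn1 : (0:ℝ) < n + 1 := by linarith
  rw [if_neg (not_le.2 hzw)]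
  set d := u - w with hddef
  -- nonnegativity of terms 2 and 3
  have hT2 : 0 ≤ L * n ^ (-δ - 1) * ((n + 1) / 2) ^ (1 - β') * (max (-d) 0) ^ β' := by
    have := Real.rpow_nonneg (le_max_right (-d) 0) β'
    positivity
  have hT3 : 0 ≤ (2 / n) ^ β * (max (-d) 0) ^ β := by
    have := Real.rpow_nonneg (le_max_right (-d) 0) β
    positivity
  rcases le_or_gt 0 d with hd | hd
  · -- d ≥ 0
    have hmaxd : max d 0 = d := max_eq_left hd
    have hu : ¬ u ≤ z := by push_neg; have : u = w + d := by rw [hddef]; ring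
                            rw [this]; linarith
    rw [if_neg hu]
    have h1uz : 1 + u - z = g + d := by rw [hgdef, hddef]; ring
    rw [h1uz, hmaxd]
    rcases le_or_gt d n with hdn | hdn
    · rw [if_pos hdn]
      have haux := aux1 hδ (by linarith : 2 ≤ g) hd (le_trans hdn hng)
      rw [← hκdef] at haux
      have hbase : (n + 1) ^ (-δ - 1) ≤ g ^ (-δ - 1) :=
        Real.rpow_le_rpow_of_nonpos hgpos (by linarith) (by linarith)
      have hmul : κ * (n + 1) ^ (-δ - 1) * d ≤ κ * g ^ (-δ - 1) * d := by
        apply mul_le_mul_of_nonneg_right _ hd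
        exact mul_le_mul_of_nonneg_left hbase hκ0.le
      have key : (g + d) ^ (-δ) - g ^ (-δ) ≤ -(κ * (n + 1) ^ (-δ - 1)) * d := by
        linarith
      clear_value κ L β' g d
      linarith
    · rw [if_neg (not_le.2 hdn), mul_zero]
      have : (g + d) ^ (-δ) ≤ g ^ (-δ) :=
        Real.rpow_le_rpow_of_nonpos hgpos (by linarith) (by linarith)
      linarith
  · -- d < 0
    have hmaxd : max d 0 = 0 := max_eq_right hd.le
    have hmaxnd : max (-d) 0 = -d := max_eq_left (by linarith)
    have hterm1 : -(κ * (n + 1) ^ (-δ - 1)) * (if max d 0 ≤ n then max d 0 else 0) = 0 := by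
      rw [hmaxd]; rw [if_pos hnpos.le]; ring
    rw [hterm1, hmaxnd]
    have hndpos : 0 < -d := by linarith
    rcases le_or_gt (-d) (g / 2) with hsmall | hbig
    · -- small negative jump
      have hu : ¬ u ≤ z := by
        push_neg
        have : u = w - (-d) := by rw [hddef]; ring
        rw [this]
        have hw : w = z + g - 1 := by rw [hgdef]; ring
        rw [hw]; linarith
      rw [if_neg hu]
      have h1uz : 1 + u - z = g - (-d) := by rw [hgdef, hddef]; ring
      rw [h1uz]
      have haux := aux2 hδ (by linarith : 2 ≤ g) hndpos.le hsmall
      rw [← hLdef] at haux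
      -- (g - (-d))^(-δ) ≤ g^(-δ) + L * g^(-δ-1) * (-d)
      have hchain : L * g ^ (-δ - 1) * (-d)
          ≤ L * n ^ (-δ - 1) * ((n + 1) / 2) ^ (1 - β') * (-d) ^ β' := by
        have hb1 : g ^ (-δ - 1) ≤ n ^ (-δ - 1) :=
          Real.rpow_le_rpow_of_nonpos hnpos hng (by linarith)
        have hsplit : (-d) = (-d) ^ β' * (-d) ^ (1 - β') := by
          rw [← Real.rpow_add hndpos, show β' + (1 - β') = 1 from by ring, Real.rpow_one]
        have hb2 : (-d) ^ (1 - β') ≤ ((n + 1) / 2) ^ (1 - β') := by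
          apply Real.rpow_le_rpow hndpos.le _ (by linarith)
          linarith
        calc L * g ^ (-δ - 1) * (-d)
            = L * (g ^ (-δ - 1) * ((-d) ^ β' * (-d) ^ (1 - β'))) := by
              rw [← hsplit]; ring
          _ ≤ L * (n ^ (-δ - 1) * ((-d) ^ β' * ((n + 1) / 2) ^ (1 - β'))) := by
              apply mul_le_mul_of_nonneg_left _ hL0
              apply mul_le_mul hb1 _ (by positivity) (by positivity)
              exact mul_le_mul_of_nonneg_left hb2 (Real.rpow_nonneg hndpos.le _)
          _ = L * n ^ (-δ - 1) * ((n + 1) / 2) ^ (1 - β') * (-d) ^ β' := by ring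
      have hT3' : 0 ≤ (2 / n) ^ β * (-d) ^ β := by rw [← hmaxnd]; exact hT3
      clear_value κ L β' g d
      linarith
    · -- big negative jump
      have hfu : (if u ≤ z then (1:ℝ) else (1 + u - z) ^ (-δ)) ≤ 1 := by
        split_ifs with h
        · exact le_rfl
        · push_neg at h
          exact Real.rpow_le_one_of_one_le_of_nonpos (by linarith) (by linarith)
      have hfw : 0 ≤ g ^ (-δ) := Real.rpow_nonneg hgpos.le _
      have hone : (1:ℝ) ≤ (2 / n) ^ β * (-d) ^ β := by
        rw [← Real.mul_rpow (by positivity) hndpos.le]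
        apply Real.one_le_rpow _ hβ.le
        rw [div_mul_eq_mul_div, le_div_iff₀ hnpos]
        linarith
      have hT2' : 0 ≤ L * n ^ (-δ - 1) * ((n + 1) / 2) ^ (1 - β') * (-d) ^ β' := by
        rw [← hmaxnd] at hndpos ⊢; exact hT2
      linarith
end

lemma auxA {α β c C δ : ℝ} (x₀ : ℝ) (hα : α ∈ Set.Ioo (0:ℝ) 1) (hβ : α < β) (hc : 0 < c)
    (hC : 0 ≤ C) (hδ : δ ∈ Set.Ioo 0 (β - α)) :
    ∃ A : ℝ, 4 ≤ A ∧ x₀ ≤ A ∧ ∀ x : ℝ, A ≤ x →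
      (2 * ((2:ℝ) ^ (max δ 1) - 1)) * x ^ (-δ - 1) * ((x + 1) / 2) ^ (1 - min β 1) * (1 + C)
        + (2 / x) ^ β * C
      ≤ (1 - (2:ℝ) ^ (-(min δ 2⁻¹))) * (x + 1) ^ (-δ - 1) * (c * x ^ (1 - α)) := by
  obtain ⟨hα0, hα1⟩ := hα
  obtain ⟨hδ0, hδβα⟩ := hδ
  set κ := 1 - (2:ℝ) ^ (-(min δ 2⁻¹)) with hκdef
  have hκ0 : 0 < κ := by
    have h0 : 0 < min δ 2⁻¹ := lt_min hδ0 (by norm_num)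
    have h1 : (2:ℝ) ^ (-(min δ 2⁻¹)) < 1 :=
      Real.rpow_lt_one_of_one_lt_of_neg (by norm_num) (by linarith)
    simp only [hκdef]; linarith
  set L := 2 * ((2:ℝ) ^ (max δ 1) - 1) with hLdef
  have hL0 : 0 ≤ L := by
    have : (1:ℝ) ≤ 2 ^ (max δ 1) := Real.one_le_rpow (by norm_num) (by positivity)
    simp only [hLdef]; linarith
  set β' := min β 1 with hβ'def
  have hβ'α : α < β' := lt_min hβ hα1
  set ε := min (β' - α) (β - δ - α) with hεdef
  have hε0 : 0 < ε := lt_min (by linarith) (by linarith)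
  set K := κ * c * (2:ℝ) ^ (-δ - 1) with hKdef
  have hK0 : 0 < K := by
    have : (0:ℝ) < (2:ℝ) ^ (-δ - 1) := Real.rpow_pos_of_pos (by norm_num) _
    simp only [hKdef]; positivity
  set M := L * (1 + C) + (2:ℝ) ^ β * C with hMdef
  have hM0 : 0 ≤ M := by
    have : (0:ℝ) ≤ (2:ℝ) ^ β := Real.rpow_nonneg (by norm_num) _
    simp only [hMdef]; nlinarith
  have htend : Tendsto (fun x : ℝ => M * x ^ (-ε)) atTop (nhds 0) := by
    have := (tendsto_rpow_neg_atTop hε0).const_mul M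
    simpa using this
  have hev : ∀ᶠ x : ℝ in atTop, M * x ^ (-ε) < K :=
    htend.eventually_lt_const hK0
  obtain ⟨A₀, hA₀⟩ := eventually_atTop.mp hev
  refine ⟨max A₀ (max 4 x₀), le_trans (le_max_left 4 x₀) (le_max_right _ _),
    le_trans (le_max_right 4 x₀) (le_max_right _ _), ?_⟩
  intro x hx
  have hx4 : (4:ℝ) ≤ x := le_trans (le_trans (le_max_left 4 x₀) (le_max_right _ _)) hx
  have hx1 : (1:ℝ) ≤ x := by linarith
  have hxpos : (0:ℝ) < x := by linarith
  have hMx : M * x ^ (-ε) < K := hA₀ x (le_trans (le_max_left _ _) hx)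
  -- rewrite RHS lower bound
  have hrhs : K * x ^ (-δ - α) ≤ κ * (x + 1) ^ (-δ - 1) * (c * x ^ (1 - α)) := by
    have h1 : (2 * x) ^ (-δ - 1) ≤ (x + 1) ^ (-δ - 1) :=
      Real.rpow_le_rpow_of_nonpos (by linarith) (by linarith) (by linarith)
    have h2 : ((2:ℝ) * x) ^ (-δ - 1) = 2 ^ (-δ - 1) * x ^ (-δ - 1) :=
      Real.mul_rpow (by norm_num) hxpos.le
    have h3 : x ^ (-δ - 1) * x ^ (1 - α) = x ^ (-δ - α) := by
      rw [← Real.rpow_add hxpos]; ring_nf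
    calc K * x ^ (-δ - α) = κ * c * ((2:ℝ) ^ (-δ - 1) * (x ^ (-δ - 1) * x ^ (1 - α))) := by
          rw [h3, hKdef]; ring
      _ = κ * ((2 * x) ^ (-δ - 1)) * (c * x ^ (1 - α)) := by rw [h2]; ring
      _ ≤ κ * (x + 1) ^ (-δ - 1) * (c * x ^ (1 - α)) := by
          apply mul_le_mul_of_nonneg_right _ (by positivity)
          exact mul_le_mul_of_nonneg_left h1 hκ0.le
  -- bound LHS from above
  have hlhs : L * x ^ (-δ - 1) * ((x + 1) / 2) ^ (1 - β') * (1 + C) + (2 / x) ^ β * C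
      ≤ M * x ^ (-ε) * x ^ (-δ - α) := by
    have hb1 : ((x + 1) / 2) ^ (1 - β') ≤ x ^ (1 - β') := by
      apply Real.rpow_le_rpow (by positivity) (by linarith) (by simp only [hβ'def]; nlinarith [min_le_right β 1])
    have he1 : x ^ (-δ - 1) * x ^ (1 - β') = x ^ (-δ - β') := by
      rw [← Real.rpow_add hxpos]; ring_nf
    have he2 : x ^ (-δ - β') ≤ x ^ (-ε) * x ^ (-δ - α) := by
      rw [← Real.rpow_add hxpos]
      apply Real.rpow_le_rpow_of_exponent_le hx1
      have : ε ≤ β' - α := min_le_left _ _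
      linarith
    have he3 : (2 / x) ^ β = 2 ^ β * x ^ (-β) := by
      rw [Real.div_rpow (by norm_num) hxpos.le, Real.rpow_neg hxpos.le, div_eq_mul_inv]
    have he4 : x ^ (-β) ≤ x ^ (-ε) * x ^ (-δ - α) := by
      rw [← Real.rpow_add hxpos]
      apply Real.rpow_le_rpow_of_exponent_le hx1
      have : ε ≤ β - δ - α := min_le_right _ _
      linarith
    have h2b : (0:ℝ) ≤ (2:ℝ) ^ β := Real.rpow_nonneg (by norm_num) _
    have t1 : L * x ^ (-δ - 1) * ((x + 1) / 2) ^ (1 - β') * (1 + C)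
        ≤ L * (1 + C) * (x ^ (-ε) * x ^ (-δ - α)) := by
      have step : x ^ (-δ - 1) * ((x + 1) / 2) ^ (1 - β') ≤ x ^ (-ε) * x ^ (-δ - α) := by
        calc x ^ (-δ - 1) * ((x + 1) / 2) ^ (1 - β')
            ≤ x ^ (-δ - 1) * x ^ (1 - β') :=
              mul_le_mul_of_nonneg_left hb1 (Real.rpow_nonneg hxpos.le _)
          _ = x ^ (-δ - β') := he1
          _ ≤ x ^ (-ε) * x ^ (-δ - α) := he2
      calc L * x ^ (-δ - 1) * ((x + 1) / 2) ^ (1 - β') * (1 + C)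
          = (L * (1 + C)) * (x ^ (-δ - 1) * ((x + 1) / 2) ^ (1 - β')) := by ring
        _ ≤ (L * (1 + C)) * (x ^ (-ε) * x ^ (-δ - α)) := by
            apply mul_le_mul_of_nonneg_left step (by nlinarith)
    have t2 : (2 / x) ^ β * C ≤ 2 ^ β * C * (x ^ (-ε) * x ^ (-δ - α)) := by
      rw [he3]
      calc 2 ^ β * x ^ (-β) * C = (2 ^ β * C) * x ^ (-β) := by ring
        _ ≤ (2 ^ β * C) * (x ^ (-ε) * x ^ (-δ - α)) := by
            apply mul_le_mul_of_nonneg_left he4 (by positivity)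
    calc L * x ^ (-δ - 1) * ((x + 1) / 2) ^ (1 - β') * (1 + C) + (2 / x) ^ β * C
        ≤ L * (1 + C) * (x ^ (-ε) * x ^ (-δ - α)) + 2 ^ β * C * (x ^ (-ε) * x ^ (-δ - α)) := by
          linarith
      _ = M * x ^ (-ε) * x ^ (-δ - α) := by rw [hMdef]; ring
  have hfin : M * x ^ (-ε) * x ^ (-δ - α) ≤ K * x ^ (-δ - α) :=
    mul_le_mul_of_nonneg_right hMx.le (Real.rpow_nonneg hxpos.le _)
  clear_value κ L β' ε K M
  linarith

lemma condexp_const_mul_helper {Ω : Type*} {m m0 : MeasurableSpace Ω} {μ : Measure Ω} (k : ℝ)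
    (f : Ω → ℝ) : μ[fun ω => k * f ω|m] =ᵐ[μ] fun ω => k * (μ[f|m]) ω :=
  condExp_smul k f m

set_option maxHeartbeats 2000000 in
/-- Local supermartingale (Lyapunov drift) condition for
`f_{z,δ}(y) = 1` for `y ≤ z`, `(1+y-z)^{-δ}` for `y > z` (Lemma 4 of the paper). -/
theorem stmt7
    {Ω : Type*} {m0 : MeasurableSpace Ω} {μ : Measure Ω} [IsProbabilityMeasure μ]
    (F : Filtration ℕ m0) (X : ℕ → Ω → ℝ) (hadapted : Adapted F X)
    (α β c C x₀ : ℝ) (hα : α ∈ Set.Ioo (0:ℝ) 1) (hβ : α < β) (hc : 0 < c)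
    (hnegint : ∀ t, Integrable (fun ω => (max (-(X (t + 1) ω - X t ω)) 0) ^ β) μ)
    (hneg : ∀ t, ∀ᵐ ω ∂μ,
      (μ[fun ω' => (max (-(X (t + 1) ω' - X t ω')) 0) ^ β|F t]) ω ≤ C)
    (hpos : ∀ t, ∀ x, x₀ ≤ x → ∀ᵐ ω ∂μ,
      c * x ^ (1 - α) ≤ (μ[fun ω' =>
        Set.indicator {ω'' | max (X (t + 1) ω'' - X t ω'') 0 ≤ x}
          (fun ω'' => max (X (t + 1) ω'' - X t ω'') 0) ω'|F t]) ω)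
    (δ : ℝ) (hδ : δ ∈ Set.Ioo 0 (β - α)) :
    ∃ A > (0:ℝ), ∀ z : ℝ, ∀ t, ∀ᵐ ω ∂μ, z + A < X t ω →
      (μ[fun ω' =>
          (if X (t + 1) ω' ≤ z then (1:ℝ) else (1 + X (t + 1) ω' - z) ^ (-δ))
          - (if X t ω' ≤ z then (1:ℝ) else (1 + X t ω' - z) ^ (-δ))|F t]) ω ≤ 0 := by
  have hβpos : 0 < β := lt_trans hα.1 hβ
  have hδ0 : 0 < δ := hδ.1
  haveI : (ae μ).NeBot := ae_neBot.mpr (IsProbabilityMeasure.ne_zero μ)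
  have hC : 0 ≤ C := by
    have h1 := hneg 0
    have h2 : 0 ≤ᵐ[μ] μ[fun ω' => (max (-(X (0 + 1) ω' - X 0 ω')) 0) ^ β|F 0] :=
      condExp_nonneg (Filter.Eventually.of_forall fun ω =>
        Real.rpow_nonneg (le_max_right _ _) β)
    obtain ⟨ω, hω1, hω2⟩ := (h1.and h2).exists
    simp only [Pi.zero_apply] at hω2
    linarith
  obtain ⟨A, hA4, hAx₀, hAineq⟩ := auxA x₀ hα hβ hc hC hδ
  refine ⟨A, by linarith, ?_⟩
  intro z t
  have hmle : F t ≤ m0 := F.le t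
  have hX1 : Measurable (X (t + 1)) := (hadapted (t + 1)).mono (F.le (t + 1)) le_rfl
  have hXt : Measurable (X t) := (hadapted t).mono (F.le t) le_rfl
  -- basic bounds on the function f
  have hf01 : ∀ y : ℝ, 0 ≤ (if y ≤ z then (1:ℝ) else (1 + y - z) ^ (-δ)) ∧
      (if y ≤ z then (1:ℝ) else (1 + y - z) ^ (-δ)) ≤ 1 := by
    intro y; split_ifs with h
    · exact ⟨zero_le_one, le_rfl⟩
    · push_neg at h
      exact ⟨Real.rpow_nonneg (by linarith) _,
        Real.rpow_le_one_of_one_le_of_nonpos (by linarith) (by linarith)⟩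
  have hfdm : Measurable (fun ω' =>
      (if X (t + 1) ω' ≤ z then (1:ℝ) else (1 + X (t + 1) ω' - z) ^ (-δ))
        - (if X t ω' ≤ z then (1:ℝ) else (1 + X t ω' - z) ^ (-δ))) := by
    apply Measurable.sub
    · exact Measurable.ite (measurableSet_le hX1 measurable_const) measurable_const
        (((measurable_const.add hX1).sub measurable_const).pow measurable_const)
    · exact Measurable.ite (measurableSet_le hXt measurable_const) measurable_const
        (((measurable_const.add hXt).sub measurable_const).pow measurable_const)
  have hfdint : Integrable (fun ω' =>
      (if X (t + 1) ω' ≤ z then (1:ℝ) else (1 + X (t + 1) ω' - z) ^ (-δ))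
        - (if X t ω' ≤ z then (1:ℝ) else (1 + X t ω' - z) ^ (-δ))) μ := by
    refine (integrable_const (2:ℝ)).mono' hfdm.aestronglyMeasurable ?_
    refine Filter.Eventually.of_forall fun ω => ?_
    have h1 := hf01 (X (t + 1) ω)
    have h2 := hf01 (X t ω)
    rw [Real.norm_eq_abs, abs_le]
    constructor <;> linarith [h1.1, h1.2, h2.1, h2.2]
  -- negative-part integrabilities
  have hDpm : Measurable (fun ω => max (X (t + 1) ω - X t ω) 0) :=
    (hX1.sub hXt).max measurable_const
  have hDnm : Measurable (fun ω => max (-(X (t + 1) ω - X t ω)) 0) :=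
    ((hX1.sub hXt).neg).max measurable_const
  have hWint : Integrable (fun ω => (max (-(X (t + 1) ω - X t ω)) 0) ^ β) μ := hnegint t
  have hdom : Integrable (fun ω => 1 + (max (-(X (t + 1) ω - X t ω)) 0) ^ β) μ :=
    (integrable_const (1:ℝ)).add (hnegint t)
  have hZle : ∀ ω, (max (-(X (t + 1) ω - X t ω)) 0) ^ (min β 1) ≤
      1 + (max (-(X (t + 1) ω - X t ω)) 0) ^ β := by
    intro ω
    rcases le_or_gt (max (-(X (t + 1) ω - X t ω)) 0) 1 with h | h
    · have h1 : (max (-(X (t + 1) ω - X t ω)) 0) ^ (min β 1) ≤ 1 :=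
        Real.rpow_le_one (le_max_right _ _) h (le_min hβpos.le zero_le_one)
      have h2 : 0 ≤ (max (-(X (t + 1) ω - X t ω)) 0) ^ β :=
        Real.rpow_nonneg (le_max_right _ _) _
      linarith
    · have h1 : (max (-(X (t + 1) ω - X t ω)) 0) ^ (min β 1) ≤
          (max (-(X (t + 1) ω - X t ω)) 0) ^ β :=
        Real.rpow_le_rpow_of_exponent_le h.le (min_le_left _ _)
      linarith
  have hZint : Integrable (fun ω => (max (-(X (t + 1) ω - X t ω)) 0) ^ (min β 1)) μ := by
    refine hdom.mono' (hDnm.pow measurable_const).aestronglyMeasurable ?_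
    refine Filter.Eventually.of_forall fun ω => ?_
    rw [Real.norm_eq_abs, abs_of_nonneg (Real.rpow_nonneg (le_max_right _ _) _)]
    exact hZle ω
  have hZcond1 : μ[fun ω => (max (-(X (t + 1) ω - X t ω)) 0) ^ (min β 1)|F t] ≤ᵐ[μ]
      μ[fun ω => 1 + (max (-(X (t + 1) ω - X t ω)) 0) ^ β|F t] :=
    condExp_mono hZint hdom (Filter.Eventually.of_forall hZle)
  have hZcond2 : μ[fun ω => 1 + (max (-(X (t + 1) ω - X t ω)) 0) ^ β|F t] =ᵐ[μ]
      fun ω => 1 + (μ[fun ω' => (max (-(X (t + 1) ω' - X t ω')) 0) ^ β|F t]) ω := by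
    have h := condExp_add (μ := μ) (m := F t) (integrable_const (1:ℝ)) (hnegint t)
    filter_upwards [h] with ω hω
    simp only [Pi.add_apply, condExp_const hmle] at hω
    exact hω
  -- the measurable "level" function and its sets
  have hGm : Measurable[F t] (fun ω => max (1 + X t ω - z) 3) :=
    ((measurable_const.add (hadapted t)).sub measurable_const).max measurable_const
  set E : ℕ → Set Ω := fun n =>
    {ω | (n:ℝ) ≤ max (1 + X t ω - z) 3} ∩ {ω | max (1 + X t ω - z) 3 < (n:ℝ) + 1} with hEdef
  have hEms : ∀ n : ℕ, MeasurableSet[F t] (E n) := fun n =>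
    (measurableSet_le measurable_const hGm).inter (measurableSet_lt hGm measurable_const)
  have hEm0 : ∀ n : ℕ, MeasurableSet (E n) := fun n => hmle _ (hEms n)
  -- per-level estimate
  have hkey : ∀ n : ℕ, ∀ᵐ ω ∂μ, A < (n:ℝ) → ω ∈ E n →
      (μ[fun ω' =>
          (if X (t + 1) ω' ≤ z then (1:ℝ) else (1 + X (t + 1) ω' - z) ^ (-δ))
          - (if X t ω' ≤ z then (1:ℝ) else (1 + X t ω' - z) ^ (-δ))|F t]) ω ≤ 0 := by
    intro n
    by_cases hn : A < (n:ℝ)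
    swap
    · filter_upwards with ω h1 _; exact absurd h1 hn
    have hn4 : (4:ℝ) ≤ (n:ℝ) := by linarith
    have hnpos : (0:ℝ) < (n:ℝ) := by linarith
    have hnx₀ : x₀ ≤ (n:ℝ) := by linarith
    -- integrability of the comparison function pieces
    have hindm : Measurable (fun ω' =>
        Set.indicator {ω'' | max (X (t + 1) ω'' - X t ω'') 0 ≤ (n:ℝ)}
          (fun ω'' => max (X (t + 1) ω'' - X t ω'') 0) ω') :=
      hDpm.indicator (hDpm measurableSet_Iic)
    have hindint : Integrable (fun ω' =>
        Set.indicator {ω'' | max (X (t + 1) ω'' - X t ω'') 0 ≤ (n:ℝ)}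
          (fun ω'' => max (X (t + 1) ω'' - X t ω'') 0) ω') μ := by
      refine (integrable_const ((n:ℝ))).mono' hindm.aestronglyMeasurable ?_
      refine Filter.Eventually.of_forall fun ω => ?_
      rw [Real.norm_eq_abs, Set.indicator_apply]
      split_ifs with h
      · simp only [Set.mem_setOf_eq] at h
        rw [abs_of_nonneg (le_max_right _ _)]
        exact h
      · rw [abs_zero]; exact hnpos.le
    have hT1int : Integrable (fun ω' =>
        -((1 - (2:ℝ) ^ (-(min δ 2⁻¹))) * ((n:ℝ) + 1) ^ (-δ - 1)) *
          Set.indicator {ω'' | max (X (t + 1) ω'' - X t ω'') 0 ≤ (n:ℝ)}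
            (fun ω'' => max (X (t + 1) ω'' - X t ω'') 0) ω') μ :=
      hindint.const_mul _
    have hT2int : Integrable (fun ω' =>
        (2 * ((2:ℝ) ^ (max δ 1) - 1)) * (n:ℝ) ^ (-δ - 1) * (((n:ℝ) + 1) / 2) ^ (1 - min β 1) *
          (max (-(X (t + 1) ω' - X t ω')) 0) ^ (min β 1)) μ :=
      hZint.const_mul _
    have hT3int : Integrable (fun ω' =>
        (2 / (n:ℝ)) ^ β * (max (-(X (t + 1) ω' - X t ω')) 0) ^ β) μ :=
      hWint.const_mul _
    have hPHIint : Integrable (fun ω' =>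
        -((1 - (2:ℝ) ^ (-(min δ 2⁻¹))) * ((n:ℝ) + 1) ^ (-δ - 1)) *
          Set.indicator {ω'' | max (X (t + 1) ω'' - X t ω'') 0 ≤ (n:ℝ)}
            (fun ω'' => max (X (t + 1) ω'' - X t ω'') 0) ω'
        + (2 * ((2:ℝ) ^ (max δ 1) - 1)) * (n:ℝ) ^ (-δ - 1) * (((n:ℝ) + 1) / 2) ^ (1 - min β 1) *
            (max (-(X (t + 1) ω' - X t ω')) 0) ^ (min β 1)
        + (2 / (n:ℝ)) ^ β * (max (-(X (t + 1) ω' - X t ω')) 0) ^ β) μ :=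
      (hT1int.add hT2int).add hT3int
    -- pointwise comparison on E n
    have hcomp : ∀ ω', (E n).indicator (fun ω' =>
          (if X (t + 1) ω' ≤ z then (1:ℝ) else (1 + X (t + 1) ω' - z) ^ (-δ))
          - (if X t ω' ≤ z then (1:ℝ) else (1 + X t ω' - z) ^ (-δ))) ω'
        ≤ (E n).indicator (fun ω' =>
          -((1 - (2:ℝ) ^ (-(min δ 2⁻¹))) * ((n:ℝ) + 1) ^ (-δ - 1)) *
            Set.indicator {ω'' | max (X (t + 1) ω'' - X t ω'') 0 ≤ (n:ℝ)}
              (fun ω'' => max (X (t + 1) ω'' - X t ω'') 0) ω'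
          + (2 * ((2:ℝ) ^ (max δ 1) - 1)) * (n:ℝ) ^ (-δ - 1) * (((n:ℝ) + 1) / 2) ^ (1 - min β 1) *
              (max (-(X (t + 1) ω' - X t ω')) 0) ^ (min β 1)
          + (2 / (n:ℝ)) ^ β * (max (-(X (t + 1) ω' - X t ω')) 0) ^ β) ω' := by
      intro ω'
      by_cases hmem : ω' ∈ E n
      · rw [Set.indicator_of_mem hmem, Set.indicator_of_mem hmem]
        obtain ⟨h1, h2⟩ := hmem
        simp only [Set.mem_setOf_eq] at h1 h2
        have hGeq : max (1 + X t ω' - z) 3 = 1 + X t ω' - z := by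
          rcases le_or_gt (1 + X t ω' - z) 3 with h | h
          · rw [max_eq_right h] at h1; linarith
          · exact max_eq_left h.le
        rw [hGeq] at h1 h2
        have hmr := master (δ := δ) (β := β) (z := z) (w := X t ω') (u := X (t + 1) ω')
          (n := (n:ℝ)) hδ0 hβpos (by linarith) h1 h2
        have hindeq : (if max (X (t + 1) ω' - X t ω') 0 ≤ (n:ℝ)
              then max (X (t + 1) ω' - X t ω') 0 else 0)
            = Set.indicator {ω'' | max (X (t + 1) ω'' - X t ω'') 0 ≤ (n:ℝ)}
              (fun ω'' => max (X (t + 1) ω'' - X t ω'') 0) ω' := by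
          simp [Set.indicator_apply]
        rw [hindeq] at hmr
        exact hmr
      · rw [Set.indicator_of_notMem hmem, Set.indicator_of_notMem hmem]
    -- conditional expectation chain
    have c1 := condExp_indicator (μ := μ) hfdint (hEms n)
    have c2 := condExp_mono (μ := μ) (m := F t) (hfdint.indicator (hEm0 n))
      (hPHIint.indicator (hEm0 n)) (Filter.Eventually.of_forall hcomp)
    have c3 := condExp_indicator (μ := μ) hPHIint (hEms n)
    have d1 : μ[fun ω' =>
        -((1 - (2:ℝ) ^ (-(min δ 2⁻¹))) * ((n:ℝ) + 1) ^ (-δ - 1)) *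
          Set.indicator {ω'' | max (X (t + 1) ω'' - X t ω'') 0 ≤ (n:ℝ)}
            (fun ω'' => max (X (t + 1) ω'' - X t ω'') 0) ω'
        + (2 * ((2:ℝ) ^ (max δ 1) - 1)) * (n:ℝ) ^ (-δ - 1) * (((n:ℝ) + 1) / 2) ^ (1 - min β 1) *
            (max (-(X (t + 1) ω' - X t ω')) 0) ^ (min β 1)
        + (2 / (n:ℝ)) ^ β * (max (-(X (t + 1) ω' - X t ω')) 0) ^ β|F t] =ᵐ[μ]
        μ[fun ω' =>
        -((1 - (2:ℝ) ^ (-(min δ 2⁻¹))) * ((n:ℝ) + 1) ^ (-δ - 1)) *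
          Set.indicator {ω'' | max (X (t + 1) ω'' - X t ω'') 0 ≤ (n:ℝ)}
            (fun ω'' => max (X (t + 1) ω'' - X t ω'') 0) ω'
        + (2 * ((2:ℝ) ^ (max δ 1) - 1)) * (n:ℝ) ^ (-δ - 1) * (((n:ℝ) + 1) / 2) ^ (1 - min β 1) *
            (max (-(X (t + 1) ω' - X t ω')) 0) ^ (min β 1)|F t]
        + μ[fun ω' => (2 / (n:ℝ)) ^ β * (max (-(X (t + 1) ω' - X t ω')) 0) ^ β|F t] :=
      condExp_add (hT1int.add hT2int) hT3int (F t)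
    have d2 : μ[fun ω' =>
        -((1 - (2:ℝ) ^ (-(min δ 2⁻¹))) * ((n:ℝ) + 1) ^ (-δ - 1)) *
          Set.indicator {ω'' | max (X (t + 1) ω'' - X t ω'') 0 ≤ (n:ℝ)}
            (fun ω'' => max (X (t + 1) ω'' - X t ω'') 0) ω'
        + (2 * ((2:ℝ) ^ (max δ 1) - 1)) * (n:ℝ) ^ (-δ - 1) * (((n:ℝ) + 1) / 2) ^ (1 - min β 1) *
            (max (-(X (t + 1) ω' - X t ω')) 0) ^ (min β 1)|F t] =ᵐ[μ]
        μ[fun ω' =>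
        -((1 - (2:ℝ) ^ (-(min δ 2⁻¹))) * ((n:ℝ) + 1) ^ (-δ - 1)) *
          Set.indicator {ω'' | max (X (t + 1) ω'' - X t ω'') 0 ≤ (n:ℝ)}
            (fun ω'' => max (X (t + 1) ω'' - X t ω'') 0) ω'|F t]
        + μ[fun ω' =>
        (2 * ((2:ℝ) ^ (max δ 1) - 1)) * (n:ℝ) ^ (-δ - 1) * (((n:ℝ) + 1) / 2) ^ (1 - min β 1) *
            (max (-(X (t + 1) ω' - X t ω')) 0) ^ (min β 1)|F t] :=
      condExp_add hT1int hT2int (F t)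
    have d3 := condexp_const_mul_helper (μ := μ) (m := F t)
      (-((1 - (2:ℝ) ^ (-(min δ 2⁻¹))) * ((n:ℝ) + 1) ^ (-δ - 1)))
      (fun ω' => Set.indicator {ω'' | max (X (t + 1) ω'' - X t ω'') 0 ≤ (n:ℝ)}
        (fun ω'' => max (X (t + 1) ω'' - X t ω'') 0) ω')
    have d4 := condexp_const_mul_helper (μ := μ) (m := F t)
      ((2 * ((2:ℝ) ^ (max δ 1) - 1)) * (n:ℝ) ^ (-δ - 1) * (((n:ℝ) + 1) / 2) ^ (1 - min β 1))
      (fun ω' => (max (-(X (t + 1) ω' - X t ω')) 0) ^ (min β 1))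
    have d5 := condexp_const_mul_helper (μ := μ) (m := F t)
      ((2 / (n:ℝ)) ^ β)
      (fun ω' => (max (-(X (t + 1) ω' - X t ω')) 0) ^ β)
    have e5 := hpos t (n:ℝ) hnx₀
    have e8 := hneg t
    -- nonneg constants
    have hk1nn : 0 ≤ (1 - (2:ℝ) ^ (-(min δ 2⁻¹))) * ((n:ℝ) + 1) ^ (-δ - 1) :=
      mul_nonneg (aux_kappa_pos hδ0).1.le (Real.rpow_nonneg (by linarith) _)
    have hLnn : (0:ℝ) ≤ 2 * ((2:ℝ) ^ (max δ 1) - 1) := by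
      have : (1:ℝ) ≤ 2 ^ (max δ 1) := Real.one_le_rpow (by norm_num) (by positivity)
      linarith
    have hk2nn : 0 ≤ (2 * ((2:ℝ) ^ (max δ 1) - 1)) * (n:ℝ) ^ (-δ - 1) *
        (((n:ℝ) + 1) / 2) ^ (1 - min β 1) :=
      mul_nonneg (mul_nonneg hLnn (Real.rpow_nonneg hnpos.le _))
        (Real.rpow_nonneg (by linarith) _)
    have hk3nn : (0:ℝ) ≤ (2 / (n:ℝ)) ^ β := Real.rpow_nonneg (by positivity) _
    have hAx := hAineq (n:ℝ) hn.le
    filter_upwards [c1, c2, c3, d1, d2, d3, d4, d5, e5, hZcond1, hZcond2, e8] with ω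
      f1 f2 f3 g1 g2 g3 g4 g5 p5 p6 p7 p8
    intro _ hmem
    -- from the indicator chain
    have q1 : (μ[fun ω' =>
        (if X (t + 1) ω' ≤ z then (1:ℝ) else (1 + X (t + 1) ω' - z) ^ (-δ))
        - (if X t ω' ≤ z then (1:ℝ) else (1 + X t ω' - z) ^ (-δ))|F t]) ω
        ≤ (μ[fun ω' =>
        -((1 - (2:ℝ) ^ (-(min δ 2⁻¹))) * ((n:ℝ) + 1) ^ (-δ - 1)) *
          Set.indicator {ω'' | max (X (t + 1) ω'' - X t ω'') 0 ≤ (n:ℝ)}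
            (fun ω'' => max (X (t + 1) ω'' - X t ω'') 0) ω'
        + (2 * ((2:ℝ) ^ (max δ 1) - 1)) * (n:ℝ) ^ (-δ - 1) * (((n:ℝ) + 1) / 2) ^ (1 - min β 1) *
            (max (-(X (t + 1) ω' - X t ω')) 0) ^ (min β 1)
        + (2 / (n:ℝ)) ^ β * (max (-(X (t + 1) ω' - X t ω')) 0) ^ β|F t]) ω := by
      have h' := f2
      rw [f1, f3] at h'
      rwa [Set.indicator_of_mem hmem, Set.indicator_of_mem hmem] at h'
    rw [g1, Pi.add_apply, g2, Pi.add_apply, g3, g4, g5] at q1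
    -- numeric bounds
    have p1 : ((1 - (2:ℝ) ^ (-(min δ 2⁻¹))) * ((n:ℝ) + 1) ^ (-δ - 1)) * (c * (n:ℝ) ^ (1 - α))
        ≤ ((1 - (2:ℝ) ^ (-(min δ 2⁻¹))) * ((n:ℝ) + 1) ^ (-δ - 1)) *
          (μ[fun ω' => Set.indicator {ω'' | max (X (t + 1) ω'' - X t ω'') 0 ≤ (n:ℝ)}
            (fun ω'' => max (X (t + 1) ω'' - X t ω'') 0) ω'|F t]) ω :=
      mul_le_mul_of_nonneg_left p5 hk1nn
    have hZb : (μ[fun ω' => (max (-(X (t + 1) ω' - X t ω')) 0) ^ (min β 1)|F t]) ω ≤ 1 + C := by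
      rw [p7] at p6
      linarith
    have p2 : ((2 * ((2:ℝ) ^ (max δ 1) - 1)) * (n:ℝ) ^ (-δ - 1) *
          (((n:ℝ) + 1) / 2) ^ (1 - min β 1)) *
          (μ[fun ω' => (max (-(X (t + 1) ω' - X t ω')) 0) ^ (min β 1)|F t]) ω
        ≤ ((2 * ((2:ℝ) ^ (max δ 1) - 1)) * (n:ℝ) ^ (-δ - 1) *
          (((n:ℝ) + 1) / 2) ^ (1 - min β 1)) * (1 + C) :=
      mul_le_mul_of_nonneg_left hZb hk2nn
    have p3 : ((2 / (n:ℝ)) ^ β) * (μ[fun ω' => (max (-(X (t + 1) ω' - X t ω')) 0) ^ β|F t]) ω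
        ≤ ((2 / (n:ℝ)) ^ β) * C :=
      mul_le_mul_of_nonneg_left p8 hk3nn
    linarith [q1, p1, p2, p3, hAx]
  -- combine over all levels
  have hall := (ae_all_iff).mpr hkey
  filter_upwards [hall] with ω hω hevent
  have h3 : (3:ℝ) ≤ 1 + X t ω - z := by linarith
  have hGeq : max (1 + X t ω - z) 3 = 1 + X t ω - z := max_eq_left h3
  have hfl : (↑⌊max (1 + X t ω - z) 3⌋₊ : ℝ) ≤ max (1 + X t ω - z) 3 :=
    Nat.floor_le (by rw [hGeq]; linarith)
  have hfl2 : max (1 + X t ω - z) 3 < ↑⌊max (1 + X t ω - z) 3⌋₊ + 1 :=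
    Nat.lt_floor_add_one _
  refine hω ⌊max (1 + X t ω - z) 3⌋₊ ?_ ⟨?_, ?_⟩
  · linarith [hfl2, hGeq, hevent]
  · exact hfl
  · exact hfl2
end

section
/- Let (X_t)_{t∈ℤ⁺} be adapted to (F_t) with increments Δ_t = X_{t+1} − X_t. Fix α ∈ (0,1) and β > α, and suppose there exist C < ∞, c > 0, x₀ < ∞ such that E[(Δ_t⁺)^α | F_t] ≤ C a.s. for all t and P[Δ_t⁻ ≥ x | F_t] ≥ c x^{−β} a.s. for all x ≥ x₀ and all t. With f_{z,δ}(y) = 1 for y ≤ z and (1 + y − z)^{−δ} for y > z, for any δ > β − α there exists A > 0 such that for every z ∈ ℝ and every t, E[f_{z,δ}(X_{t+1}) − f_{z,δ}(X_t) | F_t] ≥ 0 almost surely on {X_t > z + A}. -/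
open Real

lemma le_inv_of {x y : ℝ} (hy : 0 < y) (h : x * y ≤ 1) : x ≤ y⁻¹ := by
  rw [← one_div]; exact (le_div_iff₀ hy).mpr h

lemma aux_bern {d v : ℝ} (hd : 0 < d) (hv : 0 ≤ v) :
    1 - d * v ≤ (1 + v) ^ (-d) := by
  have h1v : (0:ℝ) < 1 + v := by linarith
  rcases le_or_gt 1 (d * v) with h | h
  · have : (0:ℝ) < (1 + v) ^ (-d) := rpow_pos_of_pos h1v _
    linarith
  rw [rpow_neg h1v.le]
  rcases le_or_gt d 1 with hd1 | hd1
  · have hb : (1 + v) ^ d ≤ 1 + d * v :=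
      rpow_one_add_le_one_add_mul_self (by linarith) hd.le hd1
    have h4 : (1 - d*v) * (1+v)^d ≤ (1-d*v)*(1+d*v) :=
      mul_le_mul_of_nonneg_left hb (by linarith)
    have h5 : (1-d*v)*(1+d*v) ≤ 1 := by nlinarith [sq_nonneg (d*v)]
    exact le_inv_of (rpow_pos_of_pos h1v _) (h4.trans h5)
  · have hw : (0:ℝ) ≤ 1 - d * v := by linarith
    have hb : (1 + -(d*v)) ^ (1/d) ≤ 1 + (1/d) * (-(d*v)) :=
      rpow_one_add_le_one_add_mul_self (by linarith) (by positivity)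
        ((div_le_one hd).mpr hd1.le)
    have hb' : (1 - d*v) ^ (1/d) ≤ 1 - v := by
      have he : 1 + (1/d) * (-(d*v)) = 1 - v := by field_simp; ring
      rw [← he]; convert hb using 2; ring
    have h2 : (1 - d*v) ^ (1/d) ≤ (1 + v)⁻¹ := by
      refine hb'.trans (le_inv_of h1v (by nlinarith))
    have h3 : ((1 - d*v) ^ (1/d)) ^ d ≤ ((1 + v)⁻¹) ^ d :=
      rpow_le_rpow (rpow_nonneg hw _) h2 hd.le
    rwa [← rpow_mul hw, one_div, inv_mul_cancel₀ hd.ne', rpow_one,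
      inv_rpow h1v.le] at h3

open Real

lemma aux_min {p w : ℝ} (h0 : 0 < p) (h1 : p ≤ 1) (hw : 0 ≤ w) : min 1 w ≤ w ^ p := by
  rcases le_or_gt 1 w with h | h
  · calc min 1 w ≤ 1 := min_le_left _ _
      _ ≤ w ^ p := one_le_rpow h h0.le
  · calc min 1 w ≤ w := min_le_right _ _
      _ = w ^ (1:ℝ) := (rpow_one w).symm
      _ ≤ w ^ p := by
          rcases eq_or_lt_of_le hw with rfl | hw'
          · simp [h0.ne', Real.zero_rpow, h0.ne.symm]
          · exact rpow_le_rpow_of_exponent_ge hw' h.le h1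

lemma aux_key {p δ a u : ℝ} (hp0 : 0 < p) (hp1 : p ≤ 1) (hδ : 0 < δ)
    (ha : 1 ≤ a) (hu : 0 ≤ u) :
    a ^ (-δ) - (a + u) ^ (-δ) ≤ δ ^ p * a ^ (-(δ + p)) * u ^ p := by
  have ha0 : (0:ℝ) < a := lt_of_lt_of_le one_pos ha
  have hva : (0:ℝ) ≤ u / a := by positivity
  have hsplit : (a + u) ^ (-δ) = a ^ (-δ) * (1 + u / a) ^ (-δ) := by
    rw [← mul_rpow ha0.le (by positivity)]
    congr 1
    field_simp
  have h1 : a ^ (-δ) - (a + u) ^ (-δ) = a ^ (-δ) * (1 - (1 + u / a) ^ (-δ)) := by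
    rw [hsplit]; ring
  have h2 : 1 - (1 + u / a) ^ (-δ) ≤ min 1 (δ * (u / a)) := by
    refine le_min ?_ ?_
    · have : (0:ℝ) ≤ (1 + u / a) ^ (-δ) := rpow_nonneg (by linarith) _
      linarith
    · have := aux_bern hδ hva
      linarith
  have h3 : min 1 (δ * (u / a)) ≤ (δ * (u / a)) ^ p := aux_min hp0 hp1 (by positivity)
  have h4 : (δ * (u / a)) ^ p = δ ^ p * u ^ p * a ^ (-p) := by
    rw [mul_rpow hδ.le hva, div_rpow hu ha0.le, div_eq_mul_inv, ← rpow_neg ha0.le, mul_assoc]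
  have h5 : a ^ (-δ) * (δ ^ p * u ^ p * a ^ (-p)) = δ ^ p * a ^ (-(δ + p)) * u ^ p := by
    rw [show -(δ + p) = -δ + -p by ring, rpow_add ha0]
    ring
  calc a ^ (-δ) - (a + u) ^ (-δ) = a ^ (-δ) * (1 - (1 + u / a) ^ (-δ)) := h1
    _ ≤ a ^ (-δ) * (δ * (u / a)) ^ p := by
        refine mul_le_mul_of_nonneg_left (h2.trans h3) (rpow_nonneg ha0.le _)
    _ = δ ^ p * a ^ (-(δ + p)) * u ^ p := by rw [h4]; exact h5
open Real

lemma aux_pointwise {p δ z xt xt1 : ℝ} (hp0 : 0 < p) (hp1 : p ≤ 1) (hδ : 0 < δ)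
    (hxt : z < xt) :
    (1 - (1 + xt - z) ^ (-δ)) * (if xt1 ≤ z then (1:ℝ) else 0)
      - δ ^ p * (1 + xt - z) ^ (-(δ + p)) * (max (xt1 - xt) 0) ^ p
    ≤ (if xt1 ≤ z then (1:ℝ) else (1 + xt1 - z) ^ (-δ))
      - (if xt ≤ z then (1:ℝ) else (1 + xt - z) ^ (-δ)) := by
  have ha1 : (1:ℝ) ≤ 1 + xt - z := by linarith
  have ha0 : (0:ℝ) < 1 + xt - z := by linarith
  rw [if_neg (not_le.mpr hxt)]
  by_cases h1 : xt1 ≤ z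
  · rw [if_pos h1, if_pos h1]
    have hmax : max (xt1 - xt) 0 = 0 := max_eq_right (by linarith)
    rw [hmax, zero_rpow hp0.ne']
    ring_nf
    linarith [rpow_nonneg ha0.le (-δ)]
  · rw [if_neg h1, if_neg h1]
    push_neg at h1
    have hb0 : (0:ℝ) < 1 + xt1 - z := by linarith
    rcases le_or_gt xt1 xt with hle | hlt
    · have hmax : max (xt1 - xt) 0 = 0 := max_eq_right (by linarith)
      rw [hmax, zero_rpow hp0.ne']
      have : (1 + xt - z) ^ (-δ) ≤ (1 + xt1 - z) ^ (-δ) :=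
        rpow_le_rpow_of_nonpos hb0 (by linarith) (by linarith)
      linarith
    · have hmax : max (xt1 - xt) 0 = xt1 - xt := max_eq_left (by linarith)
      rw [hmax]
      have hkey := aux_key hp0 hp1 hδ ha1 (le_of_lt (by linarith : (0:ℝ) < xt1 - xt))
      have hab : 1 + xt1 - z = (1 + xt - z) + (xt1 - xt) := by ring
      rw [hab]
      linarith
open MeasureTheory Filter

set_option maxHeartbeats 1000000 in
/-- Local submartingale condition for
`f_{z,δ}(y) = 1` for `y ≤ z`, `(1+y-z)^{-δ}` for `y > z` (Lemma 5 of the paper). -/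
theorem stmt8
    {Ω : Type*} {m0 : MeasurableSpace Ω} {μ : Measure Ω} [IsProbabilityMeasure μ]
    (F : Filtration ℕ m0) (X : ℕ → Ω → ℝ) (hadapted : Adapted F X)
    (α β c C x₀ : ℝ) (hα : α ∈ Set.Ioo (0:ℝ) 1) (hβ : α < β) (hc : 0 < c)
    (hposint : ∀ t, Integrable (fun ω => (max (X (t + 1) ω - X t ω) 0) ^ α) μ)
    (hpos : ∀ t, ∀ᵐ ω ∂μ,
      (μ[fun ω' => (max (X (t + 1) ω' - X t ω') 0) ^ α|F t]) ω ≤ C)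
    (hneg : ∀ t, ∀ x, x₀ ≤ x → ∀ᵐ ω ∂μ,
      c * x ^ (-β) ≤ (μ[Set.indicator
        {ω' | x ≤ max (-(X (t + 1) ω' - X t ω')) 0} (fun _ => (1:ℝ))|F t]) ω)
    (δ : ℝ) (hδ : β - α < δ) :
    ∃ A > (0:ℝ), ∀ z : ℝ, ∀ t, ∀ᵐ ω ∂μ, z + A < X t ω →
      0 ≤ (μ[fun ω' =>
          (if X (t + 1) ω' ≤ z then (1:ℝ) else (1 + X (t + 1) ω' - z) ^ (-δ))
          - (if X t ω' ≤ z then (1:ℝ) else (1 + X t ω' - z) ^ (-δ))|F t]) ω := by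
  obtain ⟨hα0, hα1⟩ := hα
  have hδ0 : 0 < δ := by linarith
  have hβ0 : 0 < β := by linarith
  have hε0 : 0 < δ + α - β := by linarith
  set C' : ℝ := max C 1 with hC'def
  have hC'1 : (1:ℝ) ≤ C' := le_max_right _ _
  have hC'0 : (0:ℝ) < C' := by linarith
  have hCC' : C ≤ C' := le_max_left _ _
  set K : ℝ := 2 * δ ^ α * C' / c with hKdef
  have hK0 : 0 < K := by positivity
  set A : ℝ := max (max x₀ 1) (max (K ^ (δ + α - β)⁻¹) ((2:ℝ) ^ δ⁻¹)) with hAdef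
  have hA1 : (1:ℝ) ≤ A := le_trans (le_max_right x₀ 1) (le_max_left _ _)
  have hAx₀ : max x₀ 1 ≤ A := le_max_left _ _
  have hAK : K ^ (δ + α - β)⁻¹ ≤ A := le_trans (le_max_left _ _) (le_max_right _ _)
  have hA2 : (2:ℝ) ^ δ⁻¹ ≤ A := le_trans (le_max_right _ _) (le_max_right _ _)
  refine ⟨A, by linarith, fun z t => ?_⟩
  haveI hSF : SigmaFinite (μ.trim (F.le t)) := inferInstance
  -- measurability
  have hXtF : Measurable[F t] (X t) := (hadapted t)
  have hXt : Measurable (X t) := hXtF.mono (F.le t) le_rfl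
  have hXt1 : Measurable (X (t + 1)) := (hadapted (t + 1)).mono (F.le (t + 1)) le_rfl
  -- definitions
  set g : Ω → ℝ := fun ω' =>
      (if X (t + 1) ω' ≤ z then (1:ℝ) else (1 + X (t + 1) ω' - z) ^ (-δ))
      - (if X t ω' ≤ z then (1:ℝ) else (1 + X t ω' - z) ^ (-δ)) with hgdef
  set S : Set Ω := {ω' | z + A < X t ω'} with hSdef
  have hSmeasF : MeasurableSet[F t] S := hXtF measurableSet_Ioi
  have hSmeas : MeasurableSet S := (F.le t) S hSmeasF
  set E : Set Ω := {ω' | X (t + 1) ω' ≤ z} with hEdef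
  have hEmeas : MeasurableSet E := hXt1 measurableSet_Iic
  set indS : Ω → ℝ := S.indicator (fun _ => (1:ℝ)) with hindSdef
  set indE : Ω → ℝ := E.indicator (fun _ => (1:ℝ)) with hindEdef
  set dpa : Ω → ℝ := fun ω' => (max (X (t + 1) ω' - X t ω') 0) ^ α with hdpadef
  set c₁ : Ω → ℝ := S.indicator (fun ω' => 1 - (1 + X t ω' - z) ^ (-δ)) with hc₁def
  set c₂ : Ω → ℝ := S.indicator (fun ω' => δ ^ α * (1 + X t ω' - z) ^ (-(δ + α))) with hc₂def
  -- basic facts about f-values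
  have hfval : ∀ y : ℝ, 0 ≤ (if y ≤ z then (1:ℝ) else (1 + y - z) ^ (-δ)) ∧
      (if y ≤ z then (1:ℝ) else (1 + y - z) ^ (-δ)) ≤ 1 := by
    intro y
    by_cases h : y ≤ z
    · simp [h]
    · push_neg at h
      rw [if_neg (not_le.mpr h)]
      constructor
      · exact Real.rpow_nonneg (by linarith) _
      · exact Real.rpow_le_one_of_one_le_of_nonpos (by linarith) (by linarith)
  -- measurability of pieces
  have hrmeas : Measurable (fun y : ℝ => if y ≤ z then (1:ℝ) else (1 + y - z) ^ (-δ)) := by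
    refine Measurable.ite measurableSet_Iic measurable_const ?_
    fun_prop
  have hgmeas : Measurable g := (hrmeas.comp hXt1).sub (hrmeas.comp hXt)
  have hgbdd : ∀ ω', ‖g ω'‖ ≤ 1 := by
    intro ω'
    have h1 := hfval (X (t + 1) ω')
    have h2 := hfval (X t ω')
    simp only [hgdef, Real.norm_eq_abs]
    rw [abs_le]
    constructor <;> [linarith [h1.1, h2.2]; linarith [h1.2, h2.1]]
  have hgint : Integrable g μ := by
    refine Integrable.mono' (integrable_const 1) hgmeas.aestronglyMeasurable ?_
    exact Eventually.of_forall hgbdd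
  have hindSmeasF : Measurable[F t] indS := measurable_const.indicator hSmeasF
  have hindSsm : StronglyMeasurable[F t] indS := hindSmeasF.stronglyMeasurable
  have hindSbdd : ∀ ω', ‖indS ω'‖ ≤ 1 := by
    intro ω'
    simp only [hindSdef]
    by_cases h : ω' ∈ S <;> simp [Set.indicator_apply, h]
  have hindEint : Integrable indE μ := by
    refine Integrable.mono' (integrable_const 1) ?_ ?_
    · exact (measurable_const.indicator hEmeas).aestronglyMeasurable
    · refine Eventually.of_forall fun ω' => ?_
      by_cases h : ω' ∈ E <;> simp [hindEdef, Set.indicator_apply, h]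
  have haS : ∀ ω' ∈ S, (1:ℝ) + A < 1 + X t ω' - z := by
    intro ω' h
    have : z + A < X t ω' := h
    linarith
  have haS1 : ∀ ω' ∈ S, (1:ℝ) ≤ 1 + X t ω' - z := by
    intro ω' h
    have := haS ω' h
    linarith
  have hc₁measF : Measurable[F t] c₁ := by
    refine Measurable.indicator ?_ hSmeasF
    exact (by fun_prop : Measurable (fun y : ℝ => 1 - (1 + y - z) ^ (-δ))).comp hXtF
  have hc₂measF : Measurable[F t] c₂ := by
    refine Measurable.indicator ?_ hSmeasF
    exact (by fun_prop : Measurable (fun y : ℝ => δ ^ α * (1 + y - z) ^ (-(δ + α)))).comp hXtF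
  have hc₁bdd : ∀ ω', ‖c₁ ω'‖ ≤ 1 := by
    intro ω'
    by_cases h : ω' ∈ S
    · have h1 := haS1 ω' h
      have h2 : (0:ℝ) ≤ (1 + X t ω' - z) ^ (-δ) := Real.rpow_nonneg (by linarith) _
      have h3 : (1 + X t ω' - z) ^ (-δ) ≤ 1 :=
        Real.rpow_le_one_of_one_le_of_nonpos h1 (by linarith)
      simp only [hc₁def, Set.indicator_of_mem h, Real.norm_eq_abs]
      rw [abs_le]; constructor <;> linarith
    · simp [hc₁def, Set.indicator_of_notMem h]
  have hc₂bdd : ∀ ω', ‖c₂ ω'‖ ≤ δ ^ α := by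
    intro ω'
    by_cases h : ω' ∈ S
    · have h1 := haS1 ω' h
      have h2 : (0:ℝ) ≤ (1 + X t ω' - z) ^ (-(δ + α)) := Real.rpow_nonneg (by linarith) _
      have h3 : (1 + X t ω' - z) ^ (-(δ + α)) ≤ 1 :=
        Real.rpow_le_one_of_one_le_of_nonpos h1 (by linarith)
      have h4 : (0:ℝ) < δ ^ α := Real.rpow_pos_of_pos hδ0 _
      simp only [hc₂def, Set.indicator_of_mem h, Real.norm_eq_abs]
      rw [abs_le]
      constructor
      · nlinarith
      · nlinarith
    · simp only [hc₂def, Set.indicator_of_notMem h, norm_zero]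
      positivity
  have hψ₁int : Integrable (c₁ * indE) μ :=
    hindEint.bdd_mul ((hc₁measF.mono (F.le t) le_rfl).aestronglyMeasurable) (Eventually.of_forall hc₁bdd)
  have hψ₂int : Integrable (c₂ * dpa) μ :=
    (hposint t).bdd_mul ((hc₂measF.mono (F.le t) le_rfl).aestronglyMeasurable) (Eventually.of_forall hc₂bdd)
  have hgSint : Integrable (indS * g) μ :=
    hgint.bdd_mul ((hindSmeasF.mono (F.le t) le_rfl).aestronglyMeasurable) (Eventually.of_forall hindSbdd)
  -- pointwise inequality
  have hptwise : ∀ ω', (c₁ * indE) ω' - (c₂ * dpa) ω' ≤ (indS * g) ω' := by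
    intro ω'
    by_cases h : ω' ∈ S
    · have hz : z < X t ω' := by
        have : z + A < X t ω' := h
        linarith
      have := aux_pointwise hα0 hα1.le hδ0 hz (xt1 := X (t + 1) ω')
      simp only [Pi.mul_apply, hc₁def, hc₂def, hindSdef, hindEdef,
        Set.indicator_of_mem h, one_mul]
      have hEind : E.indicator (fun _ => (1:ℝ)) ω' = if X (t + 1) ω' ≤ z then (1:ℝ) else 0 := by
        by_cases hE : X (t + 1) ω' ≤ z
        · have hE' : ω' ∈ E := hE
          rw [Set.indicator_of_mem hE', if_pos hE]
        · have hE' : ω' ∉ E := hE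
          rw [Set.indicator_of_notMem hE', if_neg hE]
      rw [hEind]
      exact this
    · simp only [Pi.mul_apply, hc₁def, hc₂def, hindSdef,
        Set.indicator_of_notMem h, zero_mul, sub_zero, le_refl]
  -- conditional expectation chain
  have step1 : μ[c₁ * indE - c₂ * dpa|F t] ≤ᵐ[μ] μ[indS * g|F t] :=
    condExp_mono (hψ₁int.sub hψ₂int) hgSint (Eventually.of_forall fun ω' => hptwise ω')
  have step2 : μ[c₁ * indE - c₂ * dpa|F t] =ᵐ[μ] μ[c₁ * indE|F t] - μ[c₂ * dpa|F t] :=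
    condExp_sub hψ₁int hψ₂int _
  have step3 : μ[c₁ * indE|F t] =ᵐ[μ] c₁ * μ[indE|F t] :=
    condExp_stronglyMeasurable_mul_of_bound (F.le t) hc₁measF.stronglyMeasurable hindEint 1
      (Eventually.of_forall hc₁bdd)
  have step4 : μ[c₂ * dpa|F t] =ᵐ[μ] c₂ * μ[dpa|F t] :=
    condExp_stronglyMeasurable_mul_of_bound (F.le t) hc₂measF.stronglyMeasurable (hposint t)
      (δ ^ α) (Eventually.of_forall hc₂bdd)
  have step5 : μ[indS * g|F t] =ᵐ[μ] indS * μ[g|F t] :=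
    condExp_stronglyMeasurable_mul_of_bound (F.le t) hindSsm hgint 1
      (Eventually.of_forall hindSbdd)
  -- lower bound on μ[indE|F t] via rationals
  have hEq : ∀ᵐ ω ∂μ, ∀ q : ℚ, max x₀ 1 ≤ (q:ℝ) → X t ω ≤ z + q →
      c * (q:ℝ) ^ (-β) ≤ (μ[indE|F t]) ω := by
    rw [ae_all_iff]
    intro q
    by_cases hq' : max x₀ 1 ≤ (q:ℝ)
    swap
    · exact Eventually.of_forall fun ω h => absurd h hq'
    have hq1 : (1:ℝ) ≤ (q:ℝ) := le_trans (le_max_right _ _) hq'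
    set Eq : Set Ω := {ω' | (q:ℝ) ≤ max (-(X (t + 1) ω' - X t ω')) 0} with hEqdef
    have hEqmeas : MeasurableSet Eq := by
      have : Measurable (fun ω' => max (-(X (t + 1) ω' - X t ω')) 0) :=
        ((hXt1.sub hXt).neg).max measurable_const
      exact this measurableSet_Ici
    set Sq : Set Ω := {ω' | X t ω' ≤ z + q} with hSqdef
    have hSqmeasF : MeasurableSet[F t] Sq := hXtF measurableSet_Iic
    set indSq : Ω → ℝ := Sq.indicator (fun _ => (1:ℝ)) with hindSqdef
    set indEq : Ω → ℝ := Eq.indicator (fun _ => (1:ℝ)) with hindEqdef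
    have hindSqbdd : ∀ ω', ‖indSq ω'‖ ≤ 1 := by
      intro ω'
      by_cases h : ω' ∈ Sq <;> simp [hindSqdef, Set.indicator_apply, h]
    have hindEqint : Integrable indEq μ := by
      refine Integrable.mono' (integrable_const 1) ?_ ?_
      · exact (measurable_const.indicator hEqmeas).aestronglyMeasurable
      · refine Eventually.of_forall fun ω' => ?_
        by_cases h : ω' ∈ Eq <;> simp [hindEqdef, Set.indicator_apply, h]
    have hindSqsm : StronglyMeasurable[F t] indSq :=
      (measurable_const.indicator hSqmeasF).stronglyMeasurable
    have hAEmeas : AEStronglyMeasurable indSq μ :=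
      ((measurable_const.indicator hSqmeasF : Measurable[F t] indSq).mono
        (F.le t) le_rfl).aestronglyMeasurable
    have hptq : ∀ ω', (indSq * indEq) ω' ≤ (indSq * indE) ω' := by
      intro ω'
      by_cases hS : ω' ∈ Sq
      · by_cases hE : ω' ∈ Eq
        · have hωE : ω' ∈ E := by
            have h1 : (q:ℝ) ≤ max (-(X (t + 1) ω' - X t ω')) 0 := hE
            have h2 : X t ω' ≤ z + q := hS
            have h3 : (q:ℝ) ≤ -(X (t + 1) ω' - X t ω') := by
              rcases le_or_gt (q:ℝ) (-(X (t + 1) ω' - X t ω')) with h | h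
              · exact h
              · exfalso
                have : max (-(X (t + 1) ω' - X t ω')) 0 ≤ max (q:ℝ) 0 :=
                  max_le_max h.le le_rfl
                rw [max_eq_left (by linarith : (0:ℝ) ≤ (q:ℝ))] at this
                have hq0 : (0:ℝ) < (q:ℝ) := by linarith
                rcases max_cases (-(X (t + 1) ω' - X t ω')) 0 with ⟨he, _⟩ | ⟨he, _⟩ <;>
                  rw [he] at h1 <;> linarith
            show X (t + 1) ω' ≤ z
            linarith
          simp [Pi.mul_apply, hindSqdef, hindEqdef, hindEdef,
            Set.indicator_of_mem hS, Set.indicator_of_mem hE, Set.indicator_of_mem hωE]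
        · simp [Pi.mul_apply, hindSqdef, hindEqdef, hindEdef,
            Set.indicator_of_notMem hE, Set.indicator_apply]
          positivity
      · simp [Pi.mul_apply, hindSqdef, Set.indicator_of_notMem hS]
    have hint1 : Integrable (indSq * indEq) μ := hindEqint.bdd_mul hAEmeas (Eventually.of_forall hindSqbdd)
    have hint2 : Integrable (indSq * indE) μ := hindEint.bdd_mul hAEmeas (Eventually.of_forall hindSqbdd)
    have hm1 : μ[indSq * indEq|F t] ≤ᵐ[μ] μ[indSq * indE|F t] :=
      condExp_mono hint1 hint2 (Eventually.of_forall hptq)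
    have hm2 : μ[indSq * indEq|F t] =ᵐ[μ] indSq * μ[indEq|F t] :=
      condExp_stronglyMeasurable_mul_of_bound (F.le t) hindSqsm hindEqint 1
        (Eventually.of_forall hindSqbdd)
    have hm3 : μ[indSq * indE|F t] =ᵐ[μ] indSq * μ[indE|F t] :=
      condExp_stronglyMeasurable_mul_of_bound (F.le t) hindSqsm hindEint 1
        (Eventually.of_forall hindSqbdd)
    have hm4 := hneg t (q:ℝ) (le_trans (le_max_left _ _) hq')
    filter_upwards [hm1, hm2, hm3, hm4] with ω h1 h2 h3 h4
    intro _hq' hωSq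
    have hmem : ω ∈ Sq := hωSq
    have e2 : (indSq * μ[indEq|F t]) ω = (μ[indEq|F t]) ω := by
      simp [Pi.mul_apply, hindSqdef, Set.indicator_of_mem hmem]
    have e3 : (indSq * μ[indE|F t]) ω = (μ[indE|F t]) ω := by
      simp [Pi.mul_apply, hindSqdef, Set.indicator_of_mem hmem]
    have : (μ[indEq|F t]) ω ≤ (μ[indE|F t]) ω := by
      rw [← e2, ← e3, ← h2, ← h3]; exact h1
    exact le_trans h4 this
  -- final combination
  filter_upwards [step1, step2, step3, step4, step5, hpos t, hEq] with ω h1 h2 h3 h4 h5 h6 h7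
  intro hωS
  have hmemS : ω ∈ S := hωS
  set a : ℝ := 1 + X t ω - z with hadef
  have ha0 : (0:ℝ) < a := by
    have := haS ω hmemS
    linarith
  have haA : 1 + A < a := haS ω hmemS
  -- bound μ[indE|F] ω from below
  obtain ⟨q, hq1, hq2⟩ := exists_rat_btwn (show a - 1 < a by linarith)
  have hqx : max x₀ 1 ≤ (q:ℝ) := by
    have : max x₀ 1 ≤ A := hAx₀
    linarith
  have hq0 : (0:ℝ) < (q:ℝ) := by
    have : (1:ℝ) ≤ A := hA1
    linarith
  have hmE : c * a ^ (-β) ≤ (μ[indE|F t]) ω := by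
    have h := h7 q hqx (by linarith : X t ω ≤ z + q)
    have : a ^ (-β) ≤ (q:ℝ) ^ (-β) :=
      Real.rpow_le_rpow_of_nonpos hq0 hq2.le (by linarith)
    nlinarith [Real.rpow_nonneg ha0.le (-β)]
  have hmEnn : (0:ℝ) ≤ (μ[indE|F t]) ω := by
    have : (0:ℝ) ≤ c * a ^ (-β) := by positivity
    linarith
  -- c₁ ω and c₂ ω values
  have hc₁ω : c₁ ω = 1 - a ^ (-δ) := by
    simp [hc₁def, Set.indicator_of_mem hmemS, hadef]
  have hc₂ω : c₂ ω = δ ^ α * a ^ (-(δ + α)) := by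
    simp [hc₂def, Set.indicator_of_mem hmemS, hadef]
  -- a^{-δ} ≤ 1/2
  have hhalf : a ^ (-δ) ≤ 1 / 2 := by
    have h2a : (2:ℝ) ^ δ⁻¹ ≤ a := by linarith [hA2]
    have hp : ((2:ℝ) ^ δ⁻¹) ^ δ ≤ a ^ δ :=
      Real.rpow_le_rpow (by positivity) h2a hδ0.le
    rw [← Real.rpow_mul (by norm_num) δ⁻¹ δ, inv_mul_cancel₀ hδ0.ne', Real.rpow_one] at hp
    rw [Real.rpow_neg ha0.le]
    have hap : (0:ℝ) < a ^ δ := Real.rpow_pos_of_pos ha0 _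
    rw [inv_le_comm₀ hap (by norm_num)]
    norm_num
    linarith
  -- key numeric inequality: δ^α * a^{-(δ+α)} * C' ≤ c/2 * a^{-β}
  have hkeynum : δ ^ α * a ^ (-(δ + α)) * C' ≤ c / 2 * a ^ (-β) := by
    have hKa : K ^ (δ + α - β)⁻¹ ≤ a := by linarith [hAK]
    have hKp : (0:ℝ) ≤ K ^ (δ + α - β)⁻¹ := Real.rpow_nonneg hK0.le _
    have hεa : K ≤ a ^ (δ + α - β) := by
      have := Real.rpow_le_rpow hKp hKa hε0.le
      rwa [← Real.rpow_mul hK0.le, inv_mul_cancel₀ hε0.ne', Real.rpow_one] at this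
    have hsplit : a ^ (-(δ + α)) = a ^ (-β) * (a ^ (δ + α - β))⁻¹ := by
      rw [← Real.rpow_neg ha0.le (δ + α - β), ← Real.rpow_add ha0]
      congr 1; ring
    rw [hsplit]
    have haε : (0:ℝ) < a ^ (δ + α - β) := Real.rpow_pos_of_pos ha0 _
    have hinv : (a ^ (δ + α - β))⁻¹ ≤ K⁻¹ := by
      exact inv_anti₀ hK0 hεa
    have hδα : (0:ℝ) < δ ^ α := Real.rpow_pos_of_pos hδ0 _
    have hβa : (0:ℝ) ≤ a ^ (-β) := Real.rpow_nonneg ha0.le _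
    have hKinv : δ ^ α * C' * K⁻¹ = c / 2 := by
      rw [hKdef]
      field_simp
    calc δ ^ α * (a ^ (-β) * (a ^ (δ + α - β))⁻¹) * C'
        ≤ δ ^ α * (a ^ (-β) * K⁻¹) * C' := by
          have h' : a ^ (-β) * (a ^ (δ + α - β))⁻¹ ≤ a ^ (-β) * K⁻¹ :=
            mul_le_mul_of_nonneg_left hinv hβa
          exact mul_le_mul_of_nonneg_right (mul_le_mul_of_nonneg_left h' hδα.le) hC'0.le
      _ = c / 2 * a ^ (-β) := by
          rw [← hKinv]; ring
  -- assemble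
  have e5 : (indS * μ[g|F t]) ω = (μ[g|F t]) ω := by
    simp [hindSdef, Set.indicator_of_mem hmemS]
  have hfinal : (0:ℝ) ≤ c₁ ω * (μ[indE|F t]) ω - c₂ ω * (μ[dpa|F t]) ω := by
    have hd1 : (0:ℝ) ≤ 1 - a ^ (-δ) := by linarith
    have hub : c₂ ω * (μ[dpa|F t]) ω ≤ δ ^ α * a ^ (-(δ + α)) * C' := by
      rw [hc₂ω]
      have hpos2 : (0:ℝ) ≤ δ ^ α * a ^ (-(δ + α)) := by positivity
      have : (μ[dpa|F t]) ω ≤ C' := le_trans h6 hCC'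
      exact mul_le_mul_of_nonneg_left this hpos2
    have hlb : c / 2 * a ^ (-β) ≤ c₁ ω * (μ[indE|F t]) ω := by
      rw [hc₁ω]
      have h1' : c * a ^ (-β) ≤ (μ[indE|F t]) ω := hmE
      have h2' : (1:ℝ) / 2 ≤ 1 - a ^ (-δ) := by linarith
      have hnn : (0:ℝ) ≤ c * a ^ (-β) := by positivity
      calc c / 2 * a ^ (-β) = 1 / 2 * (c * a ^ (-β)) := by ring
        _ ≤ (1 - a ^ (-δ)) * (c * a ^ (-β)) := mul_le_mul_of_nonneg_right h2' hnn
        _ ≤ (1 - a ^ (-δ)) * (μ[indE|F t]) ω := mul_le_mul_of_nonneg_left h1' hd1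
    linarith
  have hω : (0:ℝ) ≤ (μ[indS * g|F t]) ω := by
    have e2 : (μ[c₁ * indE - c₂ * dpa|F t]) ω
        = c₁ ω * (μ[indE|F t]) ω - c₂ ω * (μ[dpa|F t]) ω := by
      rw [h2, Pi.sub_apply, h3, h4, Pi.mul_apply, Pi.mul_apply]
    linarith [h1, hfinal]
  rw [h5, e5] at hω
  exact hω
end

section
/- Let (X_t)_{t∈ℤ⁺} be adapted to (F_t), X_0 = 0, with increments Δ_t. Fix α ∈ (0,1), β > α, and suppose there exist C < ∞, c > 0, x₀ < ∞ such that E[(Δ_t⁻)^β | F_t] ≤ C a.s. for all t, and P[Δ_t⁺ > x | F_t] ≥ c x^{−α} a.s. for all x ≥ x₀ and all t. Then for any ε > 0, almost surely, X_t ≥ t^{1/α} (log t)^{−(1/α)−ε} for all but finitely many t ∈ ℤ⁺. -/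
open MeasureTheory Filter

lemma aux_geom_poly {b : ℝ} (p : ℝ) (hb : 0 < b) :
    Tendsto (fun k : ℕ => (2:ℝ)^(b*k) * (k:ℝ)^(-p)) atTop atTop := by
  have h2 : (0:ℝ) < Real.log 2 := Real.log_pos one_lt_two
  have hc : (0:ℝ) < b * Real.log 2 / (2 * (|p| + 1)) := by positivity
  have hev := Real.isLittleO_log_id_atTop.def hc
  have hlog : Tendsto (fun x : ℝ => b * Real.log 2 * x - p * Real.log x) atTop atTop := by
    apply tendsto_atTop_mono' _ _ (tendsto_id.const_mul_atTop (by positivity :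
      (0:ℝ) < b * Real.log 2 / 2))
    filter_upwards [hev, eventually_ge_atTop (1:ℝ)] with x hx hx1
    have hxpos : (0:ℝ) < x := lt_of_lt_of_le one_pos hx1
    have h1 : p * Real.log x ≤ |p| * |Real.log x| := by
      calc p * Real.log x ≤ |p * Real.log x| := le_abs_self _
      _ = |p| * |Real.log x| := abs_mul _ _
    have h2' : |Real.log x| ≤ b * Real.log 2 / (2 * (|p| + 1)) * x := by
      simpa [abs_of_pos hxpos] using hx
    have h3 : |p| * |Real.log x| ≤ |p| * (b * Real.log 2 / (2 * (|p| + 1)) * x) :=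
      mul_le_mul_of_nonneg_left h2' (abs_nonneg p)
    have h4 : |p| * (b * Real.log 2 / (2 * (|p| + 1)) * x) ≤ b * Real.log 2 / 2 * x := by
      have heq : |p| * (b * Real.log 2 / (2 * (|p| + 1)) * x)
          = (|p| / (|p| + 1)) * (b * Real.log 2 / 2 * x) := by
        field_simp
      have hd : |p| / (|p| + 1) ≤ 1 := by
        rw [div_le_one (by positivity)]; linarith [abs_nonneg p]
      rw [heq]
      exact mul_le_of_le_one_left (by positivity) hd
    have : p * Real.log x ≤ b * Real.log 2 / 2 * x := le_trans h1 (le_trans h3 h4)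
    simp only [id_eq]
    nlinarith
  have := (Real.tendsto_exp_atTop.comp hlog).comp tendsto_natCast_atTop_atTop (α := ℕ)
  apply this.congr'
  filter_upwards [eventually_ge_atTop (1:ℕ)] with k hk
  have hkpos : (0:ℝ) < (k:ℝ) := by exact_mod_cast hk
  simp only [Function.comp_apply]
  rw [Real.rpow_def_of_pos two_pos, Real.rpow_def_of_pos hkpos, ← Real.exp_add]
  ring_nf


lemma ennreal_sum_rpow_le {ι : Type*} (s : Finset ι) (f : ι → ENNReal) {p : ℝ}
    (hp0 : 0 < p) (hp1 : p ≤ 1) :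
    (∑ i ∈ s, f i) ^ p ≤ ∑ i ∈ s, f i ^ p := by
  induction s using Finset.cons_induction with
  | empty => simp [ENNReal.zero_rpow_of_pos hp0]
  | cons a s ha ih =>
    rw [Finset.sum_cons, Finset.sum_cons]
    calc (f a + ∑ i ∈ s, f i) ^ p ≤ f a ^ p + (∑ i ∈ s, f i) ^ p :=
          ENNReal.rpow_add_le_add_rpow _ _ hp0.le hp1
    _ ≤ _ := by gcongr

lemma block_bound {Ω : Type*} {m0 : MeasurableSpace Ω} {μ : Measure Ω} [IsProbabilityMeasure μ]
    (F : Filtration ℕ m0) (A : ℕ → Set Ω) (hA : ∀ s, MeasurableSet[F (s+1)] (A s))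
    (q : ℝ) (hq1 : q ≤ 1)
    (hcond : ∀ s, (μ[(A s).indicator (fun _ => (1:ℝ))|F s]) ≤ᵐ[μ] fun _ => 1 - q)
    (a : ℕ) :
    ∀ n : ℕ, ∫ ω, (⋂ s ∈ Finset.range n, A (a + s)).indicator (fun _ => (1:ℝ)) ω ∂μ
      ≤ (1 - q)^n := by
  have hAm0 : ∀ s, MeasurableSet (A s) := fun s => F.le (s+1) _ (hA s)
  intro n
  induction n with
  | zero => simp
  | succ n ih =>
    set B : Set Ω := ⋂ s ∈ Finset.range n, A (a + s) with hB
    have hBsucc : (⋂ s ∈ Finset.range (n+1), A (a + s)) = B ∩ A (a + n) := by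
      rw [Finset.range_add_one]
      simp [Set.biInter_insert, Set.inter_comm, hB]
    have hBmeas : MeasurableSet[F (a + n)] B := by
      apply MeasurableSet.biInter (Finset.range n).countable_toSet
      intro s hs
      simp only [Finset.coe_range, Set.mem_Iio] at hs
      exact F.mono (by omega) _ (hA (a + s))
    have hBm0 : MeasurableSet B := F.le (a+n) _ hBmeas
    set f : Ω → ℝ := B.indicator (fun _ => (1:ℝ)) with hf
    set g : Ω → ℝ := (A (a+n)).indicator (fun _ => (1:ℝ)) with hg
    have hfg : (⋂ s ∈ Finset.range (n+1), A (a + s)).indicator (fun _ => (1:ℝ)) = f * g := by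
      rw [hBsucc, hf, hg]
      have := Set.inter_indicator_one (M₀ := ℝ) (s := B) (t := A (a+n))
      simpa [Pi.one_def] using this
    have hfsm : StronglyMeasurable[F (a+n)] f :=
      stronglyMeasurable_const.indicator hBmeas
    have hgint : Integrable g μ := (integrable_const (1:ℝ)).indicator (hAm0 (a+n))
    have hfgint : Integrable (f * g) μ := by
      rw [← hfg, hBsucc]
      exact (integrable_const (1:ℝ)).indicator (hBm0.inter (hAm0 (a+n)))
    have hkey : μ[f * g|F (a+n)] =ᵐ[μ] f * μ[g|F (a+n)] :=
      condExp_mul_of_stronglyMeasurable_left hfsm hfgint hgint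
    have hfnonneg : ∀ ω, 0 ≤ f ω := fun ω => Set.indicator_nonneg (fun _ _ => zero_le_one) ω
    have hfbd : ∀ ω, ‖f ω‖ ≤ 1 := by
      intro ω
      rw [hf, Real.norm_eq_abs]
      rcases Set.indicator_eq_zero_or_self B (fun _ => (1:ℝ)) ω with h | h <;> simp [h]
    have hfint : Integrable f μ := (integrable_const (1:ℝ)).indicator hBm0
    calc ∫ ω, (⋂ s ∈ Finset.range (n+1), A (a + s)).indicator (fun _ => (1:ℝ)) ω ∂μ
        = ∫ ω, (f * g) ω ∂μ := by rw [hfg]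
      _ = ∫ ω, (μ[f * g|F (a+n)]) ω ∂μ := (integral_condExp (F.le (a+n))).symm
      _ = ∫ ω, (f * μ[g|F (a+n)]) ω ∂μ := integral_congr_ae hkey
      _ ≤ ∫ ω, f ω * (1 - q) ∂μ := by
          apply integral_mono_ae
          · exact integrable_condExp.bdd_mul
              ((hfsm.mono (F.le (a+n))).aestronglyMeasurable) (c := 1) (Filter.Eventually.of_forall hfbd)
          · exact hfint.mul_const _
          · filter_upwards [hcond (a+n)] with ω hω
            exact mul_le_mul_of_nonneg_left hω (hfnonneg ω)
      _ = (1 - q) * ∫ ω, f ω ∂μ := by rw [integral_mul_const]; ring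
      _ ≤ (1 - q) * (1 - q)^n := by
          apply mul_le_mul_of_nonneg_left ih (by linarith)
      _ = (1 - q)^(n+1) := by ring


lemma block_bound_measure {Ω : Type*} {m0 : MeasurableSpace Ω} {μ : Measure Ω}
    [IsProbabilityMeasure μ]
    (F : Filtration ℕ m0) (A : ℕ → Set Ω) (hA : ∀ s, MeasurableSet[F (s+1)] (A s))
    (q : ℝ) (hq1 : q ≤ 1)
    (hcond : ∀ s, (μ[(A s).indicator (fun _ => (1:ℝ))|F s]) ≤ᵐ[μ] fun _ => 1 - q)
    (a n : ℕ) :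
    μ (⋂ s ∈ Finset.range n, A (a + s)) ≤ ENNReal.ofReal ((1 - q)^n) := by
  have hBm0 : MeasurableSet (⋂ s ∈ Finset.range n, A (a + s)) := by
    apply MeasurableSet.biInter (Finset.range n).countable_toSet
    exact fun s _ => F.le _ _ (hA (a + s))
  have h1 := block_bound F A hA q hq1 hcond a n
  have h2 : ∫ ω, (⋂ s ∈ Finset.range n, A (a + s)).indicator (fun _ => (1:ℝ)) ω ∂μ
      = (μ (⋂ s ∈ Finset.range n, A (a + s))).toReal := integral_indicator_one hBm0
  rw [h2] at h1
  exact (ENNReal.le_ofReal_iff_toReal_le (measure_ne_top μ _)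
    (pow_nonneg (by linarith) n)).mpr h1

set_option maxHeartbeats 1600000 in
/-- Almost-sure rate of escape (Theorem 3 of the paper): under a `β`-moment bound
on the negative parts and a conditional lower tail bound
`P[Δ_t⁺ > x|F_t] ≥ c x^{-α}`, a.s. for all but finitely many `t`,
`X_t ≥ t^{1/α} (log t)^{-(1/α)-ε}`. -/
theorem stmt11
    {Ω : Type*} {m0 : MeasurableSpace Ω} {μ : Measure Ω} [IsProbabilityMeasure μ]
    (F : Filtration ℕ m0) (X : ℕ → Ω → ℝ) (hadapted : Adapted F X)
    (hX0 : ∀ ω, X 0 ω = 0)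
    (α β c C x₀ : ℝ) (hα : α ∈ Set.Ioo (0:ℝ) 1) (hβ : α < β) (hc : 0 < c)
    (hnegint : ∀ t, Integrable (fun ω => (max (-(X (t + 1) ω - X t ω)) 0) ^ β) μ)
    (hneg : ∀ t, ∀ᵐ ω ∂μ,
      (μ[fun ω' => (max (-(X (t + 1) ω' - X t ω')) 0) ^ β|F t]) ω ≤ C)
    (htail : ∀ t, ∀ x, x₀ ≤ x → ∀ᵐ ω ∂μ,
      c * x ^ (-α) ≤ (μ[Set.indicator {ω' | x < max (X (t + 1) ω' - X t ω') 0}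
        (fun _ => (1:ℝ))|F t]) ω)
    (ε : ℝ) (hε : 0 < ε) :
    ∀ᵐ ω ∂μ, ∀ᶠ t : ℕ in atTop,
      (t:ℝ) ^ (1/α) * (Real.log t) ^ (-(1/α) - ε) ≤ X t ω := by
  obtain ⟨hα0, hα1⟩ := hα
  have hXsm : ∀ t, StronglyMeasurable (X t) := fun t => ((hadapted t).mono (F.le t) le_rfl).stronglyMeasurable
  -- increments
  set Dp : ℕ → Ω → ℝ := fun t ω => max (X (t+1) ω - X t ω) 0 with hDpdef
  set Dn : ℕ → Ω → ℝ := fun t ω => max (-(X (t+1) ω - X t ω)) 0 with hDndef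
  have hDnm : ∀ t, Measurable (Dn t) :=
    fun t => (((hXsm (t+1)).measurable.sub (hXsm t).measurable).neg.max measurable_const)
  have hDpFm : ∀ s, Measurable[F (s+1)] (Dp s) := fun s =>
    (((hadapted (s+1)).sub
      (((hadapted s).mono (F.mono (Nat.le_succ s)) le_rfl))).max measurable_const)
  have hDnnonneg : ∀ t ω, 0 ≤ Dn t ω := fun t ω => le_max_right _ _
  have hDpnonneg : ∀ t ω, 0 ≤ Dp t ω := fun t ω => le_max_right _ _
  -- exponents and constants
  set β' : ℝ := min β 1 with hβ'def
  have hβ'pos : 0 < β' := lt_min (lt_trans hα0 hβ) one_pos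
  have hβ'le1 : β' ≤ 1 := min_le_right _ _
  have hβ'β : β' ≤ β := min_le_left _ _
  have hαβ' : α < β' := lt_min hβ hα1
  have hintC : ∀ t, ∫ ω, (Dn t ω) ^ β ∂μ ≤ C := by
    intro t
    have h1 : ∫ ω, (μ[fun ω' => (max (-(X (t + 1) ω' - X t ω')) 0) ^ β|F t]) ω ∂μ
        ≤ ∫ _ω, C ∂μ := integral_mono_ae integrable_condExp (integrable_const C) (hneg t)
    rw [integral_condExp (F.le t)] at h1
    simp only [integral_const, measure_univ, probReal_univ, ENNReal.toReal_one, smul_eq_mul, one_mul] at h1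
    exact h1
  have hC0 : 0 ≤ C := by
    have h0 : 0 ≤ ∫ ω, (Dn 0 ω) ^ β ∂μ := integral_nonneg fun ω =>
      Real.rpow_nonneg (hDnnonneg 0 ω) β
    linarith [hintC 0]
  -- Step A: per-step moment bound
  have hnegint' : ∀ t, Integrable (fun ω => (Dn t ω) ^ β) μ := fun t => hnegint t
  have hstepA : ∀ t, ∫⁻ ω, ENNReal.ofReal ((Dn t ω) ^ β') ∂μ ≤ ENNReal.ofReal (1 + C) := by
    intro t
    have hpt : ∀ ω, (Dn t ω) ^ β' ≤ 1 + (Dn t ω) ^ β := by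
      intro ω
      rcases le_or_gt (Dn t ω) 1 with h | h
      · have h1 := Real.rpow_le_one (hDnnonneg t ω) h hβ'pos.le
        have h2 : 0 ≤ (Dn t ω) ^ β := Real.rpow_nonneg (hDnnonneg t ω) β
        linarith
      · have h1 := Real.rpow_le_rpow_of_exponent_le h.le hβ'β
        linarith
    have hint : Integrable (fun ω => 1 + (Dn t ω) ^ β) μ :=
      (integrable_const (1:ℝ)).add (hnegint' t)
    calc ∫⁻ ω, ENNReal.ofReal ((Dn t ω) ^ β') ∂μ
        ≤ ∫⁻ ω, ENNReal.ofReal (1 + (Dn t ω) ^ β) ∂μ :=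
          lintegral_mono fun ω => ENNReal.ofReal_le_ofReal (hpt ω)
      _ = ENNReal.ofReal (∫ ω, (1 + (Dn t ω) ^ β) ∂μ) :=
          (ofReal_integral_eq_lintegral_ofReal hint
            (Filter.Eventually.of_forall fun ω => by positivity)).symm
      _ ≤ ENNReal.ofReal (1 + C) := by
          apply ENNReal.ofReal_le_ofReal
          rw [integral_add (integrable_const (1:ℝ)) (hnegint' t)]
          simp only [integral_const, measure_univ, probReal_univ, ENNReal.toReal_one, smul_eq_mul, one_mul]
          linarith [hintC t]
  -- cumulative negative part
  set N : ℕ → Ω → ℝ := fun t ω => ∑ s ∈ Finset.range t, Dn s ω with hNdef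
  have hNnonneg : ∀ t ω, 0 ≤ N t ω := fun t ω =>
    Finset.sum_nonneg fun s _ => hDnnonneg s ω
  have hNmono : ∀ {t t' : ℕ}, t ≤ t' → ∀ ω, N t ω ≤ N t' ω := by
    intro t t' h ω
    exact Finset.sum_le_sum_of_subset_of_nonneg (Finset.range_subset_range.mpr h)
      (fun s _ _ => hDnnonneg s ω)
  have hNlint : ∀ t : ℕ, ∫⁻ ω, (ENNReal.ofReal (N t ω)) ^ β' ∂μ
      ≤ (t : ENNReal) * ENNReal.ofReal (1 + C) := by
    intro t
    have hmeass : ∀ s : ℕ, Measurable fun ω => ENNReal.ofReal ((Dn s ω) ^ β') := by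
      intro s
      exact ENNReal.measurable_ofReal.comp ((Real.continuous_rpow_const hβ'pos.le).measurable.comp (hDnm s))
    have hptw : ∀ ω, (ENNReal.ofReal (N t ω)) ^ β'
        ≤ ∑ s ∈ Finset.range t, ENNReal.ofReal ((Dn s ω) ^ β') := by
      intro ω
      have hNω : N t ω = ∑ s ∈ Finset.range t, Dn s ω := rfl
      rw [hNω, ENNReal.ofReal_sum_of_nonneg (fun s _ => hDnnonneg s ω)]
      refine le_trans (ennreal_sum_rpow_le _ _ hβ'pos hβ'le1) ?_
      apply Finset.sum_le_sum
      intro s _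
      rcases eq_or_lt_of_le (hDnnonneg s ω) with h0 | h0
      · rw [← h0]
        simp [ENNReal.zero_rpow_of_pos hβ'pos, Real.zero_rpow hβ'pos.ne']
      · rw [ENNReal.ofReal_rpow_of_pos h0]
    calc ∫⁻ ω, (ENNReal.ofReal (N t ω)) ^ β' ∂μ
        ≤ ∫⁻ ω, ∑ s ∈ Finset.range t, ENNReal.ofReal ((Dn s ω) ^ β') ∂μ :=
          lintegral_mono hptw
      _ = ∑ s ∈ Finset.range t, ∫⁻ ω, ENNReal.ofReal ((Dn s ω) ^ β') ∂μ :=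
          lintegral_finset_sum _ (fun s _ => hmeass s)
      _ ≤ ∑ _s ∈ Finset.range t, ENNReal.ofReal (1 + C) :=
          Finset.sum_le_sum (fun s _ => hstepA s)
      _ = (t : ENNReal) * ENNReal.ofReal (1 + C) := by
          rw [Finset.sum_const, Finset.card_range, nsmul_eq_mul]
  -- parameters
  set a : ℝ := (1/α + 1/β')/2 with hadef
  have hinv : 1/β' < 1/α := one_div_lt_one_div_of_lt hα0 hαβ'
  have ha_lt : a < 1/α := by rw [hadef]; linarith
  have haβ' : 1 < a * β' := by
    rw [hadef]
    have h1 : (1/β') * β' = 1 := by field_simp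
    have h2 : 1 < (1/α) * β' := by
      calc 1 = (1/β') * β' := h1.symm
      _ < (1/α) * β' := by exact mul_lt_mul_of_pos_right hinv hβ'pos
    nlinarith
  have ha_pos : 0 < a := by rw [hadef]; positivity
  set lam : ℕ → ℝ := fun k => (2:ℝ) ^ (a * k) with hlamdef
  have hlampos : ∀ k, 0 < lam k := fun k => Real.rpow_pos_of_pos two_pos _
  set p' : ℝ := 1/α + ε/2 with hp'def
  set hfun : ℕ → ℝ := fun k => (2:ℝ) ^ ((1/α) * k) * (k:ℝ) ^ (-p') with hhfundef
  set q : ℕ → ℝ := fun k => c * (hfun k) ^ (-α) with hqdef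
  -- bad events
  set Ene : ℕ → Set Ω := fun j => {ω | lam j ≤ N (2^j) ω} with hEnedef
  set Eju : ℕ → Set Ω := fun j =>
    ⋂ s ∈ Finset.range (2^j), {ω | Dp (2^j + s) ω ≤ hfun j} with hEjudef
  -- negative-part bad event bound
  set rneg : ℝ := (2:ℝ) ^ (1 - a * β') with hrnegdef
  have hrneg_nonneg : 0 ≤ rneg := (Real.rpow_pos_of_pos two_pos _).le
  have hrneg_lt1 : rneg < 1 :=
    Real.rpow_lt_one_of_one_lt_of_neg one_lt_two (by linarith)
  have hEne_bound : ∀ j : ℕ, μ (Ene j) ≤ ENNReal.ofReal ((1 + C) * rneg ^ j) := by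
    intro j
    have hNm : Measurable (N (2^j)) := by
      have : N (2^j) = fun ω => ∑ s ∈ Finset.range (2^j), Dn s ω := rfl
      rw [this]
      exact Finset.measurable_sum _ (fun s _ => hDnm s)
    have hmeas : Measurable fun ω => (ENNReal.ofReal (N (2^j) ω)) ^ β' :=
      (ENNReal.measurable_ofReal.comp hNm).pow_const β' |>.mono le_rfl le_rfl
    set eps : ENNReal := (ENNReal.ofReal (lam j)) ^ β' with hepsdef
    have heps0 : eps ≠ 0 := by
      rw [hepsdef]
      exact (ENNReal.rpow_pos (ENNReal.ofReal_pos.mpr (hlampos j)) ENNReal.ofReal_ne_top).ne'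
    have hepstop : eps ≠ ⊤ := by
      rw [hepsdef]
      exact (ENNReal.rpow_lt_top_of_nonneg hβ'pos.le ENNReal.ofReal_ne_top).ne
    have hsub : Ene j ⊆ {ω | eps ≤ (ENNReal.ofReal (N (2^j) ω)) ^ β'} := by
      intro ω hω
      exact ENNReal.rpow_le_rpow (ENNReal.ofReal_le_ofReal hω) hβ'pos.le
    have hmark := mul_meas_ge_le_lintegral₀ (μ := μ)
      (f := fun ω => (ENNReal.ofReal (N (2^j) ω)) ^ β') hmeas.aemeasurable eps
    have h1 : eps * μ (Ene j) ≤ ((2^j : ℕ) : ENNReal) * ENNReal.ofReal (1 + C) :=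
      le_trans (le_trans (mul_le_mul_right (measure_mono hsub) eps) hmark) (hNlint (2^j))
    have h2 : μ (Ene j) ≤ ((2^j : ℕ) : ENNReal) * ENNReal.ofReal (1 + C) / eps := by
      rw [ENNReal.le_div_iff_mul_le (Or.inl heps0) (Or.inl hepstop), mul_comm]
      exact h1
    refine le_trans h2 (le_of_eq ?_)
    have hlamrpow : lam j ^ β' = (2:ℝ) ^ (a * j * β') := by
      rw [Real.rpow_mul two_pos.le]
    have hepseq : eps = ENNReal.ofReal ((2:ℝ) ^ (a * j * β')) := by
      rw [hepsdef, ENNReal.ofReal_rpow_of_pos (hlampos j), hlamrpow]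
    have hcast : ((2^j : ℕ) : ENNReal) = ENNReal.ofReal ((2:ℝ) ^ (j:ℝ)) := by
      rw [Real.rpow_natCast]
      push_cast
      rw [ENNReal.ofReal_pow two_pos.le]
      simp [ENNReal.ofReal_ofNat]
    rw [hepseq, hcast, ← ENNReal.ofReal_mul (by positivity),
      ← ENNReal.ofReal_div_of_pos (by positivity)]
    congr 1
    have hrnegj : rneg ^ j = (2:ℝ) ^ ((1 - a * β') * (j:ℝ)) := by
      rw [hrnegdef, ← Real.rpow_natCast ((2:ℝ)^(1 - a*β')) j, ← Real.rpow_mul two_pos.le]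
    rw [hrnegj, mul_comm ((2:ℝ) ^ ((j:ℝ))) (1+C), mul_div_assoc, ← Real.rpow_sub two_pos]
    congr 1
    ring_nf
  -- jump bad event bound
  have hjump_ev : ∀ᶠ k : ℕ in atTop, x₀ ≤ hfun k ∧ 1 ≤ hfun k ∧ 1 ≤ k := by
    have h1 := (aux_geom_poly p' (by positivity : (0:ℝ) < 1/α)).eventually_ge_atTop (max x₀ 1)
    filter_upwards [h1, eventually_ge_atTop 1] with k hk hk1
    exact ⟨le_trans (le_max_left _ _) hk, le_trans (le_max_right _ _) hk, hk1⟩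
  have hEju_bound : ∀ k : ℕ, x₀ ≤ hfun k → 1 ≤ hfun k → 1 ≤ k →
      μ (Eju k) ≤ ENNReal.ofReal (Real.exp (-c) ^ k) := by
    intro k hx₀ hone hk1
    have hhpos : (0:ℝ) < hfun k := lt_of_lt_of_le one_pos hone
    have hqnonneg : 0 ≤ q k := mul_nonneg hc.le (Real.rpow_nonneg hhpos.le _)
    have hDpm0 : ∀ s, Measurable (Dp s) :=
      fun s => (((hXsm (s+1)).measurable.sub (hXsm s).measurable).max measurable_const)
    set A : ℕ → Set Ω := fun s => {ω | Dp s ω ≤ hfun k} with hAdef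
    have hA : ∀ s, MeasurableSet[F (s+1)] (A s) :=
      fun s => measurableSet_le (hDpFm s) measurable_const
    have hindeq : ∀ s : ℕ, (A s).indicator (fun _ => (1:ℝ))
        = (fun _ => (1:ℝ)) - ({ω | hfun k < Dp s ω}).indicator (fun _ => (1:ℝ)) := by
      intro s
      funext ω
      by_cases h' : Dp s ω ≤ hfun k
      · simp [Set.indicator_apply, hAdef, h', not_lt.mpr h']
      · simp [Set.indicator_apply, hAdef, h', lt_of_not_ge h']
    have hindint : ∀ s : ℕ, Integrable (({ω | hfun k < Dp s ω}).indicator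
        (fun _ => (1:ℝ))) μ := fun s =>
      (integrable_const (1:ℝ)).indicator (measurableSet_lt measurable_const (hDpm0 s))
    have hcondle : ∀ s : ℕ, (μ[({ω | hfun k < Dp s ω}).indicator (fun _ => (1:ℝ))|F s])
        ≤ᵐ[μ] fun _ => 1 := by
      intro s
      have h1 : ({ω | hfun k < Dp s ω}).indicator (fun _ => (1:ℝ)) ≤ᵐ[μ] fun _ => (1:ℝ) :=
        Filter.Eventually.of_forall fun ω => Set.indicator_le_self' (fun _ _ => zero_le_one) ω
      have h2 := condExp_mono (m := F s) (hindint s) (integrable_const (1:ℝ)) h1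
      rw [condExp_const (F.le s)] at h2
      exact h2
    have hcond : ∀ s : ℕ, (μ[(A s).indicator (fun _ => (1:ℝ))|F s]) ≤ᵐ[μ] fun _ => 1 - q k := by
      intro s
      rw [hindeq s]
      have h3 := condExp_sub (m := F s) (integrable_const (1:ℝ)) (hindint s)
      rw [condExp_const (F.le s)] at h3
      filter_upwards [h3, htail s (hfun k) hx₀] with ω h3ω htω
      rw [h3ω]
      simp only [Pi.sub_apply]
      have : c * hfun k ^ (-α) ≤ (μ[({ω | hfun k < Dp s ω}).indicator
          (fun _ => (1:ℝ))|F s]) ω := htω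
      have hqk : q k = c * hfun k ^ (-α) := rfl
      rw [hqk]
      linarith
    have hq1 : q k ≤ 1 := by
      haveI : (ae μ).NeBot := ae_neBot.mpr (IsProbabilityMeasure.ne_zero μ)
      obtain ⟨ω₀, h1, h2⟩ := ((htail 0 (hfun k) hx₀).and (hcondle 0)).exists
      calc q k = c * hfun k ^ (-α) := rfl
      _ ≤ _ := le_trans h1 h2
    have hblock := block_bound_measure F A hA (q k) hq1 hcond (2^k) (2^k)
    refine le_trans hblock (ENNReal.ofReal_le_ofReal ?_)
    -- real estimate
    have hstep1 : (1 - q k) ^ (2^k : ℕ) ≤ Real.exp (-(q k)) ^ (2^k : ℕ) :=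
      pow_le_pow_left₀ (by linarith) (by linarith [Real.add_one_le_exp (-(q k))]) _
    have hrate : ((2^k : ℕ) : ℝ) * q k ≥ c * k := by
      have hqcomp : q k = c * ((2:ℝ) ^ (-(k:ℝ)) * (k:ℝ) ^ (p' * α)) := by
        have h1 : hfun k ^ (-α) = (2:ℝ) ^ (-(k:ℝ)) * (k:ℝ) ^ (p' * α) := by
          rw [hhfundef]
          rw [Real.mul_rpow (Real.rpow_nonneg two_pos.le _) (Real.rpow_nonneg (Nat.cast_nonneg k) _),
            ← Real.rpow_mul two_pos.le, ← Real.rpow_mul (Nat.cast_nonneg k)]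
          congr 1
          · congr 1
            field_simp
          · congr 1
            ring
        show c * hfun k ^ (-α) = _
        rw [h1]
      have hcast : ((2^k : ℕ) : ℝ) = (2:ℝ) ^ (k:ℝ) := by
        push_cast
        rw [Real.rpow_natCast]
      have hcancel : ((2^k : ℕ) : ℝ) * (2:ℝ) ^ (-(k:ℝ)) = 1 := by
        rw [hcast, ← Real.rpow_add two_pos]
        simp
      have hkpow : (k:ℝ) ≤ (k:ℝ) ^ (p' * α) := by
        have h1k : (1:ℝ) ≤ (k:ℝ) := by exact_mod_cast hk1
        have hp'α : 1 ≤ p' * α := by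
          rw [hp'def]
          have : (1/α + ε/2) * α = 1 + ε/2 * α := by field_simp
          rw [this]
          nlinarith
        calc (k:ℝ) = (k:ℝ) ^ (1:ℝ) := (Real.rpow_one _).symm
        _ ≤ _ := Real.rpow_le_rpow_of_exponent_le h1k hp'α
      calc ((2^k : ℕ) : ℝ) * q k = ((2^k : ℕ) : ℝ) * (2:ℝ) ^ (-(k:ℝ)) * (c * (k:ℝ) ^ (p' * α)) := by
            rw [hqcomp]; ring
      _ = c * (k:ℝ) ^ (p' * α) := by rw [hcancel, one_mul]
      _ ≥ c * k := mul_le_mul_of_nonneg_left hkpow hc.le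
    calc (1 - q k) ^ (2^k : ℕ) ≤ Real.exp (-(q k)) ^ (2^k : ℕ) := hstep1
    _ = Real.exp (((2^k : ℕ) : ℝ) * -(q k)) := (Real.exp_nat_mul _ _).symm
    _ ≤ Real.exp ((k:ℝ) * -c) := by
        apply Real.exp_le_exp.mpr
        nlinarith [hrate]
    _ = Real.exp (-c) ^ k := Real.exp_nat_mul _ _
  -- Borel-Cantelli
  have hBC : ∀ᵐ ω ∂μ, ∀ᶠ j : ℕ in atTop, ω ∉ Eju j ∪ Ene j := by
    obtain ⟨K₁, hK₁⟩ := eventually_atTop.mp hjump_ev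
    apply MeasureTheory.ae_eventually_notMem
    set g : ℕ → ℝ := fun j => Real.exp (-c) ^ j + (1 + C) * rneg ^ j with hgdef
    have hgnonneg : ∀ j, 0 ≤ g j := fun j => by
      have := Real.exp_nonneg (-c)
      have h2 : (0:ℝ) ≤ (1 + C) * rneg ^ j := by positivity
      positivity
    have hgsummable : Summable g :=
      (summable_geometric_of_lt_one (Real.exp_nonneg _)
        (Real.exp_lt_one_iff.mpr (neg_lt_zero.mpr hc))).add
        ((summable_geometric_of_lt_one hrneg_nonneg hrneg_lt1).mul_left (1+C))
    have hterm : ∀ j : ℕ, K₁ ≤ j → μ (Eju j ∪ Ene j) ≤ ENNReal.ofReal (g j) := by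
      intro j hj
      obtain ⟨h1, h2, h3⟩ := hK₁ j hj
      calc μ (Eju j ∪ Ene j) ≤ μ (Eju j) + μ (Ene j) := measure_union_le _ _
      _ ≤ ENNReal.ofReal (Real.exp (-c) ^ j) + ENNReal.ofReal ((1 + C) * rneg ^ j) :=
          add_le_add (hEju_bound j h1 h2 h3) (hEne_bound j)
      _ = ENNReal.ofReal (g j) := by
          rw [hgdef, ENNReal.ofReal_add (by positivity) (by positivity)]
    set G : ℕ → ℝ := fun j => if j < K₁ then (1:ℝ) else g j with hGdef
    have hGnonneg : ∀ j, 0 ≤ G j := fun j => by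
      rw [hGdef]
      by_cases h : j < K₁ <;> simp [h, hgnonneg j]
    have hGsummable : Summable G := by
      apply (summable_nat_add_iff K₁).mp
      have heq : (fun j => G (j + K₁)) = fun j => g (j + K₁) := by
        funext j
        rw [hGdef]
        simp [Nat.not_lt.mpr (Nat.le_add_left K₁ j)]
      rw [heq]
      exact (summable_nat_add_iff K₁).mpr hgsummable
    have htermG : ∀ j : ℕ, μ (Eju j ∪ Ene j) ≤ ENNReal.ofReal (G j) := by
      intro j
      rw [hGdef]
      by_cases h : j < K₁
      · simp only [h, if_true]
        rw [ENNReal.ofReal_one]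
        exact prob_le_one
      · simp only [h, if_false]
        exact hterm j (Nat.not_lt.mp h)
    have h1 : ∑' j : ℕ, μ (Eju j ∪ Ene j) ≤ ∑' j : ℕ, ENNReal.ofReal (G j) :=
      ENNReal.tsum_le_tsum htermG
    have h2 : ∑' j : ℕ, ENNReal.ofReal (G j) = ENNReal.ofReal (∑' j : ℕ, G j) :=
      (ENNReal.ofReal_tsum_of_nonneg hGnonneg hGsummable).symm
    exact (lt_of_le_of_lt h1 (h2 ▸ ENNReal.ofReal_lt_top)).ne
  -- deterministic comparison
  have hdet : ∀ᶠ k : ℕ in atTop, ∀ t : ℕ, 2^(k+1) ≤ t → t < 2^(k+2) →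
      (t:ℝ) ^ (1/α) * (Real.log t) ^ (-(1/α) - ε) + lam (k+2) ≤ hfun k := by
    have hL2 : (0:ℝ) < Real.log 2 := Real.log_pos one_lt_two
    set L2 : ℝ := Real.log 2 with hL2def
    set B : ℝ := (2:ℝ)^(2*(1/α)) * L2^(-(1/α) - ε) with hBdef
    have hBpos : 0 < B := by
      rw [hBdef]
      exact mul_pos (Real.rpow_pos_of_pos two_pos _) (Real.rpow_pos_of_pos hL2 _)
    have hE1 : ∀ᶠ k : ℕ in atTop, 2 * B ≤ (k:ℝ)^(ε/2) :=
      ((tendsto_rpow_atTop (half_pos hε)).comp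
        tendsto_natCast_atTop_atTop).eventually_ge_atTop (2*B)
    have hb2 : (0:ℝ) < 1/α - a := by linarith
    have hE2 : ∀ᶠ k : ℕ in atTop,
        2 * (2:ℝ)^(a*2) ≤ (2:ℝ)^((1/α - a)*(k:ℝ)) * (k:ℝ)^(-p') :=
      (aux_geom_poly p' hb2).eventually_ge_atTop _
    filter_upwards [hE1, hE2, eventually_ge_atTop 1] with k hk1 hk2 hk3
    intro t hlo hhi
    set K : ℝ := (k:ℝ) with hKdef
    have hKpos : (0:ℝ) < K := by
      rw [hKdef]; exact_mod_cast hk3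
    have hK1 : (1:ℝ) ≤ K := by rw [hKdef]; exact_mod_cast hk3
    set T : ℝ := (t:ℝ) with hTdef
    have hTlo : (2:ℝ)^((k:ℕ)+1) ≤ T := by
      rw [hTdef]
      exact_mod_cast hlo
    have hThi : T ≤ (2:ℝ)^((k:ℕ)+2) := by
      rw [hTdef]
      exact_mod_cast hhi.le
    have hTpos : (0:ℝ) < T := lt_of_lt_of_le (by positivity) hTlo
    -- part 2 : lam (k+2) ≤ hfun k / 2
    have hpart2 : lam (k+2) ≤ hfun k / 2 := by
      have h1 := mul_le_mul_of_nonneg_right hk2 (Real.rpow_pos_of_pos two_pos (a*K)).le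
      have hlhs : 2 * (2:ℝ)^(a*2) * (2:ℝ)^(a*K) = 2 * (2:ℝ)^(a*((K:ℝ)+2)) := by
        rw [mul_assoc, ← Real.rpow_add two_pos]
        congr 2
        ring
      have hrhs : (2:ℝ)^((1/α - a)*K) * K^(-p') * (2:ℝ)^(a*K)
          = (2:ℝ)^((1/α)*K) * K^(-p') := by
        rw [mul_right_comm, ← Real.rpow_add two_pos]
        congr 2
        ring
      rw [hlhs, hrhs] at h1
      have hlam : lam (k+2) = (2:ℝ)^(a*(K+2)) := by
        have : ((k+2 : ℕ):ℝ) = K + 2 := by push_cast; ring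
        show (2:ℝ)^(a*((k+2:ℕ):ℝ)) = _
        rw [this]
      have hfk : hfun k = (2:ℝ)^((1/α)*K) * K^(-p') := rfl
      rw [hlam, hfk]
      linarith
    -- part 1 : f(t) ≤ hfun k / 2
    have hpart1 : T ^ (1/α) * (Real.log T) ^ (-(1/α) - ε) ≤ hfun k / 2 := by
      have h1 : T^(1/α) ≤ (2:ℝ)^((K+2)*(1/α)) := by
        rw [Real.rpow_mul two_pos.le]
        apply Real.rpow_le_rpow hTpos.le _ (by positivity)
        calc T ≤ (2:ℝ)^((k:ℕ)+2) := hThi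
        _ = (2:ℝ)^(K+2) := by
            rw [← Real.rpow_natCast 2 (k+2)]
            congr 1
            push_cast
            ring
      have hlogT : K * L2 ≤ Real.log T := by
        have h2 : Real.log ((2:ℝ)^((k:ℕ)+1)) ≤ Real.log T :=
          Real.log_le_log (by positivity) hTlo
        rw [Real.log_pow] at h2
        have : K * L2 ≤ ((k:ℕ)+1 : ℕ) * L2 := by
          apply mul_le_mul_of_nonneg_right _ hL2.le
          push_cast
          linarith
        exact le_trans this h2
      have hlogTpos : 0 < Real.log T := lt_of_lt_of_le (by positivity) hlogT
      have h3 : (Real.log T)^(-(1/α) - ε) ≤ (K * L2)^(-(1/α) - ε) :=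
        Real.rpow_le_rpow_of_nonpos (by positivity) hlogT (by
          have : 0 < 1/α := by positivity
          linarith)
      have hmul : T ^ (1/α) * (Real.log T) ^ (-(1/α) - ε)
          ≤ (2:ℝ)^((K+2)*(1/α)) * (K * L2)^(-(1/α) - ε) := by
        apply mul_le_mul h1 h3 (Real.rpow_nonneg hlogTpos.le _) (by positivity)
      refine le_trans hmul ?_
      -- rewrite RHS
      have e1 : (2:ℝ)^((K+2)*(1/α)) = (2:ℝ)^((1/α)*K) * (2:ℝ)^(2*(1/α)) := by
        rw [← Real.rpow_add two_pos]
        congr 1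
        ring
      have e2 : (K * L2)^(-(1/α) - ε) = K^(-(1/α) - ε) * L2^(-(1/α) - ε) :=
        Real.mul_rpow hKpos.le hL2.le
      have e3 : K^(-(1/α) - ε) = K^(-p') * K^(-(ε/2)) := by
        rw [← Real.rpow_add hKpos]
        congr 1
        rw [hp'def]
        ring
      have hsmall : B * K^(-(ε/2)) ≤ 1/2 := by
        have hKε : 0 < K^(ε/2) := Real.rpow_pos_of_pos hKpos _
        have hKneg : K^(-(ε/2)) = 1 / K^(ε/2) := by
          rw [Real.rpow_neg hKpos.le, one_div]
        have h5 : 1 / K^(ε/2) ≤ 1 / (2*B) :=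
          one_div_le_one_div_of_le (by positivity) hk1
        calc B * K^(-(ε/2)) ≤ B * (1/(2*B)) := by
              rw [hKneg]
              exact mul_le_mul_of_nonneg_left h5 hBpos.le
        _ = 1/2 := by field_simp
      calc (2:ℝ)^((K+2)*(1/α)) * (K * L2)^(-(1/α) - ε)
          = ((2:ℝ)^((1/α)*K) * K^(-p')) * (B * K^(-(ε/2))) := by
            rw [e1, e2, e3, hBdef]
            ring
      _ ≤ ((2:ℝ)^((1/α)*K) * K^(-p')) * (1/2) := by
            apply mul_le_mul_of_nonneg_left hsmall (by positivity)
      _ = hfun k / 2 := by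
            have hfk : hfun k = (2:ℝ)^((1/α)*K) * K^(-p') := rfl
            rw [hfk]
            ring
    have : T ^ (1/α) * (Real.log T) ^ (-(1/α) - ε) + lam (k+2) ≤ hfun k := by
      linarith
    exact this
  -- conclusion
  obtain ⟨K₂, hK₂⟩ := eventually_atTop.mp hdet
  filter_upwards [hBC] with ω hω
  obtain ⟨K, hK⟩ := eventually_atTop.mp hω
  rw [eventually_atTop]
  refine ⟨2^(max K K₂ + 1), fun t ht => ?_⟩
  set M := max K K₂ with hMdef
  have htpos : t ≠ 0 := by
    have : 0 < 2^(M+1) := Nat.pow_pos (by norm_num)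
    omega
  set L := Nat.log 2 t with hLdef
  have hL : M + 1 ≤ L := (Nat.le_log_iff_pow_le one_lt_two htpos).mpr ht
  set k := L - 1 with hkdef
  have hk1 : k + 1 = L := by omega
  have h2k1 : 2^(k+1) ≤ t := by
    rw [hk1, hLdef]
    exact Nat.pow_log_le_self 2 htpos
  have h2k2 : t < 2^(k+2) := by
    have h := Nat.lt_pow_succ_log_self (b := 2) one_lt_two t
    have : k + 2 = L + 1 := by omega
    rw [this, hLdef]
    exact h
  have hkK : K ≤ k := by omega
  have hkK₂ : K₂ ≤ k := by omega
  -- big jump exists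
  have hju : ω ∉ Eju k := fun h => hK k hkK (Set.mem_union_left _ h)
  have hne : ω ∉ Ene (k+2) := fun h => hK (k+2) (by omega) (Set.mem_union_right _ h)
  have hjump : ∃ s ∈ Finset.range (2^k), hfun k < Dp (2^k + s) ω := by
    by_contra hcon
    push_neg at hcon
    apply hju
    have : ω ∈ ⋂ s ∈ Finset.range (2^k), {ω' | Dp (2^k + s) ω' ≤ hfun k} := by
      rw [Set.mem_iInter₂]
      intro s hs
      exact not_lt.mp (by exact fun hlt => absurd hlt (not_lt.mpr (hcon s hs)))
    exact this
  obtain ⟨s, hsmem, hsjump⟩ := hjump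
  have hslt : 2^k + s < t := by
    have hs2 : s < 2^k := Finset.mem_range.mp hsmem
    have : 2^k + s < 2^(k+1) := by
      rw [pow_succ]
      omega
    omega
  have hNlt : N (2^(k+2)) ω < lam (k+2) := not_le.mp hne
  -- telescoping
  have hXt : X t ω = ∑ u ∈ Finset.range t, (X (u+1) ω - X u ω) := by
    rw [Finset.sum_range_sub (fun u => X u ω) t, hX0]
    ring
  have hterm : ∀ u : ℕ, X (u+1) ω - X u ω = Dp u ω - Dn u ω := by
    intro u
    exact (max_zero_sub_max_neg_zero_eq_self (X (u+1) ω - X u ω)).symm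
  have hXt2 : X t ω = (∑ u ∈ Finset.range t, Dp u ω) - N t ω := by
    rw [hXt]
    rw [show (∑ u ∈ Finset.range t, (X (u+1) ω - X u ω))
      = ∑ u ∈ Finset.range t, (Dp u ω - Dn u ω) from Finset.sum_congr rfl fun u _ => hterm u]
    rw [Finset.sum_sub_distrib]
  have hsum_ge : Dp (2^k + s) ω ≤ ∑ u ∈ Finset.range t, Dp u ω :=
    Finset.single_le_sum (fun i _ => hDpnonneg i ω) (Finset.mem_range.mpr hslt)
  have hNle : N t ω ≤ N (2^(k+2)) ω := hNmono h2k2.le ω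
  have hdetk := hK₂ k hkK₂ t h2k1 h2k2
  have hXge : hfun k - lam (k+2) ≤ X t ω := by
    rw [hXt2]
    have h1 : hfun k < Dp (2^k + s) ω := hsjump
    have h2 : N t ω < lam (k+2) := lt_of_le_of_lt hNle hNlt
    linarith
  linarith
end

section
/- Let (X_t)_{t∈ℤ⁺} be adapted to (F_t), X_0 = 0, with increments Δ_t. Fix α ∈ (0,1), β > α. Suppose (i) E[(Δ_t⁻)^β | F_t] ≤ C a.s. for all t, and (ii) uniformly in t and ω, log P[Δ_t⁺ > x | F_t] / log x → −α as x → ∞, a.s. Then (log X_t)/(log t) → 1/α almost surely as t → ∞. -/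
open MeasureTheory Filter
open scoped ENNReal NNReal Topology

namespace Stmt12Aux

lemma rpow_sum_le {ι : Type*} (s : Finset ι) (f : ι → ℝ≥0∞) {p : ℝ} (hp : 0 < p) (hp1 : p ≤ 1) :
    (∑ i ∈ s, f i) ^ p ≤ ∑ i ∈ s, f i ^ p := by
  classical
  induction s using Finset.induction with
  | empty => simp [ENNReal.zero_rpow_of_pos hp]
  | insert _ _ hx ih =>
      rw [Finset.sum_insert hx, Finset.sum_insert hx]
      exact le_trans (ENNReal.rpow_add_le_add_rpow _ _ hp.le hp1) (by gcongr)

lemma dyadic_bracket {t : ℕ} (ht : 1 ≤ t) :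
    2 ^ Nat.log 2 t ≤ t ∧ t < 2 ^ (Nat.log 2 t + 1) :=
  ⟨Nat.pow_log_le_self 2 (by omega), Nat.lt_pow_succ_log_self (by norm_num) t⟩

lemma sum_growth {Ω : Type*} {m0 : MeasurableSpace Ω} {μ : Measure Ω} [IsProbabilityMeasure μ]
    (W : ℕ → Ω → ℝ) (hWm : ∀ s, AEMeasurable (W s) μ) (hWnn : ∀ s ω, 0 ≤ W s ω)
    {p q : ℝ} (hp : 0 < p) (hp1 : p ≤ 1) (hq : 1 < p * q)
    (B : ℝ≥0∞) (hB : B ≠ ⊤)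
    (hmom : ∀ s, ∫⁻ ω, ENNReal.ofReal (W s ω) ^ p ∂μ ≤ B) :
    ∀ᵐ ω ∂μ, ∀ᶠ t : ℕ in atTop, ∑ s ∈ Finset.range t, W s ω ≤ (t : ℝ) ^ q := by
  have hq0 : 0 < q := by nlinarith
  -- the ENNReal-valued partial sums
  set T : ℕ → Ω → ℝ≥0∞ := fun t ω => ∑ s ∈ Finset.range t, ENNReal.ofReal (W s ω) with hT
  have hTmom : ∀ t : ℕ, ∫⁻ ω, T t ω ^ p ∂μ ≤ t * B := by
    intro t
    calc ∫⁻ ω, T t ω ^ p ∂μ ≤ ∫⁻ ω, ∑ s ∈ Finset.range t, ENNReal.ofReal (W s ω) ^ p ∂μ := by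
          exact lintegral_mono fun ω => rpow_sum_le _ _ hp hp1
      _ = ∑ s ∈ Finset.range t, ∫⁻ ω, ENNReal.ofReal (W s ω) ^ p ∂μ := by
          apply lintegral_finset_sum'
          intro s _
          exact (ENNReal.measurable_ofReal.comp_aemeasurable (hWm s)).pow_const p
      _ ≤ ∑ _s ∈ Finset.range t, B := Finset.sum_le_sum fun s _ => hmom s
      _ = t * B := by simp [Finset.sum_const, nsmul_eq_mul]
  have hTmeas : ∀ t : ℕ, AEMeasurable (fun ω => T t ω) μ := by
    intro t
    exact Finset.aemeasurable_fun_sum _ fun s _ => ENNReal.measurable_ofReal.comp_aemeasurable (hWm s)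
  set c : ℝ≥0∞ := ENNReal.ofReal ((2:ℝ) ^ (1 - p*q)) with hc
  have hc1 : c < 1 := by
    rw [hc, ← ENNReal.ofReal_one]
    exact ENNReal.ofReal_lt_ofReal_iff (by norm_num) |>.2
      (Real.rpow_lt_one_of_one_lt_of_neg (by norm_num) (by linarith))
  set E : ℕ → Set Ω := fun k => {ω | ENNReal.ofReal ((2:ℝ) ^ ((k:ℝ)*q)) < T (2^(k+1)) ω} with hE
  have key : ∀ k, μ (E k) ≤ (2*B) * c^k := by
    intro k
    set ε : ℝ≥0∞ := ENNReal.ofReal ((2:ℝ) ^ ((k:ℝ)*q)) ^ p with hε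
    have hε' : ε = ENNReal.ofReal ((2:ℝ) ^ ((k:ℝ)*q*p)) := by
      rw [hε, Real.rpow_mul (by norm_num : (0:ℝ) ≤ 2) (↑k * q) p,
        ENNReal.ofReal_rpow_of_pos (Real.rpow_pos_of_pos two_pos _)]
    have hε0 : ε ≠ 0 := by
      rw [hε']; simp [ENNReal.ofReal_eq_zero, not_le, Real.rpow_pos_of_pos two_pos]
    have hεtop : ε ≠ ⊤ := by rw [hε']; exact ENNReal.ofReal_ne_top
    have hMar : ε * μ (E k) ≤ (2^(k+1) : ℕ) * B := by
      have h1 : μ (E k) ≤ μ {ω | ε ≤ T (2^(k+1)) ω ^ p} := by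
        apply measure_mono
        intro ω hω
        exact ENNReal.rpow_le_rpow (le_of_lt hω) hp.le
      calc ε * μ (E k) ≤ ε * μ {ω | ε ≤ T (2^(k+1)) ω ^ p} := by gcongr
        _ ≤ ∫⁻ ω, T (2^(k+1)) ω ^ p ∂μ :=
            mul_meas_ge_le_lintegral₀ ((hTmeas _).pow_const p) ε
        _ ≤ (2^(k+1) : ℕ) * B := hTmom _
    have hprod : ε * ((2*B) * c^k) = (2^(k+1) : ℕ) * B := by
      have h1 : ε * c^k = ENNReal.ofReal ((2:ℝ)^(k:ℕ)) := by
        rw [hε', hc, ← ENNReal.ofReal_pow (by positivity),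
          ← ENNReal.ofReal_mul (by positivity), ← Real.rpow_natCast ((2:ℝ) ^ (1 - p*q)) k,
          ← Real.rpow_mul (by norm_num), ← Real.rpow_add (by norm_num),
          ← Real.rpow_natCast (2:ℝ) k]
        ring_nf
      calc ε * ((2*B) * c^k) = (ε * c^k) * (2 * B) := by ring
        _ = ENNReal.ofReal ((2:ℝ)^(k:ℕ)) * (2*B) := by rw [h1]
        _ = (2^(k+1) : ℕ) * B := by
            rw [show ((2:ℝ)^(k:ℕ)) = (((2^k : ℕ)):ℝ) by push_cast; ring,
              ENNReal.ofReal_natCast]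
            push_cast
            ring
    rw [← hprod] at hMar
    exact (ENNReal.mul_le_mul_iff_right hε0 hεtop).1 hMar
  have hsum : (∑' k, μ (E k)) ≠ ⊤ := by
    have : (∑' k, μ (E k)) ≤ (2*B) * (1-c)⁻¹ := by
      calc (∑' k, μ (E k)) ≤ ∑' k, (2*B) * c^k := ENNReal.tsum_le_tsum key
        _ = (2*B) * ∑' k, c^k := ENNReal.tsum_mul_left
        _ = (2*B) * (1-c)⁻¹ := by rw [ENNReal.tsum_geometric]
    refine ne_top_of_le_ne_top ?_ this
    exact ENNReal.mul_ne_top (ENNReal.mul_ne_top (by norm_num) hB)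
      (ENNReal.inv_ne_top.2 (ne_of_gt (tsub_pos_of_lt hc1)))
  filter_upwards [ae_eventually_notMem hsum] with ω hω
  obtain ⟨k₀, hk₀⟩ := eventually_atTop.1 hω
  rw [eventually_atTop]
  refine ⟨max (2^(k₀+1)) 1, fun t ht => ?_⟩
  have h1t : 1 ≤ t := le_trans (le_max_right _ _) ht
  have h2t : 2^(k₀+1) ≤ t := le_trans (le_max_left _ _) ht
  set k := Nat.log 2 t with hk
  obtain ⟨hlow, hhigh⟩ := dyadic_bracket h1t
  have hkk : k₀ ≤ k := by
    have : 2^(k₀+1) < 2^(k+1) := lt_of_le_of_lt h2t hhigh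
    have := (Nat.pow_lt_pow_iff_right (by norm_num : 1 < 2)).1 this
    omega
  have hnot := hk₀ k hkk
  have hTle : T t ω ≤ T (2^(k+1)) ω := by
    apply Finset.sum_le_sum_of_subset
    exact Finset.range_subset_range.2 (le_of_lt hhigh)
  have hT2 : T (2^(k+1)) ω ≤ ENNReal.ofReal ((2:ℝ) ^ ((k:ℝ)*q)) := not_lt.1 hnot
  have hsum_eq : T t ω = ENNReal.ofReal (∑ s ∈ Finset.range t, W s ω) := by
    rw [ENNReal.ofReal_sum_of_nonneg fun s _ => hWnn s ω]
  have hfin : ∑ s ∈ Finset.range t, W s ω ≤ (2:ℝ) ^ ((k:ℝ)*q) := by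
    rw [← ENNReal.ofReal_le_ofReal_iff (by positivity), ← hsum_eq]
    exact le_trans hTle hT2
  refine le_trans hfin ?_
  have h2k : (2:ℝ) ^ ((k:ℝ)*q) = (((2^k : ℕ)):ℝ) ^ q := by
    rw [Real.rpow_mul (by norm_num), Real.rpow_natCast]
    push_cast; ring_nf
  rw [h2k]
  have : ((2^k : ℕ) : ℝ) ≤ (t : ℝ) := by exact_mod_cast hlow
  exact Real.rpow_le_rpow (by positivity) this hq0.le

/-- The dyadic-layer constant bounding the `p`-th moment. -/
noncomputable def tailConst (x₀ a' p : ℝ) : ℝ≥0∞ :=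
  ENNReal.ofReal (x₀ ^ p) + ∑' j : ℕ,
    ENNReal.ofReal ((x₀ * 2^(j+1)) ^ p) * ENNReal.ofReal ((x₀ * 2^j) ^ (-a'))

lemma pow_cast_rpow {u : ℝ} (hu : 0 < u) (j : ℕ) (y : ℝ) :
    ((u^j : ℝ)) ^ y = u ^ ((j:ℝ) * y) := by
  rw [← Real.rpow_natCast u j, ← Real.rpow_mul hu.le]

lemma tailConst_ne_top {x₀ a' p : ℝ} (hx₀ : 1 ≤ x₀) (hp : 0 < p) (hpa : p < a') :
    tailConst x₀ a' p ≠ ⊤ := by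
  have hx0 : (0:ℝ) < x₀ := lt_of_lt_of_le one_pos hx₀
  have hterm : ∀ j : ℕ,
      ENNReal.ofReal ((x₀ * 2^(j+1)) ^ p) * ENNReal.ofReal ((x₀ * 2^j) ^ (-a'))
        = ENNReal.ofReal (x₀ ^ (p - a') * 2 ^ p) * (ENNReal.ofReal ((2:ℝ) ^ (p - a')))^j := by
    intro j
    rw [← ENNReal.ofReal_mul (by positivity), ← ENNReal.ofReal_pow (by positivity),
      ← ENNReal.ofReal_mul (by positivity)]
    congr 1
    rw [Real.mul_rpow hx0.le (by positivity), Real.mul_rpow hx0.le (by positivity),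
      pow_cast_rpow two_pos (j+1) p, pow_cast_rpow two_pos j (-a'),
      ← Real.rpow_natCast ((2:ℝ)^(p-a')) j, ← Real.rpow_mul (by norm_num : (0:ℝ) ≤ 2),
      mul_mul_mul_comm, ← Real.rpow_add hx0, mul_assoc, ← Real.rpow_add two_pos,
      ← Real.rpow_add two_pos,
      show p + -a' = p - a' from by ring,
      show (↑(j+1):ℝ)*p + ↑j*(-a') = p + (p-a')*↑j from by push_cast; ring]
  have hr1 : ENNReal.ofReal ((2:ℝ) ^ (p - a')) < 1 := by
    rw [← ENNReal.ofReal_one]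
    exact ENNReal.ofReal_lt_ofReal_iff (by norm_num) |>.2
      (Real.rpow_lt_one_of_one_lt_of_neg (by norm_num) (by linarith))
  rw [tailConst]
  refine ENNReal.add_ne_top.2 ⟨ENNReal.ofReal_ne_top, ?_⟩
  rw [tsum_congr hterm, ENNReal.tsum_mul_left, ENNReal.tsum_geometric]
  exact ENNReal.mul_ne_top ENNReal.ofReal_ne_top
    (ENNReal.inv_ne_top.2 (ne_of_gt (tsub_pos_of_lt hr1)))

lemma moment_from_tail {Ω : Type*} {m0 : MeasurableSpace Ω} {μ : Measure Ω}
    [IsProbabilityMeasure μ] (Y : Ω → ℝ) (hY : Measurable Y) (hYnn : ∀ ω, 0 ≤ Y ω)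
    {x₀ a' p : ℝ} (hx₀ : 1 ≤ x₀) (hp : 0 < p)
    (htail : ∀ x, x₀ ≤ x → μ {ω | x < Y ω} ≤ ENNReal.ofReal (x ^ (-a'))) :
    ∫⁻ ω, ENNReal.ofReal (Y ω) ^ p ∂μ ≤ tailConst x₀ a' p := by
  have hx0 : (0:ℝ) < x₀ := lt_of_lt_of_le one_pos hx₀
  set S : ℕ → Set Ω := fun j => {ω | x₀ * 2^j < Y ω} with hS
  set c : ℕ → ℝ≥0∞ := fun j => ENNReal.ofReal ((x₀ * 2^(j+1)) ^ p) with hc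
  have hpt : ∀ ω, ENNReal.ofReal (Y ω) ^ p
      ≤ ENNReal.ofReal (x₀ ^ p) + ∑' j : ℕ, (S j).indicator (fun _ => c j) ω := by
    intro ω
    by_cases hcase : Y ω ≤ x₀
    · refine le_trans ?_ le_self_add
      rw [ENNReal.ofReal_rpow_of_nonneg (hYnn ω) hp.le]
      exact ENNReal.ofReal_le_ofReal (Real.rpow_le_rpow (hYnn ω) hcase hp.le)
    · push_neg at hcase
      have hex : ∃ n : ℕ, Y ω ≤ x₀ * 2^n := by
        obtain ⟨n, hn⟩ := pow_unbounded_of_one_lt (Y ω / x₀) (by norm_num : (1:ℝ) < 2)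
        exact ⟨n, by rw [div_lt_iff₀ hx0] at hn; nlinarith [hn]⟩
      classical
      set n := Nat.find hex with hn
      have hPn : Y ω ≤ x₀ * 2^n := Nat.find_spec hex
      have hn0 : n ≠ 0 := by
        intro h
        rw [h] at hPn
        simp at hPn
        linarith
      obtain ⟨j, hj⟩ : ∃ j, n = j + 1 := ⟨n - 1, by omega⟩
      have hjlt : x₀ * 2^j < Y ω := by
        have := Nat.find_min hex (m := j) (by omega)
        push_neg at this
        exact this
      refine le_trans ?_ le_add_self
      refine le_trans ?_ (ENNReal.le_tsum j)
      have hmem : ω ∈ S j := hjlt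
      rw [Set.indicator_of_mem hmem, hc]
      rw [ENNReal.ofReal_rpow_of_nonneg (hYnn ω) hp.le]
      refine ENNReal.ofReal_le_ofReal (Real.rpow_le_rpow (hYnn ω) ?_ hp.le)
      rw [← hj]; exact hPn
  calc ∫⁻ ω, ENNReal.ofReal (Y ω) ^ p ∂μ
      ≤ ∫⁻ ω, (ENNReal.ofReal (x₀ ^ p) + ∑' j : ℕ, (S j).indicator (fun _ => c j) ω) ∂μ :=
        lintegral_mono hpt
    _ = ENNReal.ofReal (x₀ ^ p) + ∫⁻ ω, ∑' j : ℕ, (S j).indicator (fun _ => c j) ω ∂μ := by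
        rw [lintegral_add_left measurable_const]
        simp [lintegral_const]
    _ = ENNReal.ofReal (x₀ ^ p) + ∑' j : ℕ, ∫⁻ ω, (S j).indicator (fun _ => c j) ω ∂μ := by
        rw [lintegral_tsum]
        intro j
        exact ((measurable_const.indicator (measurableSet_lt measurable_const hY)).aemeasurable)
    _ ≤ tailConst x₀ a' p := by
        rw [tailConst]
        gcongr with j
        rw [lintegral_indicator_const (measurableSet_lt measurable_const hY)]
        have h2j : (1:ℝ) ≤ 2^j := one_le_pow₀ (by norm_num)
        exact mul_le_mul_right (htail (x₀ * 2^j) (by nlinarith)) _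

lemma window_prod {Ω : Type*} {m0 : MeasurableSpace Ω} {μ : Measure Ω} [IsProbabilityMeasure μ]
    (F : Filtration ℕ m0) (A : ℕ → Set Ω)
    (hA : ∀ s, MeasurableSet[F (s+1)] (A s))
    {a b : ℕ} {ρ : ℝ} (hρ0 : 0 ≤ ρ) (hρ1 : ρ ≤ 1)
    (hcond : ∀ s, a ≤ s → s < b →
      ∀ᵐ ω ∂μ, ρ ≤ (μ[(A s).indicator (fun _ => (1:ℝ)) | F s]) ω) :
    μ (⋂ s ∈ Finset.Ico a b, (A s)ᶜ) ≤ ENNReal.ofReal ((1 - ρ) ^ (b - a)) := by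
  classical
  have hAm0 : ∀ s, MeasurableSet (A s) := fun s => F.le (s+1) _ (hA s)
  set g : ℕ → Ω → ℝ :=
    fun n ω => ∏ s ∈ Finset.Ico a n, (1 - (A s).indicator (fun _ => (1:ℝ)) ω) with hg
  have hfac01 : ∀ s (ω : Ω), 0 ≤ 1 - (A s).indicator (fun _ => (1:ℝ)) ω ∧
      1 - (A s).indicator (fun _ => (1:ℝ)) ω ≤ 1 := by
    intro s ω
    by_cases h : ω ∈ A s <;> simp [Set.indicator_of_mem, Set.indicator_of_notMem, h]
  have hg0 : ∀ n ω, 0 ≤ g n ω := fun n ω =>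
    Finset.prod_nonneg fun s _ => (hfac01 s ω).1
  have hg1 : ∀ n ω, g n ω ≤ 1 := fun n ω =>
    Finset.prod_le_one (fun s _ => (hfac01 s ω).1) (fun s _ => (hfac01 s ω).2)
  have hgmeas : ∀ n, StronglyMeasurable[F n] (g n) := by
    intro n
    apply Finset.stronglyMeasurable_fun_prod
    intro s hs
    have hsn : s + 1 ≤ n := Finset.mem_Ico.1 hs |>.2
    have : MeasurableSet[F n] (A s) := F.mono hsn _ (hA s)
    exact (stronglyMeasurable_const.sub
      ((stronglyMeasurable_const.indicator this)))
  have hgint : ∀ n, Integrable (g n) μ := by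
    intro n
    refine Integrable.mono' (integrable_const 1)
      ((hgmeas n).mono (F.le n)).aestronglyMeasurable ?_
    filter_upwards with ω
    rw [Real.norm_eq_abs, abs_le]
    exact ⟨by linarith [hg0 n ω], hg1 n ω⟩
  -- the key induction
  have hind : ∀ n, a ≤ n → n ≤ b → ∫ ω, g n ω ∂μ ≤ (1 - ρ) ^ (n - a) := by
    intro n
    induction n with
    | zero =>
        intro ha _
        have ha0 : a = 0 := by omega
        subst ha0
        have hgone : g 0 = fun _ => (1:ℝ) := funext fun ω =>
          Finset.prod_eq_one (fun s hs => absurd (Finset.mem_Ico.1 hs) (by omega))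
        rw [hgone]
        simp
    | succ n ih =>
        intro ha hb
        rcases Nat.lt_or_ge n a with hlt | hge
        · -- n + 1 = a
          have h0 : (n + 1) - a = 0 := by omega
          have hgone : g (n+1) = fun _ => (1:ℝ) := funext fun ω =>
            Finset.prod_eq_one (fun s hs => absurd (Finset.mem_Ico.1 hs) (by omega))
          rw [hgone, h0, pow_zero]
          simp
        · have hnb : n < b := by omega
          have hstep : g (n+1) = fun ω => g n ω * (1 - (A n).indicator (fun _ => (1:ℝ)) ω) := by
            funext ω
            exact Finset.prod_Ico_succ_top (by omega : a ≤ n) _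
          have hint1 : Integrable (fun ω => (A n).indicator (fun _ => (1:ℝ)) ω) μ := by
            refine Integrable.mono' (integrable_const 1)
              (measurable_const.indicator (hAm0 n)).aestronglyMeasurable ?_
            filter_upwards with ω
            by_cases h : ω ∈ A n <;>
              simp [Set.indicator_of_mem, Set.indicator_of_notMem, h]
          have hinth : Integrable (fun ω => 1 - (A n).indicator (fun _ => (1:ℝ)) ω) μ :=
            (integrable_const (1:ℝ)).sub hint1
          have hpull : μ[fun ω => g n ω * (1 - (A n).indicator (fun _ => (1:ℝ)) ω) | F n]
              =ᵐ[μ] fun ω => g n ω * (μ[fun ω' => 1 - (A n).indicator (fun _ => (1:ℝ)) ω' | F n]) ω := by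
            exact condExp_stronglyMeasurable_mul_of_bound (F.le n) (hgmeas n) hinth 1
              (by filter_upwards with ω;
                  rw [Real.norm_eq_abs, abs_le];
                  exact ⟨by linarith [hg0 n ω], hg1 n ω⟩)
          have hsub : μ[fun ω' => 1 - (A n).indicator (fun _ => (1:ℝ)) ω' | F n]
              =ᵐ[μ] fun ω => 1 - (μ[(A n).indicator (fun _ => (1:ℝ)) | F n]) ω := by
            have h1 : μ[fun ω' => (1:ℝ) - (A n).indicator (fun _ => (1:ℝ)) ω' | F n]
                =ᵐ[μ] μ[(fun _ => (1:ℝ)) | F n] - μ[(A n).indicator (fun _ => (1:ℝ)) | F n] :=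
              condExp_sub (integrable_const 1) hint1 _
            refine h1.trans ?_
            have h2 := condExp_const (F.le n) (1:ℝ) (μ := μ)
            filter_upwards [h2.symm ▸ EventuallyEq.rfl (f := μ[(fun _ => (1:ℝ)) | F n] )] with ω hω
            simp only [Pi.sub_apply]
            rw [show (μ[(fun _ => (1:ℝ)) | F n]) = fun _ => (1:ℝ) from condExp_const (F.le n) 1]
          calc ∫ ω, g (n+1) ω ∂μ = ∫ ω, (μ[g (n+1) | F n]) ω ∂μ :=
              (integral_condExp (F.le n)).symm
            _ ≤ ∫ ω, g n ω * (1 - ρ) ∂μ := by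
                apply integral_mono_ae integrable_condExp ((hgint n).mul_const _)
                filter_upwards [hpull, hsub, hcond n hge hnb] with ω h1 h2 h3
                rw [hstep]
                rw [h1, h2]
                have := hg0 n ω
                nlinarith
            _ = (1 - ρ) * ∫ ω, g n ω ∂μ := by rw [integral_mul_const]; ring
            _ ≤ (1 - ρ) * (1 - ρ) ^ (n - a) := by
                have h1ρ : 0 ≤ 1 - ρ := by linarith
                have := ih hge (le_of_lt hnb)
                nlinarith [pow_nonneg h1ρ (n - a), this]
            _ = (1 - ρ) ^ (n + 1 - a) := by
                rw [← pow_succ']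
                congr 1
                omega
  -- conclude
  set S : Set Ω := ⋂ s ∈ Finset.Ico a b, (A s)ᶜ with hSdef
  have hSmeas : MeasurableSet S := by
    apply MeasurableSet.biInter (Set.to_countable _)
    exact fun s _ => (hAm0 s).compl
  have hind_eq : ∀ ω, S.indicator (fun _ => (1:ℝ)) ω = g b ω := by
    intro ω
    by_cases h : ω ∈ S
    · rw [Set.indicator_of_mem h]
      refine (Finset.prod_eq_one ?_).symm
      intro s hs
      have hω : ω ∈ (A s)ᶜ := by
        simp only [hSdef, Set.mem_iInter] at h
        exact h s hs
      simp [Set.indicator_of_notMem hω]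
    · rw [Set.indicator_of_notMem h]
      simp only [hSdef, Set.mem_iInter, not_forall] at h
      obtain ⟨s, hs, hω⟩ := h
      refine (Finset.prod_eq_zero hs ?_).symm
      rw [Set.notMem_compl_iff] at hω
      simp [Set.indicator_of_mem hω]
  have hmain : (μ S).toReal ≤ (1 - ρ) ^ (b - a) := by
    have h1 : (μ S).toReal = ∫ ω, S.indicator (fun _ => (1:ℝ)) ω ∂μ := by
      rw [show (fun _ : Ω => (1:ℝ)) = (1 : Ω → ℝ) from rfl, integral_indicator_one hSmeas]; rfl
    rw [h1, show (fun ω => S.indicator (fun _ => (1:ℝ)) ω) = g b from funext hind_eq]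
    rcases le_or_gt a b with hab | hab
    · exact hind b hab le_rfl
    · have h0 : b - a = 0 := by omega
      have hgone : g b = fun _ => (1:ℝ) := funext fun ω =>
        Finset.prod_eq_one (fun s hs => absurd (Finset.mem_Ico.1 hs) (by omega))
      rw [hgone, h0, pow_zero]
      simp
  calc μ S = ENNReal.ofReal ((μ S).toReal) := (ENNReal.ofReal_toReal (measure_ne_top μ S)).symm
    _ ≤ ENNReal.ofReal ((1 - ρ) ^ (b - a)) := ENNReal.ofReal_le_ofReal hmain

lemma one_sub_pow_le {ρ : ℝ} (hρ0 : 0 < ρ) (hρ1 : ρ ≤ 1) {n : ℕ} (hn : 1 ≤ n) :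
    (1 - ρ) ^ n ≤ ((n:ℝ) * ρ)⁻¹ := by
  have h1 : (1 - ρ) ^ n * (1 + ρ) ^ n ≤ 1 := by
    rw [← mul_pow]
    have h2 : (1 - ρ) * (1 + ρ) = 1 - ρ^2 := by ring
    rw [h2]
    apply pow_le_one₀ (by nlinarith) (by nlinarith)
  have h3 : 1 + (n:ℝ) * ρ ≤ (1 + ρ) ^ n := by
    have := one_add_mul_le_pow (a := ρ) (by linarith) n
    linarith
  have h4 : (0:ℝ) < (1 + ρ)^n := pow_pos (by linarith) n
  have hnn : (0:ℝ) ≤ (1 - ρ)^n := pow_nonneg (by linarith) n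
  have hn' : 0 < (n:ℝ) * ρ := by
    have : (1:ℝ) ≤ (n:ℝ) := by exact_mod_cast hn
    nlinarith
  rw [← one_div, le_div_iff₀ hn']
  nlinarith

lemma jump_lb (d : ℕ → ℝ) {s t : ℕ} (hst : s < t) :
    max (d s) 0 - ∑ u ∈ Finset.range t, max (-(d u)) 0 ≤ ∑ u ∈ Finset.range t, d u := by
  have hid : ∀ u, d u = max (d u) 0 - max (-(d u)) 0 := by
    intro u; rcases le_total (d u) 0 with h | h
    · rw [max_eq_right h, max_eq_left (by linarith)]; ring
    · rw [max_eq_left h, max_eq_right (by linarith)]; ring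
  have hsingle : max (d s) 0 ≤ ∑ u ∈ Finset.range t, max (d u) 0 :=
    Finset.single_le_sum (f := fun u => max (d u) 0) (fun u _ => le_max_right _ _)
      (Finset.mem_range.2 hst)
  have hsplit : ∑ u ∈ Finset.range t, d u
      = ∑ u ∈ Finset.range t, max (d u) 0 - ∑ u ∈ Finset.range t, max (-(d u)) 0 := by
    rw [← Finset.sum_sub_distrib]
    exact Finset.sum_congr rfl fun u _ => hid u
  linarith

lemma indicator_integrable {Ω : Type*} {m0 : MeasurableSpace Ω} {μ : Measure Ω}
    [IsProbabilityMeasure μ] {A : Set Ω} (hA : MeasurableSet A) :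
    Integrable (A.indicator fun _ => (1:ℝ)) μ := by
  refine Integrable.mono' (integrable_const 1)
    (measurable_const.indicator hA).aestronglyMeasurable ?_
  filter_upwards with ω
  by_cases h : ω ∈ A <;> simp [Set.indicator_of_mem, Set.indicator_of_notMem, h]

lemma tail_uncond {Ω : Type*} {m0 : MeasurableSpace Ω} {μ : Measure Ω} [IsProbabilityMeasure μ]
    (F : Filtration ℕ m0) {A : Set Ω} (hA : MeasurableSet A) {t : ℕ} {c : ℝ}
    (h : ∀ᵐ ω ∂μ, (μ[A.indicator (fun _ => (1:ℝ)) | F t]) ω ≤ c) :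
    μ A ≤ ENNReal.ofReal c := by
  have h1 : (μ A).toReal = ∫ ω, A.indicator (fun _ => (1:ℝ)) ω ∂μ := by
    rw [show (fun _ : Ω => (1:ℝ)) = (1 : Ω → ℝ) from rfl, integral_indicator_one hA]; rfl
  have h2 : ∫ ω, (μ[A.indicator (fun _ => (1:ℝ)) | F t]) ω ∂μ
      = ∫ ω, A.indicator (fun _ => (1:ℝ)) ω ∂μ := integral_condExp (F.le t)
  have h3 : ∫ ω, (μ[A.indicator (fun _ => (1:ℝ)) | F t]) ω ∂μ ≤ ∫ _ω, c ∂μ :=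
    integral_mono_ae integrable_condExp (integrable_const c) h
  have h4 : (μ A).toReal ≤ c := by
    rw [h1, ← h2]
    simpa using h3
  calc μ A = ENNReal.ofReal ((μ A).toReal) := (ENNReal.ofReal_toReal (measure_ne_top μ A)).symm
    _ ≤ ENNReal.ofReal c := ENNReal.ofReal_le_ofReal h4

end Stmt12Aux
set_option maxHeartbeats 1000000 in
/-- Corollary 1 of the paper: if the negative parts have a bounded conditional
`β`-moment and the conditional upper tail of `Δ_t⁺` has exponent `α` uniformly
in `t` and `ω`, then `(log X_t)/(log t) → 1/α` almost surely. -/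
theorem stmt12
    {Ω : Type*} {m0 : MeasurableSpace Ω} {μ : Measure Ω} [IsProbabilityMeasure μ]
    (F : Filtration ℕ m0) (X : ℕ → Ω → ℝ) (hadapted : Adapted F X)
    (hX0 : ∀ ω, X 0 ω = 0)
    (α β C : ℝ) (hα : α ∈ Set.Ioo (0:ℝ) 1) (hβ : α < β)
    (hnegint : ∀ t, Integrable (fun ω => (max (-(X (t + 1) ω - X t ω)) 0) ^ β) μ)
    (hneg : ∀ t, ∀ᵐ ω ∂μ,
      (μ[fun ω' => (max (-(X (t + 1) ω' - X t ω')) 0) ^ β|F t]) ω ≤ C)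
    (htail : ∀ ε, 0 < ε → ∃ x₀ : ℝ, ∀ x, x₀ ≤ x → ∀ t, ∀ᵐ ω ∂μ,
      x ^ (-α - ε) ≤ (μ[Set.indicator {ω' | x < max (X (t + 1) ω' - X t ω') 0}
        (fun _ => (1:ℝ))|F t]) ω ∧
      (μ[Set.indicator {ω' | x < max (X (t + 1) ω' - X t ω') 0}
        (fun _ => (1:ℝ))|F t]) ω ≤ x ^ (-α + ε)) :
    ∀ᵐ ω ∂μ, Tendsto (fun t : ℕ => Real.log (X t ω) / Real.log t) atTop
      (nhds (1/α)) := by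
  classical
  obtain ⟨hα0, hα1⟩ := hα
  set Dp : ℕ → Ω → ℝ := fun t ω => max (X (t+1) ω - X t ω) 0 with hDpdef
  set Dm : ℕ → Ω → ℝ := fun t ω => max (-(X (t+1) ω - X t ω)) 0 with hDmdef
  have hXsm : ∀ t, StronglyMeasurable (X t) := fun t => ((hadapted t).mono (F.le t) le_rfl).stronglyMeasurable
  have hDpF : ∀ t, Measurable[F (t+1)] (Dp t) := fun t =>
    (((hadapted (t+1))).sub
      (((hadapted t).mono (F.mono (Nat.le_succ t)) le_rfl))).max measurable_const
  have hDpm : ∀ t, Measurable (Dp t) := fun t => (hDpF t).mono (F.le (t+1)) le_rfl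
  have hDmm : ∀ t, Measurable (Dm t) := fun t =>
    ((((hXsm (t+1)).measurable.sub (hXsm t).measurable)).neg).max measurable_const
  have hDpnn : ∀ t ω, 0 ≤ Dp t ω := fun t ω => le_max_right _ _
  have hDmnn : ∀ t ω, 0 ≤ Dm t ω := fun t ω => le_max_right _ _
  have hXsum : ∀ t ω, X t ω = ∑ s ∈ Finset.range t, (X (s+1) ω - X s ω) := by
    intro t ω
    rw [Finset.sum_range_sub (fun s => X s ω), hX0 ω, sub_zero]
  -- parameters for the negative-part bound
  set pm : ℝ := min β 1 with hpmdef
  have hpm0 : 0 < pm := lt_min (lt_trans hα0 hβ) one_pos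
  have hpm1 : pm ≤ 1 := min_le_right _ _
  have hαpm : α < pm := lt_min hβ hα1
  set qm : ℝ := (1/α + 1/pm)/2 with hqmdef
  have hqm0 : 0 < qm := by positivity
  have hpmqm : 1 < pm * qm := by
    have h1 : 1 < pm * (1/α) := by
      rw [mul_one_div, lt_div_iff₀ hα0]
      linarith
    have h2 : pm * (1/pm) = 1 := mul_one_div_cancel (ne_of_gt hpm0)
    have h3 : pm * qm = (pm * (1/α) + pm * (1/pm))/2 := by rw [hqmdef]; ring
    rw [h3, h2]; linarith
  have hqmα : qm < 1/α := by
    have h1 : 1/pm < 1/α := one_div_lt_one_div_of_lt hα0 hαpm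
    rw [hqmdef]; linarith
  -- AS1 : control of the sum of negative parts
  have hmomDm : ∀ t, ∫⁻ ω, ENNReal.ofReal (Dm t ω) ^ pm ∂μ ≤ ENNReal.ofReal (1 + C) := by
    intro t
    have hintDmβ : ∫ ω, (Dm t ω)^β ∂μ ≤ C := by
      have h2 : ∫ ω, (μ[fun ω' => (Dm t ω')^β | F t]) ω ∂μ = ∫ ω, (Dm t ω)^β ∂μ :=
        integral_condExp (F.le t)
      rw [← h2]
      calc ∫ ω, (μ[fun ω' => (Dm t ω')^β | F t]) ω ∂μ ≤ ∫ _ω, C ∂μ :=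
            integral_mono_ae integrable_condExp (integrable_const C) (hneg t)
        _ = C := by simp
    have hptw : ∀ ω, ENNReal.ofReal (Dm t ω) ^ pm ≤ ENNReal.ofReal (1 + (Dm t ω)^β) := by
      intro ω
      rw [ENNReal.ofReal_rpow_of_nonneg (hDmnn t ω) hpm0.le]
      apply ENNReal.ofReal_le_ofReal
      rcases le_total (Dm t ω) 1 with h | h
      · have h1 := Real.rpow_le_one (hDmnn t ω) h hpm0.le
        have h2 := Real.rpow_nonneg (hDmnn t ω) β
        linarith
      · have h1 := Real.rpow_le_rpow_of_exponent_le h (min_le_left β 1)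
        linarith
    calc ∫⁻ ω, ENNReal.ofReal (Dm t ω) ^ pm ∂μ
        ≤ ∫⁻ ω, ENNReal.ofReal (1 + (Dm t ω)^β) ∂μ := lintegral_mono hptw
      _ = ENNReal.ofReal (∫ ω, (1 + (Dm t ω)^β) ∂μ) := by
          have hint1 : Integrable (fun ω => 1 + (Dm t ω)^β) μ :=
            (integrable_const 1).add (hnegint t)
          have hnn : 0 ≤ᵐ[μ] (fun ω => 1 + (Dm t ω)^β) :=
            Filter.Eventually.of_forall fun ω =>
              add_nonneg zero_le_one (Real.rpow_nonneg (hDmnn t ω) β)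
          exact (ofReal_integral_eq_lintegral_ofReal hint1 hnn).symm
      _ ≤ ENNReal.ofReal (1 + C) := by
          apply ENNReal.ofReal_le_ofReal
          have h5 : ∫ ω, (1 + (Dm t ω)^β) ∂μ = (∫ _ω, (1:ℝ) ∂μ) + ∫ ω, (Dm t ω)^β ∂μ :=
            integral_add (integrable_const 1) (hnegint t)
          rw [h5]
          simp only [integral_const, measure_univ, ENNReal.toReal_one, smul_eq_mul, one_mul, probReal_univ]
          linarith [hintDmβ]
  have hAS1 : ∀ᵐ ω ∂μ, ∀ᶠ t : ℕ in atTop, ∑ s ∈ Finset.range t, Dm s ω ≤ (t:ℝ) ^ qm :=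
    Stmt12Aux.sum_growth Dm (fun s => (hDmm s).aemeasurable) hDmnn hpm0 hpm1 hpmqm
      (ENNReal.ofReal (1 + C)) ENNReal.ofReal_ne_top hmomDm
  -- AS2 : upper bound for sums of positive parts
  set δ : ℕ → ℝ := fun m => 1/((m:ℝ)+1) with hδdef
  have hδ0 : ∀ m : ℕ, 0 < δ m := fun m => by positivity
  have hAS2 : ∀ m : ℕ, ∀ᵐ ω ∂μ, ∀ᶠ t : ℕ in atTop,
      ∑ s ∈ Finset.range t, Dp s ω ≤ (t:ℝ) ^ ((1 + δ m)/α) := by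
    intro m
    have hδm := hδ0 m
    set pu : ℝ := α/(1 + δ m/2) with hpudef
    have hpu0 : 0 < pu := by positivity
    have hpuα : pu < α := by
      rw [hpudef, div_lt_iff₀ (by positivity)]
      nlinarith
    set ε : ℝ := (α - pu)/2 with hεdef
    have hε0 : 0 < ε := by rw [hεdef]; linarith
    have hpuαε : pu < α - ε := by rw [hεdef]; linarith
    obtain ⟨x₀, hx₀⟩ := htail ε hε0
    set x₁ : ℝ := max x₀ 1 with hx₁def
    have hx₁1 : (1:ℝ) ≤ x₁ := le_max_right _ _
    have hUtail : ∀ t, ∀ x, x₁ ≤ x → μ {ω | x < Dp t ω} ≤ ENNReal.ofReal (x ^ (-(α - ε))) := by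
      intro t x hx
      have hAmeas : MeasurableSet {ω | x < Dp t ω} :=
        measurableSet_lt measurable_const (hDpm t)
      have hb := hx₀ x (le_trans (le_max_left _ _) hx) t
      have hb2 : ∀ᵐ ω ∂μ,
          (μ[Set.indicator {ω' | x < Dp t ω'} (fun _ => (1:ℝ)) | F t]) ω ≤ x ^ (-(α - ε)) := by
        filter_upwards [hb] with ω hω
        rw [show -(α - ε) = -α + ε by ring]
        exact hω.2
      exact Stmt12Aux.tail_uncond F hAmeas hb2
    have hmom : ∀ s, ∫⁻ ω, ENNReal.ofReal (Dp s ω) ^ pu ∂μ ≤ Stmt12Aux.tailConst x₁ (α - ε) pu :=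
      fun s => Stmt12Aux.moment_from_tail (Dp s) (hDpm s) (hDpnn s) hx₁1 hpu0
        (fun x hx => hUtail s x hx)
    have hq1 : 1 < pu * ((1 + δ m)/α) := by
      rw [hpudef, div_mul_div_comm, lt_div_iff₀ (by positivity), one_mul]
      nlinarith
    exact Stmt12Aux.sum_growth Dp (fun s => (hDpm s).aemeasurable) hDpnn hpu0
      (by linarith : pu ≤ 1) hq1 (Stmt12Aux.tailConst x₁ (α - ε) pu)
      (Stmt12Aux.tailConst_ne_top hx₁1 hpu0 hpuαε) hmom
  -- AS3 : big jumps in dyadic windows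
  set r : ℕ → ℝ := fun m => 1/α - (1/α - qm)/(m+2) with hrdef
  have hrq : ∀ m : ℕ, qm < r m := by
    intro m
    have hd : 0 < 1/α - qm := by linarith
    have hm2 : (0:ℝ) < (m:ℝ)+2 := by positivity
    have h1 : (1/α - qm)/((m:ℝ)+2) < 1/α - qm := by
      rw [div_lt_iff₀ hm2]
      nlinarith
    rw [hrdef]
    simp only []
    linarith
  have hrα : ∀ m : ℕ, r m < 1/α := by
    intro m
    have hd : 0 < 1/α - qm := by linarith
    have hm2 : (0:ℝ) < (m:ℝ)+2 := by positivity
    have : 0 < (1/α - qm)/((m:ℝ)+2) := by positivity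
    rw [hrdef]
    simp only []
    linarith
  have hr0 : ∀ m : ℕ, 0 < r m := fun m => lt_trans hqm0 (hrq m)
  have hAS3 : ∀ m : ℕ, ∀ᵐ ω ∂μ, ∀ᶠ k : ℕ in atTop, ∃ s, 2^k ≤ s ∧ s < 2^(k+1) ∧
      (2:ℝ) ^ (((k:ℝ)+3)*(r m)) ≤ Dp s ω := by
    intro m
    have hrm0 := hr0 m
    have hαr : α * r m < 1 := by
      have := hrα m
      rw [lt_div_iff₀ hα0] at this
      linarith
    set ε' : ℝ := (1 - α * r m)/(2 * r m) with hε'def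
    have hε'0 : 0 < ε' := by
      rw [hε'def]
      exact div_pos (by linarith) (by positivity)
    have hra : (r m) * (α + ε') < 1 := by
      have hrm0' : r m ≠ 0 := ne_of_gt hrm0
      have h3 : r m * (α + ε') = (1 + α * r m)/2 := by
        rw [hε'def]
        field_simp
        ring
      rw [h3, div_lt_one (by norm_num : (0:ℝ) < 2)]
      linarith [hαr]
    obtain ⟨x₀, hx₀⟩ := htail ε' hε'0
    set x₁ : ℝ := max x₀ 1 with hx₁def
    have hx₁1 : (1:ℝ) ≤ x₁ := le_max_right _ _
    set xk : ℕ → ℝ := fun k => max x₁ ((2:ℝ) ^ (((k:ℝ)+3)*(r m))) with hxkdef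
    have hxk1 : ∀ k, (1:ℝ) ≤ xk k := fun k => le_trans hx₁1 (le_max_left _ _)
    have hxk0 : ∀ k, (0:ℝ) < xk k := fun k => lt_of_lt_of_le one_pos (hxk1 k)
    set ρ : ℕ → ℝ := fun k => (xk k) ^ (-α - ε') with hρdef
    have hρpos : ∀ k, 0 < ρ k := fun k => Real.rpow_pos_of_pos (hxk0 k) _
    have hρ1 : ∀ k, ρ k ≤ 1 := fun k =>
      Real.rpow_le_one_of_one_le_of_nonpos (hxk1 k) (by linarith)
    set A : ℕ → ℕ → Set Ω := fun k s => {ω | xk k < Dp s ω} with hAdef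
    set Bad : ℕ → Set Ω := fun k => ⋂ s ∈ Finset.Ico (2^k) (2^(k+1)), (A k s)ᶜ with hBaddef
    set a' : ℝ := α + ε' with ha'def
    have ha'0 : 0 < a' := by rw [ha'def]; linarith
    set u : ℝ := (r m) * a' with hudef
    have hu1 : u < 1 := hra
    have hu0 : 0 < u := by rw [hudef]; positivity
    have hwin : ∀ k, μ (Bad k) ≤ ENNReal.ofReal ((1 - ρ k) ^ (2^(k+1) - 2^k)) := by
      intro k
      apply Stmt12Aux.window_prod F (A k)
        (fun s => measurableSet_lt measurable_const (hDpF s)) (hρpos k).le (hρ1 k)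
      intro s _ _
      filter_upwards [(hx₀ (xk k) (le_trans (le_max_left _ _) (le_max_left _ _)) s).mono
        (fun ω hω => hω.1)] with ω hω
      exact hω
    -- numeric bound on μ (Bad k)
    have hbound : ∀ k, μ (Bad k) ≤
        ENNReal.ofReal (x₁ ^ a') * (ENNReal.ofReal (2:ℝ)⁻¹)^k
          + ENNReal.ofReal ((2:ℝ)^(3*u)) * (ENNReal.ofReal ((2:ℝ)^(u-1)))^k := by
      intro k
      have hnk : 2^(k+1) - 2^k = 2^k := by
        have : 2^(k+1) = 2*2^k := by rw [pow_succ]; ring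
        omega
      have h1 : (1 - ρ k) ^ (2^(k+1) - 2^k) ≤ ((2^k : ℝ) * ρ k)⁻¹ := by
        rw [hnk]
        have := Stmt12Aux.one_sub_pow_le (hρpos k) (hρ1 k) (Nat.one_le_two_pow (n := k))
        calc (1 - ρ k)^(2^k) ≤ (((2^k : ℕ):ℝ) * ρ k)⁻¹ := this
          _ = ((2^k : ℝ) * ρ k)⁻¹ := by push_cast; ring_nf
      have h2 : ((2^k : ℝ) * ρ k)⁻¹ = (xk k) ^ a' * ((2:ℝ)⁻¹)^k := by
        rw [hρdef]
        simp only []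
        rw [show -α - ε' = -a' by rw [ha'def]; ring, Real.rpow_neg (hxk0 k).le,
          mul_inv, inv_inv, inv_pow]
        ring
      have h3 : (xk k) ^ a' ≤ x₁ ^ a' + (2:ℝ)^(((k:ℝ)+3)*u) := by
        rcases max_cases x₁ ((2:ℝ) ^ (((k:ℝ)+3)*(r m))) with ⟨heq, _⟩ | ⟨heq, _⟩
        · rw [hxkdef]
          simp only []
          rw [heq]
          have : (0:ℝ) ≤ (2:ℝ)^(((k:ℝ)+3)*u) := by positivity
          linarith
        · rw [hxkdef]
          simp only []
          rw [heq, ← Real.rpow_mul (by norm_num), mul_assoc, ← hudef]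
          have : (0:ℝ) ≤ x₁ ^ a' := by positivity
          linarith
      have h4 : (2:ℝ)^(((k:ℝ)+3)*u) * ((2:ℝ)⁻¹)^k = (2:ℝ)^(3*u) * ((2:ℝ)^(u-1))^k := by
        rw [inv_pow, ← Real.rpow_natCast (2:ℝ) k, ← Real.rpow_neg (by norm_num : (0:ℝ) ≤ 2),
          ← Real.rpow_natCast ((2:ℝ)^(u-1)) k, ← Real.rpow_mul (by norm_num : (0:ℝ) ≤ 2),
          ← Real.rpow_add two_pos, ← Real.rpow_add two_pos]
        congr 1
        ring
      calc μ (Bad k) ≤ ENNReal.ofReal ((1 - ρ k) ^ (2^(k+1) - 2^k)) := hwin k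
        _ ≤ ENNReal.ofReal ((xk k) ^ a' * ((2:ℝ)⁻¹)^k) := by
            apply ENNReal.ofReal_le_ofReal
            rw [← h2]
            exact h1
        _ ≤ ENNReal.ofReal ((x₁ ^ a' + (2:ℝ)^(((k:ℝ)+3)*u)) * ((2:ℝ)⁻¹)^k) := by
            apply ENNReal.ofReal_le_ofReal
            have : (0:ℝ) ≤ ((2:ℝ)⁻¹)^k := by positivity
            nlinarith
        _ = ENNReal.ofReal (x₁ ^ a' * ((2:ℝ)⁻¹)^k) + ENNReal.ofReal ((2:ℝ)^(((k:ℝ)+3)*u) * ((2:ℝ)⁻¹)^k) := by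
            rw [add_mul, ENNReal.ofReal_add (by positivity) (by positivity)]
        _ = ENNReal.ofReal (x₁ ^ a') * (ENNReal.ofReal (2:ℝ)⁻¹)^k
              + ENNReal.ofReal ((2:ℝ)^(3*u)) * (ENNReal.ofReal ((2:ℝ)^(u-1)))^k := by
            rw [h4, ENNReal.ofReal_mul (by positivity), ENNReal.ofReal_mul (by positivity),
              ENNReal.ofReal_pow (by positivity), ENNReal.ofReal_pow (by positivity)]
    have hsum : (∑' k, μ (Bad k)) ≠ ⊤ := by
      have hle : (∑' k, μ (Bad k)) ≤
          ENNReal.ofReal (x₁ ^ a') * (1 - ENNReal.ofReal (2:ℝ)⁻¹)⁻¹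
            + ENNReal.ofReal ((2:ℝ)^(3*u)) * (1 - ENNReal.ofReal ((2:ℝ)^(u-1)))⁻¹ := by
        calc (∑' k, μ (Bad k)) ≤ ∑' k, (ENNReal.ofReal (x₁ ^ a') * (ENNReal.ofReal (2:ℝ)⁻¹)^k
              + ENNReal.ofReal ((2:ℝ)^(3*u)) * (ENNReal.ofReal ((2:ℝ)^(u-1)))^k) :=
            ENNReal.tsum_le_tsum hbound
          _ = ENNReal.ofReal (x₁ ^ a') * ∑' k, (ENNReal.ofReal (2:ℝ)⁻¹)^k
              + ENNReal.ofReal ((2:ℝ)^(3*u)) * ∑' k, (ENNReal.ofReal ((2:ℝ)^(u-1)))^k := by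
            rw [ENNReal.tsum_add, ENNReal.tsum_mul_left, ENNReal.tsum_mul_left]
          _ = _ := by rw [ENNReal.tsum_geometric, ENNReal.tsum_geometric]
      refine ne_top_of_le_ne_top ?_ hle
      have hw1 : ENNReal.ofReal (2:ℝ)⁻¹ < 1 := by
        rw [← ENNReal.ofReal_one]
        exact ENNReal.ofReal_lt_ofReal_iff (by norm_num) |>.2 (by norm_num)
      have hw2 : ENNReal.ofReal ((2:ℝ)^(u-1)) < 1 := by
        rw [← ENNReal.ofReal_one]
        exact ENNReal.ofReal_lt_ofReal_iff (by norm_num) |>.2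
          (Real.rpow_lt_one_of_one_lt_of_neg (by norm_num) (by linarith))
      exact ENNReal.add_ne_top.2
        ⟨ENNReal.mul_ne_top ENNReal.ofReal_ne_top
          (ENNReal.inv_ne_top.2 (ne_of_gt (tsub_pos_of_lt hw1))),
         ENNReal.mul_ne_top ENNReal.ofReal_ne_top
          (ENNReal.inv_ne_top.2 (ne_of_gt (tsub_pos_of_lt hw2)))⟩
    filter_upwards [MeasureTheory.ae_eventually_notMem hsum] with ω hω
    filter_upwards [hω] with k hk
    have : ∃ s ∈ Finset.Ico (2^k) (2^(k+1)), ω ∈ A k s := by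
      by_contra hcon
      push_neg at hcon
      apply hk
      rw [hBaddef]
      simp only [Set.mem_iInter]
      intro s hs
      exact hcon s hs
    obtain ⟨s, hs, hmem⟩ := this
    obtain ⟨hs1, hs2⟩ := Finset.mem_Ico.1 hs
    refine ⟨s, hs1, hs2, ?_⟩
    have : xk k < Dp s ω := hmem
    exact le_trans (le_max_right x₁ _) this.le
  -- combine and conclude deterministically
  have hAS2' : ∀ᵐ ω ∂μ, ∀ m : ℕ, ∀ᶠ t : ℕ in atTop,
      ∑ s ∈ Finset.range t, Dp s ω ≤ (t:ℝ) ^ ((1 + δ m)/α) := ae_all_iff.2 hAS2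
  have hAS3' : ∀ᵐ ω ∂μ, ∀ m : ℕ, ∀ᶠ k : ℕ in atTop, ∃ s, 2^k ≤ s ∧ s < 2^(k+1) ∧
      (2:ℝ) ^ (((k:ℝ)+3)*(r m)) ≤ Dp s ω := ae_all_iff.2 hAS3
  filter_upwards [hAS1, hAS2', hAS3'] with ω hN hU hL
  -- deterministic part
  have hXle : ∀ t, X t ω ≤ ∑ s ∈ Finset.range t, Dp s ω := by
    intro t
    rw [hXsum t ω]
    exact Finset.sum_le_sum fun s _ => le_max_left _ _
  have hXge : ∀ s t, s < t → Dp s ω - ∑ u ∈ Finset.range t, Dm u ω ≤ X t ω := by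
    intro s t hst
    rw [hXsum t ω]
    exact Stmt12Aux.jump_lb (fun u => X (u+1) ω - X u ω) hst
  -- eventual lower bound
  have hlow : ∀ m : ℕ, ∀ᶠ t : ℕ in atTop, (t:ℝ)^(r m)/2 ≤ X t ω := by
    intro m
    obtain ⟨k₀, hk₀⟩ := eventually_atTop.1 (hL m)
    have hev2 : ∀ᶠ t : ℕ in atTop, (2:ℝ) ≤ (t:ℝ)^(r m - qm) := by
      have h1 : Tendsto (fun t:ℕ => ((t:ℝ))^(r m - qm)) atTop atTop :=
        (tendsto_rpow_atTop (by linarith [hrq m])).comp tendsto_natCast_atTop_atTop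
      exact h1.eventually_ge_atTop 2
    obtain ⟨T₂, hT₂⟩ := eventually_atTop.1 hev2
    obtain ⟨T₁, hT₁⟩ := eventually_atTop.1 hN
    rw [eventually_atTop]
    refine ⟨max (max (2^(k₀+2)) 4) (max T₁ T₂), fun t ht => ?_⟩
    have h4t : 4 ≤ t := le_trans (le_trans (le_max_right _ _) (le_max_left _ _)) ht
    have hk2t : 2^(k₀+2) ≤ t := le_trans (le_trans (le_max_left _ _) (le_max_left _ _)) ht
    have hT₁t : T₁ ≤ t := le_trans (le_trans (le_max_left _ _) (le_max_right _ _)) ht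
    have hT₂t : T₂ ≤ t := le_trans (le_trans (le_max_right _ _) (le_max_right _ _)) ht
    set K := Nat.log 2 t with hKdef
    obtain ⟨hKlow, hKhigh⟩ := Stmt12Aux.dyadic_bracket (by omega : 1 ≤ t)
    have hK2 : 2 ≤ K := by
      rcases Nat.lt_or_ge K 2 with h | h
      · exfalso
        have h4 : t < 4 := by
          calc t < 2^(K+1) := hKhigh
            _ ≤ 2^2 := Nat.pow_le_pow_right (by norm_num) (by omega)
            _ = 4 := by norm_num
        omega
      · exact h
    set k := K - 2 with hkdef
    have hkK : k + 2 = K := by omega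
    have hkk₀ : k₀ ≤ k := by
      have h1 : 2^(k₀+2) < 2^(K+1) := lt_of_le_of_lt hk2t hKhigh
      have h2 := (Nat.pow_lt_pow_iff_right (by norm_num : 1 < 2)).1 h1
      omega
    obtain ⟨s, hs1, hs2, hjump⟩ := hk₀ k hkk₀
    have hst : s < t := lt_of_lt_of_le hs2
      (le_trans (Nat.pow_le_pow_right (by norm_num) (by omega : k+1 ≤ K)) hKlow)
    have hP : (t:ℝ)^(r m) ≤ (2:ℝ)^(((k:ℝ)+3)*(r m)) := by
      have ht2 : (t:ℝ) ≤ (2:ℝ)^((k:ℝ)+3) := by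
        have h1 : (t:ℝ) ≤ ((2^(K+1) : ℕ):ℝ) := by exact_mod_cast hKhigh.le
        have h2 : ((2^(K+1) : ℕ):ℝ) = (2:ℝ)^((K:ℝ)+1) := by
          push_cast
          rw [← Real.rpow_natCast (2:ℝ) (K+1)]
          push_cast
          ring_nf
        have h3 : (k:ℝ)+3 = (K:ℝ)+1 := by
          have : ((k+2 : ℕ):ℝ) = (K:ℝ) := by exact_mod_cast congrArg (Nat.cast : ℕ → ℝ) hkK
          push_cast at this
          linarith
        rw [h3]
        rw [h2] at h1
        exact h1
      calc (t:ℝ)^(r m) ≤ ((2:ℝ)^((k:ℝ)+3))^(r m) :=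
          Real.rpow_le_rpow (by positivity) ht2 (hr0 m).le
        _ = (2:ℝ)^(((k:ℝ)+3)*(r m)) := by
          rw [← Real.rpow_mul (by norm_num : (0:ℝ) ≤ 2)]
    have hjump' : (t:ℝ)^(r m) ≤ Dp s ω := le_trans hP hjump
    have hnegsum : ∑ u ∈ Finset.range t, Dm u ω ≤ (t:ℝ)^qm := hT₁ t hT₁t
    have hhalf : (t:ℝ)^qm ≤ (t:ℝ)^(r m)/2 := by
      have ht0 : (0:ℝ) < t := by positivity
      have hsplit : (t:ℝ)^(r m) = (t:ℝ)^qm * (t:ℝ)^(r m - qm) := by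
        rw [← Real.rpow_add ht0]
        ring_nf
      have h2 := hT₂ t hT₂t
      have hq0 : (0:ℝ) < (t:ℝ)^qm := Real.rpow_pos_of_pos ht0 _
      rw [hsplit]
      nlinarith
    have := hXge s t hst
    linarith
  -- eventual positivity
  have hpos : ∀ᶠ t : ℕ in atTop, (1:ℝ) ≤ X t ω ∧ 2 ≤ t := by
    have hev1 : ∀ᶠ t : ℕ in atTop, (2:ℝ) ≤ (t:ℝ)^(r 0) := by
      have h1 : Tendsto (fun t:ℕ => ((t:ℝ))^(r 0)) atTop atTop :=
        (tendsto_rpow_atTop (hr0 0)).comp tendsto_natCast_atTop_atTop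
      exact h1.eventually_ge_atTop 2
    filter_upwards [hlow 0, hev1, eventually_ge_atTop 2] with t h1 h2 h3
    exact ⟨by linarith, h3⟩
  -- conclusion
  refine tendsto_order.2 ⟨?_, ?_⟩
  · intro a ha
    obtain ⟨m, hm⟩ : ∃ m : ℕ, a < r m := by
      have hd : 0 < 1/α - qm := by linarith
      have ha' : 0 < 1/α - a := by linarith
      obtain ⟨n, hn⟩ := exists_nat_gt ((1/α - qm)/(1/α - a))
      refine ⟨n, ?_⟩
      have hm2 : (0:ℝ) < (n:ℝ)+2 := by positivity
      have h2 : (1/α - qm)/((n:ℝ)+2) < 1/α - a := by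
        rw [div_lt_iff₀ hm2]
        have h3 : (1/α - qm) < (n:ℝ) * (1/α - a) := by
          rw [div_lt_iff₀ ha'] at hn
          exact hn
        nlinarith [h3, ha', hn]
      have h4 : r n = 1/α - (1/α - qm)/((n:ℝ)+2) := by rw [hrdef]
      rw [h4]
      linarith
    have hlog2 : Tendsto (fun t : ℕ => Real.log 2 / Real.log t) atTop (𝓝 0) :=
      Tendsto.div_atTop tendsto_const_nhds
        (Real.tendsto_log_atTop.comp tendsto_natCast_atTop_atTop)
    have hev3 : ∀ᶠ t : ℕ in atTop, Real.log 2 / Real.log t < r m - a :=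
      hlog2.eventually_lt_const (by linarith)
    filter_upwards [hlow m, hpos, hev3] with t hlb hpt hlt
    obtain ⟨hX1, ht2⟩ := hpt
    have htR : (2:ℝ) ≤ (t:ℝ) := by exact_mod_cast ht2
    have hlogt : 0 < Real.log t := Real.log_pos (by linarith)
    have ht0 : (0:ℝ) < t := by linarith
    have h1 : Real.log ((t:ℝ)^(r m)/2) ≤ Real.log (X t ω) :=
      Real.log_le_log (by positivity) hlb
    have h2 : Real.log ((t:ℝ)^(r m)/2) = (r m) * Real.log t - Real.log 2 := by
      rw [Real.log_div (by positivity) (by norm_num), Real.log_rpow ht0]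
    rw [lt_div_iff₀ hlogt]
    rw [div_lt_iff₀ hlogt] at hlt
    have h3 : r m * Real.log (t:ℝ) - Real.log 2 ≤ Real.log (X t ω) := by
      rw [← h2]; exact h1
    have h5 : r m * Real.log (t:ℝ) - (r m - a) * Real.log (t:ℝ) = a * Real.log (t:ℝ) := by
      ring
    linarith [hlt, h5, h3]
  · intro b hb
    obtain ⟨m, hm⟩ : ∃ m : ℕ, (1 + δ m)/α < b := by
      have hbα : 0 < b*α - 1 := by
        have := (div_lt_iff₀ hα0).1 hb
        linarith
      obtain ⟨n, hn⟩ := exists_nat_one_div_lt hbα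
      refine ⟨n, ?_⟩
      have hδn : δ n = 1/((n:ℝ)+1) := by rw [hδdef]
      rw [div_lt_iff₀ hα0, hδn]
      have : (1:ℝ)/((n:ℝ)+1) < b*α - 1 := by exact_mod_cast hn
      linarith
    filter_upwards [(hU m).mono (fun t ht => le_trans (hXle t) ht), hpos] with t hub hpt
    obtain ⟨hX1, ht2⟩ := hpt
    have htR : (2:ℝ) ≤ (t:ℝ) := by exact_mod_cast ht2
    have hlogt : 0 < Real.log t := Real.log_pos (by linarith)
    have ht0 : (0:ℝ) < t := by linarith
    rw [div_lt_iff₀ hlogt]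
    have h1 : Real.log (X t ω) ≤ Real.log ((t:ℝ)^((1+δ m)/α)) :=
      Real.log_le_log (by linarith) hub
    rw [Real.log_rpow ht0] at h1
    nlinarith
end
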